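/- arXiv:1803.03588 — 4 statements merged into one kernel-verified Lean document; each statement's English description precedes it below -/
import Mathlib

section
/- Let 𝓘 be a hereditary class of graphs, let σ ≥ 0 and 0 < ε ≤ 1, and suppose that for every graph G ∈ 𝓘 with n ≥ 2 vertices and every real c with 0 ≤ c ≤ 1/2 there exist disjoint nonempty subsets A, B ⊆ V(G) with |A| ≥ c^σ·n and |B| ≥ ε·n such that the edge-density between A and B is either at most c or at least 1 − c. Then there exists κ > 0 such that every graph G ∈ 𝓘 with n ≥ 2 vertices satisfies max(α(G), ω(G)) ≥ 2^{κ·√(log n · log log n)}. -/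
open SimpleGraph
open scoped Classical

namespace EHaux


open Real

noncomputable def flog (L : ℝ) : ℝ := L * Real.logb 2 L

noncomputable def sqg (x : ℝ) : ℝ :=
  Real.sqrt (Real.logb 2 x * Real.logb 2 (Real.logb 2 x))

lemma sqg_eq (x : ℝ) : sqg x = Real.sqrt (flog (Real.logb 2 x)) := rfl

lemma log2_gt : (0.6931471803 : ℝ) < Real.log 2 := Real.log_two_gt_d9

lemma inv_log2_le : 1 / Real.log 2 ≤ 2 := by
  rw [div_le_iff₀ (by positivity)]
  nlinarith [log2_gt]

lemma logb_le_3sqrt {x : ℝ} (hx : 1 ≤ x) : Real.logb 2 x ≤ 3 * Real.sqrt x := by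
  have h0 : (0:ℝ) < x := by linarith
  have hs : Real.log (Real.sqrt x) = Real.log x / 2 := Real.log_sqrt h0.le
  have h1 : Real.log (Real.sqrt x) ≤ Real.sqrt x - 1 :=
    Real.log_le_sub_one_of_pos (Real.sqrt_pos.2 h0)
  have h2 : Real.log x ≤ 2 * Real.sqrt x - 2 := by rw [hs] at h1; linarith
  have hlog2 : (0.6931471803 : ℝ) < Real.log 2 := log2_gt
  rw [Real.logb, div_le_iff₀ (by linarith)]
  have hsx : 0 ≤ Real.sqrt x := Real.sqrt_nonneg x
  nlinarith [Real.sqrt_nonneg x]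

lemma logb2_mono {u v : ℝ} (hu : 0 < u) (huv : u ≤ v) :
    Real.logb 2 u ≤ Real.logb 2 v :=
  (Real.logb_le_logb (by norm_num) hu (lt_of_lt_of_le hu huv)).2 huv

lemma flog_nonneg {u : ℝ} (hu : 1 ≤ u) : 0 ≤ flog u :=
  mul_nonneg (by linarith) (Real.logb_nonneg (by norm_num) hu)

lemma flog_mono {u v : ℝ} (hu : 1 ≤ u) (huv : u ≤ v) : flog u ≤ flog v := by
  unfold flog
  have h1 : Real.logb 2 u ≤ Real.logb 2 v := logb2_mono (by linarith) huv
  have h2 : 0 ≤ Real.logb 2 u := Real.logb_nonneg (by norm_num) hu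
  nlinarith

lemma sqg_eq_zero {x : ℝ} (h1 : 1 ≤ x) (h2 : x < 2) : sqg x = 0 := by
  have hL0 : 0 ≤ Real.logb 2 x := Real.logb_nonneg (by norm_num) h1
  have hL1 : Real.logb 2 x ≤ 1 := by
    have := logb2_mono (u := x) (by linarith : (0:ℝ) < x) h2.le
    simpa using this
  have : Real.logb 2 (Real.logb 2 x) ≤ 0 := by
    rcases eq_or_lt_of_le hL0 with h | h
    · rw [← h]; simp
    · exact Real.logb_nonpos (by norm_num) hL0 hL1
  have hz := mul_nonpos_of_nonneg_of_nonpos hL0 this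
  rw [sqg, Real.sqrt_eq_zero_of_nonpos hz]


lemma sqg_nonneg (x : ℝ) : 0 ≤ sqg x := Real.sqrt_nonneg _

lemma sqg_mono {x y : ℝ} (hx : 1 ≤ x) (hxy : x ≤ y) : sqg x ≤ sqg y := by
  by_cases h2 : x < 2
  · rw [sqg_eq_zero hx h2]; exact sqg_nonneg y
  · push_neg at h2
    rw [sqg_eq x, sqg_eq y]
    apply Real.sqrt_le_sqrt
    apply flog_mono
    · have := logb2_mono (u := 2) (by norm_num) h2
      simpa using this
    · exact logb2_mono (by linarith) hxy

lemma sqg_le_two_mul {x : ℝ} (hx : 2 ≤ x) : sqg x ≤ 2 * Real.logb 2 x := by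
  rw [sqg_eq]
  set L := Real.logb 2 x with hL
  have hL1 : 1 ≤ L := by
    have := logb2_mono (u := 2) (by norm_num) hx
    simpa [hL] using this
  have h3 : Real.logb 2 L ≤ 3 * Real.sqrt L := logb_le_3sqrt hL1
  have hsL : Real.sqrt L ≤ L := by
    nlinarith [Real.sq_sqrt (by linarith : (0:ℝ) ≤ L), Real.sqrt_nonneg L]
  have : flog L ≤ (2*L)^2 := by
    unfold flog; nlinarith
  calc Real.sqrt (flog L) ≤ Real.sqrt ((2*L)^2) := Real.sqrt_le_sqrt this
    _ = 2*L := Real.sqrt_sq (by linarith)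

lemma sqrt_sub_le {a b : ℝ} (hb : 0 ≤ b) (hba : b ≤ a) :
    Real.sqrt a - Real.sqrt b ≤ (a - b) / Real.sqrt a := by
  rcases eq_or_lt_of_le (hb.trans hba) with h | ha
  · have hb' : b = 0 := le_antisymm (h ▸ hba) hb
    simp [← h, hb']
  · have hsa : 0 < Real.sqrt a := Real.sqrt_pos.2 ha
    rw [sub_le_iff_le_add, div_add' _ _ _ (ne_of_gt hsa), le_div_iff₀ hsa]
    have e1 : Real.sqrt a * Real.sqrt a = a := Real.mul_self_sqrt ha.le
    have e2 : Real.sqrt b * Real.sqrt b = b := Real.mul_self_sqrt hb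
    have e3 : Real.sqrt b ≤ Real.sqrt a := Real.sqrt_le_sqrt hba
    have e4 : 0 ≤ Real.sqrt b := Real.sqrt_nonneg b
    nlinarith

lemma flog_gap {l L : ℝ} (hl : 1 ≤ l) (hlL : l ≤ L) :
    flog L - flog l ≤ (L - l) * (Real.logb 2 L + 2) := by
  have hl0 : (0:ℝ) < l := by linarith
  have hL0 : (0:ℝ) < L := by linarith
  have h1 : Real.log (L / l) ≤ L / l - 1 := Real.log_le_sub_one_of_pos (by positivity)
  have h2 : Real.log (L / l) = Real.log L - Real.log l := Real.log_div (ne_of_gt hL0) (ne_of_gt hl0)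
  have h3 : Real.log L - Real.log l ≤ (L - l) / l := by
    have e : L / l - 1 = (L - l) / l := by field_simp
    rw [← h2, ← e]; exact h1
  have hlog2 : (0.6931471803:ℝ) < Real.log 2 := log2_gt
  have h4 : Real.logb 2 L - Real.logb 2 l ≤ 2 * ((L - l) / l) := by
    unfold Real.logb
    rw [div_sub_div_same]
    rw [div_le_iff₀ (by linarith)]
    have hnn : 0 ≤ (L - l)/l := div_nonneg (by linarith) hl0.le
    nlinarith
  have h5 : l * (Real.logb 2 L - Real.logb 2 l) ≤ 2 * (L - l) := by
    have := mul_le_mul_of_nonneg_left h4 hl0.le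
    calc l * (Real.logb 2 L - Real.logb 2 l) ≤ l * (2 * ((L-l)/l)) := this
      _ = 2 * (L - l) := by field_simp
  have hlgL : 0 ≤ Real.logb 2 L := Real.logb_nonneg (by norm_num) (by linarith)
  unfold flog
  nlinarith

lemma logb2_sixteen : Real.logb 2 16 = 4 := by
  rw [show (16:ℝ) = 2^(4:ℕ) by norm_num, Real.logb_pow, Real.logb_self_eq_one] <;> norm_num

lemma gap {l L : ℝ} (hl : 1 ≤ l) (hlL : l ≤ L) (hL16 : 16 ≤ L) :
    Real.sqrt (flog L) - Real.sqrt (flog l) ≤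
      (L - l) * (Real.logb 2 L + 2) / Real.sqrt (flog L) := by
  have hL1 : (1:ℝ) ≤ L := by linarith
  have hlg4 : 4 ≤ Real.logb 2 L := by
    rw [← logb2_sixteen]; exact logb2_mono (by norm_num) hL16
  have hfl : 0 ≤ flog l := flog_nonneg hl
  have hmono : flog l ≤ flog L := flog_mono hl hlL
  have hfL : (0:ℝ) < flog L := by
    unfold flog; nlinarith
  have h1 := sqrt_sub_le hfl hmono
  refine h1.trans (div_le_div_of_nonneg_right ?_ (Real.sqrt_nonneg _))
  exact flog_gap hl hlL


private lemma n2 {L : ℝ} (h1 : 1 ≤ L) : Real.sqrt L ≤ L := by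
  nlinarith [Real.sq_sqrt (by linarith : (0:ℝ) ≤ L), Real.sqrt_nonneg L]

private lemma n3 {s L lg : ℝ} (hsq : s*s = L*lg) (hlg : lg ≤ 3*Real.sqrt L)
    (hsL : Real.sqrt L ≤ L) (hs : 0 ≤ s) (hL : 0 < L) : s ≤ 2*L := by
  nlinarith [Real.sqrt_nonneg L]

private lemma n4 {σ κ : ℝ} (hσ : 0 < σ) (hκ0 : 0 < κ) (h1 : κ*(8*(5*σ+1)) ≤ 1) :
    σ*κ ≤ 1/40 ∧ κ ≤ 1/8 ∧ 4*σ*κ ≤ 1/10 := by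
  constructor
  · nlinarith
  constructor
  · nlinarith
  · nlinarith

private lemma n6 {lg q sl : ℝ} (h : sl*sl = lg) (hsl : 0 ≤ sl) (hq2 : 2 ≤ q)
    (hlg : lg ≤ 3*(q*q)) : sl ≤ 2*q := by
  nlinarith

private lemma n5 {L lg s q : ℝ} (hlg4 : 4 ≤ lg) (hq2 : 2 ≤ q)
    (hsplit : s = Real.sqrt L * Real.sqrt lg) (hqq : q*q = Real.sqrt L)
    (hslg : Real.sqrt lg ≤ 2*q) (hslgsq : Real.sqrt lg * Real.sqrt lg = lg)
    (hs_pos : 0 < s) : (lg+2)/s ≤ 4/q := by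
  have hq0 : (0:ℝ) < q := by linarith
  rw [div_le_div_iff₀ hs_pos hq0]
  have hsl0 : 0 ≤ Real.sqrt lg := Real.sqrt_nonneg lg
  have e : s = q*q*Real.sqrt lg := by rw [hsplit, ← hqq]
  rw [e]
  nlinarith

private lemma n7 {κ σ lg : ℝ} (hσκ : σ*κ ≤ 1/40) (hκ8 : κ ≤ 1/8) (hκ0 : 0 < κ)
    (hσ : 0 < σ) (hlg : 4 ≤ lg) : 2*κ*(2*σ*κ*(lg+2)) ≤ (1/4)*lg := by
  have h1 : σ*κ*κ ≤ 1/320 := by nlinarith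
  nlinarith [mul_nonneg (mul_nonneg hσ.le hκ0.le) hκ0.le]

lemma sqrt2_bound : (1/2:ℝ) ≤ (2:ℝ)^(-(2:ℝ)⁻¹) := by
  have he : (2:ℝ)^(-(2:ℝ)⁻¹) = (Real.sqrt 2)⁻¹ := by
    rw [Real.rpow_neg (by norm_num : (0:ℝ) ≤ 2), Real.sqrt_eq_rpow]
    norm_num
  rw [he, le_inv_comm₀ (by norm_num) (Real.sqrt_pos.2 (by norm_num))]
  nlinarith [Real.sq_sqrt (by norm_num : (0:ℝ) ≤ 2), Real.sqrt_nonneg 2]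

lemma one_sub_le_rpow_neg {d : ℝ} (hd : 0 ≤ d) : 1 - d ≤ (2:ℝ)^(-d) := by
  have e1 : (2:ℝ)^(-d) = Real.exp (Real.log 2 * (-d)) :=
    Real.rpow_def_of_pos (by norm_num) _
  have e2 := Real.add_one_le_exp (Real.log 2 * (-d))
  have e3 : Real.log 2 ≤ 1 := by
    have := Real.log_le_sub_one_of_pos (by norm_num : (0:ℝ) < 2); linarith
  have e4 : -d ≤ Real.log 2 * (-d) := by
    nlinarith [Real.log_nonneg (by norm_num : (1:ℝ) ≤ 2)]
  rw [e1]; linarith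

set_option maxHeartbeats 1000000 in
lemma core (σ b κ L₀ : ℝ) (hσ : 0 < σ) (hb : 1 ≤ b)
    (hL₀ : L₀ = 10*σ + 2*b + 16)
    (hκ0 : 0 < κ) (hκ1 : κ ≤ 1/(8*(5*σ+1))) (hκ2 : κ ≤ 1/(32*b))
    {L x₁ : ℝ} (hL : L₀ ≤ L)
    (hx₁0 : 0 ≤ x₁) (hx₁ : x₁ ≤ 2*σ*(κ * Real.sqrt (flog L)) + 5*σ + 1) :
    1 ≤ L - x₁ ∧ 1 ≤ L - b ∧
    (2:ℝ)^(2*κ*Real.sqrt (flog L)) ≤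
      (2:ℝ)^(2*κ*Real.sqrt (flog (L - x₁))) + (2:ℝ)^(2*κ*Real.sqrt (flog (L - b))) := by
  have hL16 : (16:ℝ) ≤ L := by linarith
  have hL0 : (0:ℝ) < L := by linarith
  set lgL := Real.logb 2 L with hlgL_def
  have hlg4 : 4 ≤ lgL := by
    rw [hlgL_def, ← logb2_sixteen]; exact logb2_mono (by norm_num) hL16
  have hflogL : flog L = L * lgL := rfl
  have hfL : (0:ℝ) < flog L := by
    rw [hflogL]; positivity
  set s := Real.sqrt (flog L) with hs_def
  have hs_pos : 0 < s := Real.sqrt_pos.2 hfL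
  have hs_sq : s * s = L * lgL := by rw [hs_def, ← hflogL]; exact Real.mul_self_sqrt hfL.le
  have hsqrtL : Real.sqrt L ≤ L := n2 (by linarith)
  have hlg_le : lgL ≤ 3 * Real.sqrt L := logb_le_3sqrt (by linarith)
  have hs_le : s ≤ 2 * L := n3 hs_sq hlg_le hsqrtL hs_pos.le hL0
  have hκ1' : κ * (8*(5*σ+1)) ≤ 1 := by
    rw [le_div_iff₀ (by positivity)] at hκ1; exact hκ1
  have hκ2' : κ * (32*b) ≤ 1 := by
    rw [le_div_iff₀ (by positivity)] at hκ2; exact hκ2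
  obtain ⟨hσκ, hκ8, hkσ⟩ := n4 hσ hκ0 hκ1'
  have hx₁L : x₁ ≤ L/10 + 5*σ + 1 := by
    have h1 : 2*σ*(κ*s) ≤ 2*σ*(κ*(2*L)) := by
      have := mul_le_mul_of_nonneg_left hs_le (by positivity : (0:ℝ) ≤ 2*σ*κ)
      linarith
    have h2 : (4*σ*κ)*L ≤ (1/10)*L := mul_le_mul_of_nonneg_right hkσ hL0.le
    linarith
  have hC1 : 1 ≤ L - x₁ := by linarith
  have hC2 : 1 ≤ L - b := by linarith
  refine ⟨hC1, hC2, ?_⟩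
  -- q = L^(1/4)
  set q := L ^ ((4:ℝ)⁻¹ : ℝ) with hq_def
  have hq_pos : 0 < q := Real.rpow_pos_of_pos hL0 _
  have hqq : q * q = Real.sqrt L := by
    rw [hq_def, ← Real.rpow_add hL0, Real.sqrt_eq_rpow]
    norm_num
  have hq2 : 2 ≤ q := by
    have h16 : ((16:ℝ)) ^ ((4:ℝ)⁻¹ : ℝ) ≤ q := by
      apply Real.rpow_le_rpow (by norm_num) hL16 (by norm_num)
    have he : ((16:ℝ)) ^ ((4:ℝ)⁻¹ : ℝ) = 2 := by
      rw [show (16:ℝ) = (2:ℝ)^(4:ℝ) by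
        rw [show (4:ℝ) = ((4:ℕ):ℝ) by norm_num, Real.rpow_natCast]; norm_num]
      rw [← Real.rpow_mul (by norm_num)]
      norm_num
    linarith
  have hslgsq : Real.sqrt lgL * Real.sqrt lgL = lgL := Real.mul_self_sqrt (by linarith)
  have hsplit : s = Real.sqrt L * Real.sqrt lgL := by
    rw [hs_def, hflogL, Real.sqrt_mul hL0.le]
  have hslg_le : Real.sqrt lgL ≤ 2 * q := by
    apply n6 hslgsq (Real.sqrt_nonneg _) hq2
    rw [hqq]; exact hlg_le
  have hG : (lgL + 2)/s ≤ 4/q := n5 hlg4 hq2 hsplit hqq hslg_le hslgsq hs_pos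
  -- the two gaps
  have hgap1 := gap (l := L - x₁) hC1 (by linarith) hL16
  have hgap2 := gap (l := L - b) hC2 (by linarith) hL16
  set Δ := 2*κ*(s - Real.sqrt (flog (L - x₁))) with hΔ_def
  set δ := 2*κ*(s - Real.sqrt (flog (L - b))) with hδ_def
  have hmono1 : Real.sqrt (flog (L - x₁)) ≤ s :=
    Real.sqrt_le_sqrt (flog_mono hC1 (by linarith : L - x₁ ≤ L))
  have hmono2 : Real.sqrt (flog (L - b)) ≤ s :=
    Real.sqrt_le_sqrt (flog_mono hC2 (by linarith : L - b ≤ L))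
  have hΔ0 : 0 ≤ Δ := mul_nonneg (by positivity) (by linarith)
  have hδ0 : 0 ≤ δ := mul_nonneg (by positivity) (by linarith)
  have hΔle : Δ ≤ (1/4)*lgL + 1/2 := by
    have h1 : s - Real.sqrt (flog (L - x₁)) ≤ x₁ * (lgL + 2) / s := by
      have h := hgap1; rw [show L - (L - x₁) = x₁ by ring] at h; exact h
    have h2 : Δ ≤ 2*κ*(x₁ * (lgL+2)/s) := by
      rw [hΔ_def]
      have := mul_le_mul_of_nonneg_left h1 (by positivity : (0:ℝ) ≤ 2*κ)
      linarith
    have h3 : x₁ * (lgL+2)/s ≤ (2*σ*(κ*s) + 5*σ+1) * (lgL+2)/s := by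
      apply div_le_div_of_nonneg_right ?_ (Real.sqrt_nonneg _)
      have hlg0 : (0:ℝ) ≤ lgL + 2 := by linarith
      exact mul_le_mul_of_nonneg_right hx₁ hlg0
    have h4 : (2*σ*(κ*s) + 5*σ+1) * (lgL+2)/s
        = 2*σ*κ*(lgL+2) + (5*σ+1)*((lgL+2)/s) := by
      field_simp
      ring
    have h6 : 2*κ*(2*σ*κ*(lgL+2)) ≤ (1/4)*lgL := n7 hσκ hκ8 hκ0 hσ hlg4
    have h7 : 2*κ*((5*σ+1)*(4/q)) ≤ 1/2 := by
      have hq_inv : 1/q ≤ 1/2 := by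
        rw [div_le_div_iff₀ hq_pos (by norm_num)]; linarith
      have h8 : 2*κ*((5*σ+1)*(4/q)) = (κ*(8*(5*σ+1)))*(1/q) := by ring
      have h10 : 0 ≤ κ*(8*(5*σ+1)) := by positivity
      rw [h8]
      have h11 := mul_le_mul hκ1' hq_inv (by positivity) (by norm_num : (0:ℝ) ≤ 1)
      linarith
    calc Δ ≤ 2*κ*(x₁ * (lgL+2)/s) := h2
      _ ≤ 2*κ*((2*σ*(κ*s) + 5*σ+1) * (lgL+2)/s) := by
          have := mul_le_mul_of_nonneg_left h3 (by positivity : (0:ℝ) ≤ 2*κ)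
          linarith
      _ = 2*κ*(2*σ*κ*(lgL+2)) + 2*κ*((5*σ+1)*((lgL+2)/s)) := by rw [h4]; ring
      _ ≤ 2*κ*(2*σ*κ*(lgL+2)) + 2*κ*((5*σ+1)*(4/q)) := by
          have h9 := mul_le_mul_of_nonneg_left hG (by positivity : (0:ℝ) ≤ 2*κ*(5*σ+1))
          linarith
      _ ≤ (1/4)*lgL + 1/2 := by linarith
  have hδle : δ ≤ (1/4)*(1/q) := by
    have h1 : s - Real.sqrt (flog (L - b)) ≤ b * (lgL + 2) / s := by
      have h := hgap2; rw [show L - (L - b) = b by ring] at h; exact h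
    have h2 : δ ≤ 2*κ*(b * (lgL+2)/s) := by
      rw [hδ_def]
      have := mul_le_mul_of_nonneg_left h1 (by positivity : (0:ℝ) ≤ 2*κ)
      linarith
    have h3 : b*(lgL+2)/s ≤ b*(4/q) := by
      have hb0 : (0:ℝ) ≤ b := by linarith
      have e : b*(lgL+2)/s = b*((lgL+2)/s) := by ring
      rw [e]
      exact mul_le_mul_of_nonneg_left hG hb0
    have h4 : 2*κ*(b*(4/q)) = (κ*(32*b)/4)*(1/q) := by ring
    have h5 : κ*(32*b)/4 ≤ 1/4 := by linarith
    have h6 : 2*κ*(b*(4/q)) ≤ (1/4)*(1/q) := by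
      rw [h4]
      apply mul_le_mul h5 le_rfl (by positivity) (by norm_num)
    have h7 : 2*κ*(b*(lgL+2)/s) ≤ 2*κ*(b*(4/q)) := by
      have := mul_le_mul_of_nonneg_left h3 (by positivity : (0:ℝ) ≤ 2*κ)
      linarith
    linarith
  have hq_inv_pos : (0:ℝ) < 1/q := by positivity
  have h2mΔ : (1/2)*(1/q) ≤ (2:ℝ)^(-Δ) := by
    have hmono : (2:ℝ)^(-((1/4)*lgL + 1/2)) ≤ (2:ℝ)^(-Δ) :=
      Real.rpow_le_rpow_of_exponent_le (by norm_num) (by linarith)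
    have e1 : (2:ℝ)^(-((1/4)*lgL + 1/2)) = (2:ℝ)^(lgL * (-(4:ℝ)⁻¹)) * (2:ℝ)^(-(2:ℝ)⁻¹) := by
      rw [← Real.rpow_add (by norm_num : (0:ℝ) < 2)]
      ring_nf
    have e2 : (2:ℝ)^(lgL * (-(4:ℝ)⁻¹)) = (L ^ (-(4:ℝ)⁻¹ : ℝ)) := by
      rw [Real.rpow_mul (by norm_num : (0:ℝ) ≤ 2), hlgL_def,
        Real.rpow_logb (by norm_num) (by norm_num) hL0]
    have e3 : (L ^ (-(4:ℝ)⁻¹ : ℝ)) = 1/q := by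
      rw [Real.rpow_neg hL0.le, hq_def, one_div]
    have e4 : (1/2 : ℝ) ≤ (2:ℝ)^(-(2:ℝ)⁻¹) := sqrt2_bound
    calc (1/2)*(1/q) ≤ (2:ℝ)^(-(2:ℝ)⁻¹) * (1/q) :=
          mul_le_mul_of_nonneg_right e4 hq_inv_pos.le
      _ = (2:ℝ)^(lgL * (-(4:ℝ)⁻¹)) * (2:ℝ)^(-(2:ℝ)⁻¹) := by rw [e2, e3]; ring
      _ = (2:ℝ)^(-((1/4)*lgL + 1/2)) := e1.symm
      _ ≤ (2:ℝ)^(-Δ) := hmono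
  have h2mδ : 1 - δ ≤ (2:ℝ)^(-δ) := one_sub_le_rpow_neg hδ0
  have hsum : 1 ≤ (2:ℝ)^(-Δ) + (2:ℝ)^(-δ) := by linarith
  have hbase_pos : (0:ℝ) < (2:ℝ)^(2*κ*s) := Real.rpow_pos_of_pos (by norm_num) _
  have e1 : (2:ℝ)^(2*κ*Real.sqrt (flog (L - x₁))) = (2:ℝ)^(2*κ*s) * (2:ℝ)^(-Δ) := by
    rw [← Real.rpow_add (by norm_num : (0:ℝ) < 2)]
    congr 1
    rw [hΔ_def]; ring
  have e2 : (2:ℝ)^(2*κ*Real.sqrt (flog (L - b))) = (2:ℝ)^(2*κ*s) * (2:ℝ)^(-δ) := by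
    rw [← Real.rpow_add (by norm_num : (0:ℝ) < 2)]
    congr 1
    rw [hδ_def]; ring
  rw [e1, e2, ← mul_add]
  have hfin := mul_le_mul_of_nonneg_left hsum hbase_pos.le
  rw [mul_one] at hfin
  exact hfin



variable {n : ℕ}

lemma interedges_card_eq_sum (G : SimpleGraph (Fin n)) (A B : Finset (Fin n)) :
    (G.interedges A B).card = ∑ a ∈ A, (B.filter (G.Adj a)).card := by
  classical
  rw [SimpleGraph.interedges, Rel.interedges_eq_biUnion, Finset.card_biUnion]
  · apply Finset.sum_congr rfl
    intro a _
    rw [Finset.card_map]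
  · intro x _ y _ hxy
    simp only [Finset.disjoint_left, Finset.mem_map, Function.Embedding.coeFn_mk]
    rintro p ⟨u, hu, rfl⟩ ⟨v, hv, h⟩
    exact hxy (by simpa using congrArg Prod.fst h.symm)

lemma interedges_le (G : SimpleGraph (Fin n)) {A B : Finset (Fin n)} {c : ℝ}
    (hA : A.Nonempty) (hB : B.Nonempty) (hd : (G.edgeDensity A B : ℝ) ≤ c) :
    ((G.interedges A B).card : ℝ) ≤ c * A.card * B.card := by
  have h0 : (0:ℝ) < (A.card : ℝ) * (B.card : ℝ) := by
    have := hA.card_pos; have := hB.card_pos; positivity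
  have e : ((G.edgeDensity A B : ℚ) : ℝ)
      = ((G.interedges A B).card : ℝ) / ((A.card : ℝ) * (B.card : ℝ)) := by
    rw [SimpleGraph.edgeDensity_def]
    push_cast
    ring
  rw [e, div_le_iff₀ h0] at hd
  calc ((G.interedges A B).card : ℝ) ≤ c * ((A.card:ℝ) * B.card) := hd
    _ = c * A.card * B.card := by ring

lemma markov (G : SimpleGraph (Fin n)) {A B : Finset (Fin n)} {c : ℝ}
    (hc : 0 < c) (hA : A.Nonempty) (hB : B.Nonempty)
    (hd : (G.edgeDensity A B : ℝ) ≤ c) :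
    ∃ A' : Finset (Fin n), A' ⊆ A ∧ (A.card : ℝ) ≤ 2 * A'.card ∧
      ∀ a ∈ A', ((B.filter (G.Adj a)).card : ℝ) ≤ 2*c*B.card := by
  classical
  set A' := A.filter (fun a => ((B.filter (G.Adj a)).card : ℝ) ≤ 2*c*B.card) with hA'
  refine ⟨A', Finset.filter_subset _ _, ?_, fun a ha => (Finset.mem_filter.1 ha).2⟩
  set Abad := A \ A' with hAbad
  have hsplit : (Abad.card : ℝ) + A'.card = A.card := by
    rw [hAbad]
    rw [Finset.card_sdiff_of_subset (Finset.filter_subset _ _)]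
    have hle := Finset.card_le_card (Finset.filter_subset
      (fun a => ((B.filter (G.Adj a)).card : ℝ) ≤ 2*c*B.card) A)
    push_cast [hA']
    rw [Nat.cast_sub hle]
    ring
  have hlow : ∀ a ∈ Abad, 2*c*B.card ≤ ((B.filter (G.Adj a)).card : ℝ) := by
    intro a ha
    rw [hAbad, Finset.mem_sdiff, hA'] at ha
    have := ha.2
    rw [Finset.mem_filter] at this
    push_neg at this
    exact (this ha.1).le
  have hsum : (Abad.card : ℝ) * (2*c*B.card) ≤ ∑ a ∈ A, ((B.filter (G.Adj a)).card : ℝ) := by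
    have h1 : (Abad.card : ℝ) * (2*c*B.card) ≤ ∑ a ∈ Abad, ((B.filter (G.Adj a)).card : ℝ) := by
      have := Finset.sum_le_sum hlow
      rw [Finset.sum_const, nsmul_eq_mul] at this
      linarith
    refine h1.trans (Finset.sum_le_sum_of_subset_of_nonneg (Finset.sdiff_subset) ?_)
    intro i _ _
    positivity
  have htot : ∑ a ∈ A, ((B.filter (G.Adj a)).card : ℝ) ≤ c * A.card * B.card := by
    have := interedges_le G hA hB hd
    rw [interedges_card_eq_sum] at this
    push_cast at this
    exact this
  have hBc : (0:ℝ) < B.card := by exact_mod_cast hB.card_pos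
  have hbadle : (Abad.card : ℝ) ≤ A.card / 2 := by
    by_contra hcon
    push_neg at hcon
    have : (A.card:ℝ)/2 * (2*c*B.card) < Abad.card * (2*c*B.card) := by
      apply mul_lt_mul_of_pos_right hcon
      positivity
    nlinarith
  linarith

lemma cover (G : SimpleGraph (Fin n)) {S B : Finset (Fin n)} {c : ℝ} (hc : 0 ≤ c)
    (hS : ∀ a ∈ S, ((B.filter (G.Adj a)).card : ℝ) ≤ 2*c*B.card)
    (hsmall : (S.card:ℝ)*(2*c) ≤ 1/4) :
    ∃ B' : Finset (Fin n), B' ⊆ B ∧ (3/4:ℝ)*B.card ≤ B'.card ∧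
      ∀ b ∈ B', ∀ a ∈ S, ¬ G.Adj a b := by
  classical
  set B' := B.filter (fun b => ∀ a ∈ S, ¬ G.Adj a b) with hB'
  refine ⟨B', Finset.filter_subset _ _, ?_, fun b hb => (Finset.mem_filter.1 hb).2⟩
  have hsub : B \ B' ⊆ S.biUnion (fun a => B.filter (G.Adj a)) := by
    intro b hb
    rw [Finset.mem_sdiff, hB', Finset.mem_filter] at hb
    obtain ⟨hbB, hnot⟩ := hb
    push_neg at hnot
    obtain ⟨a, haS, hadj⟩ := hnot hbB
    exact Finset.mem_biUnion.2 ⟨a, haS, Finset.mem_filter.2 ⟨hbB, hadj⟩⟩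
  have hcard : ((B \ B').card : ℝ) ≤ (S.card:ℝ) * (2*c*B.card) := by
    have h1 : (B \ B').card ≤ (S.biUnion (fun a => B.filter (G.Adj a))).card :=
      Finset.card_le_card hsub
    have h2 : ((S.biUnion (fun a => B.filter (G.Adj a))).card : ℝ)
        ≤ ∑ a ∈ S, ((B.filter (G.Adj a)).card : ℝ) := by
      have := Finset.card_biUnion_le (s := S) (t := fun a => B.filter (G.Adj a))
      exact_mod_cast this
    have h3 : ∑ a ∈ S, ((B.filter (G.Adj a)).card : ℝ) ≤ ∑ _a ∈ S, 2*c*(B.card:ℝ) :=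
      Finset.sum_le_sum hS
    rw [Finset.sum_const, nsmul_eq_mul] at h3
    have : ((B \ B').card : ℝ) ≤ ((S.biUnion (fun a => B.filter (G.Adj a))).card : ℝ) := by
      exact_mod_cast h1
    push_cast at h3 ⊢
    nlinarith
  have hsplit : (B'.card : ℝ) = B.card - (B \ B').card := by
    rw [Finset.card_sdiff_of_subset (Finset.filter_subset _ _)]
    have hle := Finset.card_le_card (Finset.filter_subset
      (fun b => ∀ a ∈ S, ¬ G.Adj a b) B)
    rw [Nat.cast_sub hle]
    simp [hB']
  have hBc : (0:ℝ) ≤ B.card := by positivity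
  have : (S.card:ℝ) * (2*c*B.card) ≤ (1/4)*B.card := by
    have := mul_le_mul_of_nonneg_right hsmall hBc
    nlinarith
  linarith

lemma clique_union (K : SimpleGraph (Fin n)) {S T : Finset (Fin n)}
    (hS : Kᶜ.IsClique (S : Set (Fin n))) (hT : Kᶜ.IsClique (T : Set (Fin n)))
    (hST : Disjoint S T) (hno : ∀ b ∈ T, ∀ a ∈ S, ¬ K.Adj a b) :
    Kᶜ.IsClique ((S ∪ T : Finset (Fin n)) : Set (Fin n)) := by
  intro x hx y hy hxy
  simp only [Finset.coe_union, Set.mem_union, Finset.mem_coe] at hx hy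
  rcases hx with hx | hx <;> rcases hy with hy | hy
  · exact hS hx hy hxy
  · exact ⟨hxy, hno y hy x hx⟩
  · refine ⟨hxy, fun h => hno x hx y hy (K.adj_symm h)⟩
  · exact hT hx hy hxy

noncomputable def embOf (S : Finset (Fin n)) : Fin S.card ↪ Fin n :=
  ((S.orderIsoOfFin rfl).toEquiv.toEmbedding).trans (Function.Embedding.subtype _)

lemma embOf_mem (S : Finset (Fin n)) (i : Fin S.card) : embOf S i ∈ S := by
  simp [embOf]

/-- The induced subgraph of `G` on a finset `S`, as a graph on `Fin S.card`. -/
noncomputable def indG (G : SimpleGraph (Fin n)) (S : Finset (Fin n)) :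
    SimpleGraph (Fin S.card) := G.comap (embOf S)

lemma indG_compl (G : SimpleGraph (Fin n)) (S : Finset (Fin n)) :
    (indG G S)ᶜ = indG Gᶜ S := by
  ext a b
  simp only [indG, SimpleGraph.compl_adj, SimpleGraph.comap_adj]
  constructor
  · rintro ⟨hne, hnadj⟩
    exact ⟨fun h => hne ((embOf S).injective h), hnadj⟩
  · rintro ⟨hne, hnadj⟩
    exact ⟨fun h => hne (congrArg _ h), hnadj⟩

lemma clique_push {K : SimpleGraph (Fin n)} {S : Finset (Fin n)}
    {T : Finset (Fin S.card)} (h : (K.comap (embOf S)).IsClique (T : Set (Fin S.card))) :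
    K.IsClique ((T.image (embOf S) : Finset (Fin n)) : Set (Fin n)) ∧
      (T.image (embOf S)).card = T.card ∧ (T.image (embOf S)) ⊆ S := by
  refine ⟨?_, Finset.card_image_of_injective T (embOf S).injective, ?_⟩
  · intro x hx y hy hxy
    simp only [Finset.coe_image, Set.mem_image, Finset.mem_coe] at hx hy
    obtain ⟨u, hu, rfl⟩ := hx
    obtain ⟨v, hv, rfl⟩ := hy
    have huv : u ≠ v := fun e => hxy (congrArg _ e)
    exact h hu hv huv
  · intro x hx
    obtain ⟨u, _, rfl⟩ := Finset.mem_image.1 hx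
    exact embOf_mem S u

lemma cliqueNum_push (K : SimpleGraph (Fin n)) (S : Finset (Fin n)) :
    (K.comap (embOf S)).cliqueNum ≤ K.cliqueNum := by
  obtain ⟨T, hT⟩ := (K.comap (embOf S)).exists_isNClique_cliqueNum
  obtain ⟨hcl, hcard, _⟩ := clique_push (K := K) (S := S) hT.isClique
  rw [← hT.card_eq, ← hcard]
  exact SimpleGraph.IsClique.card_le_cliqueNum (tc := hcl)

/-- extract a stable-set (Kᶜ-clique) of given size `s` inside `S` from the
clique number of the complement of the induced subgraph -/
lemma extract_stable (K : SimpleGraph (Fin n)) (S : Finset (Fin n)) (s : ℕ)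
    (hs : s ≤ ((indG K S)ᶜ).cliqueNum) :
    ∃ T : Finset (Fin n), T ⊆ S ∧ T.card = s ∧ Kᶜ.IsClique (T : Set (Fin n)) := by
  obtain ⟨T₀, hT₀⟩ := ((indG K S)ᶜ).exists_isNClique_cliqueNum
  obtain ⟨T₁, hT₁sub, hT₁card⟩ := Finset.exists_subset_card_eq (hT₀.card_eq.symm ▸ hs)
  have hT₁cl : ((indG K S)ᶜ).IsClique (T₁ : Set (Fin S.card)) :=
    hT₀.isClique.subset (by exact_mod_cast hT₁sub)
  rw [indG_compl] at hT₁cl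
  obtain ⟨hcl, hcard, hsub⟩ := clique_push (K := Kᶜ) (S := S) hT₁cl
  exact ⟨T₁.image (embOf S), hsub, by rw [hcard, hT₁card], hcl⟩

lemma one_le_cliqueNum {m : ℕ} (K : SimpleGraph (Fin m)) (hm : 1 ≤ m) :
    1 ≤ K.cliqueNum := by
  have hcl : K.IsClique (({⟨0, by omega⟩} : Finset (Fin m)) : Set (Fin m)) := by
    simp
  have := SimpleGraph.IsClique.card_le_cliqueNum (tc := hcl)
  simpa using this

lemma two_le_product {m : ℕ} (K : SimpleGraph (Fin m)) (hm : 2 ≤ m) :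
    2 ≤ Kᶜ.cliqueNum * K.cliqueNum := by
  set v : Fin m := ⟨0, by omega⟩
  set w : Fin m := ⟨1, by omega⟩
  have hvw : v ≠ w := by simp [v, w, Fin.ext_iff]
  have hpair : ∀ (H : SimpleGraph (Fin m)), H.Adj v w → 2 ≤ H.cliqueNum := by
    intro H hadj
    have hcl : H.IsClique (({v, w} : Finset (Fin m)) : Set (Fin m)) := by
      rw [Finset.coe_pair]
      haveI : Std.Symm H.Adj := H.symm
      exact Set.pairwise_pair_of_symmetric |>.2 (fun _ => hadj)
    have := SimpleGraph.IsClique.card_le_cliqueNum (tc := hcl)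
    rwa [Finset.card_pair hvw] at this
  by_cases hadj : K.Adj v w
  · have h2 := hpair K hadj
    have h1 := one_le_cliqueNum Kᶜ (by omega)
    calc 2 = 1 * 2 := by ring
      _ ≤ Kᶜ.cliqueNum * K.cliqueNum := Nat.mul_le_mul h1 h2
  · have h2 := hpair Kᶜ ⟨hvw, hadj⟩
    have h1 := one_le_cliqueNum K (by omega)
    calc 2 = 2 * 1 := by ring
      _ ≤ Kᶜ.cliqueNum * K.cliqueNum := Nat.mul_le_mul h2 h1

lemma indG_mem {I : ∀ n : ℕ, SimpleGraph (Fin n) → Prop}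
    (hI : ∀ (m n : ℕ) (G : SimpleGraph (Fin n)) (H : SimpleGraph (Fin m)),
      I n G → Nonempty (H ↪g G) → I m H)
    {G : SimpleGraph (Fin n)} (hG : I n G) (S : Finset (Fin n)) :
    I S.card (indG G S) :=
  hI S.card n G (indG G S) hG ⟨SimpleGraph.Embedding.comap (embOf S) G⟩

lemma card_lt_of_disjoint {A B : Finset (Fin n)} (hAB : Disjoint A B)
    (hBne : B.Nonempty) : A.card < n := by
  have h1 : (A ∪ B).card = A.card + B.card := Finset.card_union_of_disjoint hAB
  have h2 : (A ∪ B).card ≤ n := by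
    have := Finset.card_le_univ (A ∪ B)
    simpa using this
  have := hBne.card_pos
  omega

set_option maxHeartbeats 1000000 in
lemma key_step (K : SimpleGraph (Fin n)) {A B : Finset (Fin n)} {c : ℝ} {D : ℕ}
    (hAB : Disjoint A B) (hAne : A.Nonempty) (hBne : B.Nonempty)
    (hD4 : 4 ≤ D) (hc : c = (2:ℝ)^(-(D:ℝ)))
    (hKd : (K.edgeDensity A B : ℝ) ≤ c) :
    ∃ A' B' : Finset (Fin n),
      A'.Nonempty ∧ B'.Nonempty ∧ A'.card < n ∧ B'.card < n ∧
      (A.card : ℝ) ≤ 2 * A'.card ∧ (3/4:ℝ) * B.card ≤ B'.card ∧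
      ∀ p₁ p₂ : ℝ, 0 ≤ p₁ → 0 ≤ p₂ → p₁ ≤ (2:ℝ)^((D:ℝ)-3) →
        p₁ ≤ (((indG K A')ᶜ.cliqueNum * (indG K A').cliqueNum : ℕ) : ℝ) →
        p₂ ≤ (((indG K B')ᶜ.cliqueNum * (indG K B').cliqueNum : ℕ) : ℝ) →
        p₁ + p₂ ≤ ((Kᶜ.cliqueNum * K.cliqueNum : ℕ) : ℝ) := by
  classical
  have hc0 : 0 < c := by rw [hc]; positivity
  -- Markov
  obtain ⟨A', hA'sub, hA'card, hA'deg⟩ := markov K hc0 hAne hBne hKd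
  have hA'ne : A'.Nonempty := by
    rw [← Finset.card_pos]
    by_contra h
    push_neg at h
    have h0 : A'.card = 0 := by omega
    rw [h0] at hA'card
    have h1 : (1:ℝ) ≤ (A.card:ℝ) := by exact_mod_cast hAne.card_pos
    push_cast at hA'card
    linarith
  have hA'lt : A'.card < n :=
    lt_of_le_of_lt (Finset.card_le_card hA'sub) (card_lt_of_disjoint hAB hBne)
  -- clique numbers of induced graph on A'
  set a₁ := ((indG K A')ᶜ).cliqueNum with ha₁
  set s := min (2^(D-3)) a₁ with hs
  -- extract stable set T of size s inside A'
  obtain ⟨T, hTsub, hTcard, hTcl⟩ := extract_stable K A' s (min_le_right _ _)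
  -- cover lemma
  have hTdeg : ∀ a ∈ T, ((B.filter (K.Adj a)).card : ℝ) ≤ 2*c*B.card :=
    fun a ha => hA'deg a (hTsub ha)
  have hpow_eq : ((2^(D-3) : ℕ) : ℝ) = (2:ℝ)^((D:ℝ)-3) := by
    push_cast
    rw [← Real.rpow_natCast 2 (D-3), Nat.cast_sub (by omega)]
    norm_num
  have hsmall : (T.card:ℝ)*(2*c) ≤ 1/4 := by
    have h1 : (T.card : ℝ) ≤ (2:ℝ)^((D:ℝ)-3) := by
      rw [hTcard, ← hpow_eq]
      exact_mod_cast Nat.cast_le.2 (min_le_left _ _)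
    have h2 : (0:ℝ) < (2:ℝ)^((D:ℝ)-3) := by positivity
    have h3 : (2:ℝ)^((D:ℝ)-3) * (2*c) = 1/4 := by
      rw [hc]
      have e1 : (2:ℝ)^((D:ℝ)-3) * (2 * (2:ℝ)^(-(D:ℝ)))
          = (2:ℝ)^(((D:ℝ)-3) + 1 + (-(D:ℝ))) := by
        rw [Real.rpow_add (by norm_num : (0:ℝ) < 2),
          Real.rpow_add (by norm_num : (0:ℝ) < 2), Real.rpow_one]
        ring
      rw [e1, show ((D:ℝ)-3) + 1 + (-(D:ℝ)) = ((-2:ℤ):ℝ) by push_cast; ring,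
        Real.rpow_intCast]
      norm_num
    calc (T.card:ℝ)*(2*c) ≤ (2:ℝ)^((D:ℝ)-3)*(2*c) :=
          mul_le_mul_of_nonneg_right h1 (by positivity)
      _ = 1/4 := h3
  obtain ⟨B', hB'sub, hB'card, hB'no⟩ := cover K hc0.le hTdeg hsmall
  have hB'ne : B'.Nonempty := by
    rw [← Finset.card_pos]
    by_contra h
    push_neg at h
    have h0 : B'.card = 0 := by omega
    rw [h0] at hB'card
    have h1 : (1:ℝ) ≤ (B.card:ℝ) := by exact_mod_cast hBne.card_pos
    push_cast at hB'card
    linarith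
  have hB'lt : B'.card < n :=
    lt_of_le_of_lt (Finset.card_le_card hB'sub)
      (card_lt_of_disjoint (Disjoint.symm hAB) hAne)
  refine ⟨A', B', hA'ne, hB'ne, hA'lt, hB'lt, hA'card, hB'card, ?_⟩
  intro p₁ p₂ hp₁0 hp₂0 hp₁D hp₁ hp₂
  -- second stable set
  set a₂ := ((indG K B')ᶜ).cliqueNum with ha₂
  obtain ⟨T₂, hT₂sub, hT₂card, hT₂cl⟩ := extract_stable K B' a₂ le_rfl
  -- union is a stable set
  have hdisj : Disjoint T T₂ :=
    Finset.disjoint_of_subset_left (hTsub.trans hA'sub)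
      (Finset.disjoint_of_subset_right (hT₂sub.trans hB'sub) hAB)
  have huni : Kᶜ.IsClique ((T ∪ T₂ : Finset (Fin n)) : Set (Fin n)) := by
    apply clique_union K hTcl hT₂cl hdisj
    intro b hb a ha
    exact hB'no b (hT₂sub hb) a ha
  have hx : s + a₂ ≤ Kᶜ.cliqueNum := by
    have hcard : (T ∪ T₂).card = s + a₂ := by
      rw [Finset.card_union_of_disjoint hdisj, hTcard, hT₂card]
    have := SimpleGraph.IsClique.card_le_cliqueNum (tc := huni)
    rwa [hcard] at this
  -- clique numbers push
  have hω₁ : (indG K A').cliqueNum ≤ K.cliqueNum := cliqueNum_push K A'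
  have hω₂ : (indG K B').cliqueNum ≤ K.cliqueNum := cliqueNum_push K B'
  have ht1 : 1 ≤ K.cliqueNum := one_le_cliqueNum K (by omega)
  -- real arithmetic
  set t := (K.cliqueNum : ℝ) with hts
  have ht1' : (1:ℝ) ≤ t := by rw [hts]; exact_mod_cast ht1
  have hxt : ((s:ℝ) + a₂) * t ≤ ((Kᶜ.cliqueNum * K.cliqueNum : ℕ) : ℝ) := by
    push_cast
    have : ((s:ℝ) + a₂) ≤ (Kᶜ.cliqueNum : ℝ) := by exact_mod_cast hx
    have ht0 : (0:ℝ) ≤ t := by linarith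
    nlinarith
  have hp₁st : p₁ ≤ (s:ℝ) * t := by
    rcases le_total (2^(D-3)) a₁ with hmin | hmin
    · have hseq : s = 2^(D-3) := by rw [hs, min_eq_left hmin]
      have : p₁ ≤ (s:ℝ) := by rw [hseq, hpow_eq]; exact hp₁D
      nlinarith
    · have hseq : s = a₁ := by rw [hs, min_eq_right hmin]
      have hω₁' : ((indG K A').cliqueNum : ℝ) ≤ t := by rw [hts]; exact_mod_cast hω₁
      have ha₁0 : (0:ℝ) ≤ (a₁:ℝ) := by positivity
      have : p₁ ≤ (a₁:ℝ) * ((indG K A').cliqueNum : ℝ) := by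
        rw [ha₁]; exact_mod_cast hp₁
      rw [hseq]
      nlinarith
  have hp₂at : p₂ ≤ (a₂:ℝ) * t := by
    have hω₂' : ((indG K B').cliqueNum : ℝ) ≤ t := by rw [hts]; exact_mod_cast hω₂
    have ha₂0 : (0:ℝ) ≤ (a₂:ℝ) := by positivity
    have : p₂ ≤ (a₂:ℝ) * ((indG K B').cliqueNum : ℝ) := by
      rw [ha₂]; exact_mod_cast hp₂
    nlinarith
  calc p₁ + p₂ ≤ (s:ℝ)*t + (a₂:ℝ)*t := by linarith
    _ = ((s:ℝ) + a₂) * t := by ring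
    _ ≤ _ := hxt


lemma le_of_mul_self_le {a M : ℝ} (ha : 0 < a) (hM : 0 ≤ M) (h : a*a ≤ M*M) : a ≤ M := by
  nlinarith

end EHaux

/-- A class of graphs (one predicate for each number of vertices) is hereditary if it is
closed under isomorphic copies of induced subgraphs. -/
def Hereditary (I : ∀ n : ℕ, SimpleGraph (Fin n) → Prop) : Prop :=
  ∀ (m n : ℕ) (G : SimpleGraph (Fin n)) (H : SimpleGraph (Fin m)),
    I n G → Nonempty (H ↪g G) → I m H

set_option maxHeartbeats 2000000 in
/-- If a hereditary class `𝓘` satisfies the polynomial density property with parameters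
`σ ≥ 0` and `0 < ε ≤ 1`, then there is `κ > 0` such that every `G ∈ 𝓘` on `n ≥ 2` vertices
satisfies `max (α G) (ω G) ≥ 2 ^ (κ√(log n · log log n))` (logs base 2). -/
theorem hereditary_density_to_EH_bound
    (I : ∀ n : ℕ, SimpleGraph (Fin n) → Prop) (hI : Hereditary I)
    (σ ε : ℝ) (hσ : 0 ≤ σ) (hε0 : 0 < ε) (hε1 : ε ≤ 1)
    (hdens : ∀ (n : ℕ) (G : SimpleGraph (Fin n)), 2 ≤ n → I n G →
      ∀ c : ℝ, 0 ≤ c → c ≤ 1 / 2 →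
        ∃ A B : Finset (Fin n), Disjoint A B ∧ A.Nonempty ∧ B.Nonempty ∧
          c ^ σ * n ≤ (A.card : ℝ) ∧ ε * n ≤ (B.card : ℝ) ∧
          ((G.edgeDensity A B : ℝ) ≤ c ∨ 1 - c ≤ (G.edgeDensity A B : ℝ))) :
    ∃ κ : ℝ, 0 < κ ∧
      ∀ (n : ℕ) (G : SimpleGraph (Fin n)), 2 ≤ n → I n G →
        (2 : ℝ) ^ (κ * Real.sqrt (Real.logb 2 n * Real.logb 2 (Real.logb 2 n))) ≤
          (max (Gᶜ.cliqueNum) (G.cliqueNum) : ℝ) := by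
  classical
  rcases eq_or_lt_of_le hσ with hσ0 | hσpos
  · -- degenerate case σ = 0 : the class is empty above one vertex
    refine ⟨1, one_pos, ?_⟩
    intro n G hn2 hGI
    exfalso
    obtain ⟨A, B, hAB, hAne, hBne, hA, hB, _⟩ :=
      hdens n G hn2 hGI 0 le_rfl (by norm_num)
    rw [← hσ0, Real.rpow_zero, one_mul] at hA
    have hcard : A.card + B.card ≤ n := by
      have h1 : (A ∪ B).card = A.card + B.card := Finset.card_union_of_disjoint hAB
      have h2 := Finset.card_le_univ (A ∪ B)
      simpa [h1] using h2
    have hA' : n ≤ A.card := by exact_mod_cast hA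
    have := hBne.card_pos
    omega
  · -- main case σ > 0
    set b := 1 - Real.logb 2 ε with hb_def
    have hb : 1 ≤ b := by
      have : Real.logb 2 ε ≤ 0 := Real.logb_nonpos (by norm_num) hε0.le hε1
      rw [hb_def]; linarith
    set L₀ : ℝ := 10*σ + 2*b + 16 with hL₀_def
    have hL₀pos : 0 < L₀ := by rw [hL₀_def]; linarith
    set κ := min (1/(4*L₀)) (min (1/(8*(5*σ+1))) (1/(32*b))) with hκ_def
    have hκ0 : 0 < κ := by
      apply lt_min (by positivity)
      exact lt_min (by positivity) (by positivity)
    have hκa : κ ≤ 1/(4*L₀) := min_le_left _ _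
    have hκb : κ ≤ 1/(8*(5*σ+1)) := (min_le_right _ _).trans (min_le_left _ _)
    have hκc : κ ≤ 1/(32*b) := (min_le_right _ _).trans (min_le_right _ _)
    refine ⟨κ, hκ0, ?_⟩
    have main : ∀ n : ℕ, ∀ G : SimpleGraph (Fin n), 1 ≤ n → I n G →
        (2:ℝ)^(2*κ*EHaux.sqg n) ≤ ((Gᶜ.cliqueNum * G.cliqueNum : ℕ) : ℝ) := by
      intro n
      induction n using Nat.strong_induction_on with
      | _ n IH =>
        intro G hn1 hGI
        by_cases hbase : Real.logb 2 n ≤ L₀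
        · -- base case : small n
          have hprod2 : (1:ℝ) ≤ ((Gᶜ.cliqueNum * G.cliqueNum : ℕ) : ℝ) := by
            have h1 := EHaux.one_le_cliqueNum Gᶜ hn1
            have h2 := EHaux.one_le_cliqueNum G hn1
            have : 1 ≤ Gᶜ.cliqueNum * G.cliqueNum := Nat.mul_le_mul h1 h2
            exact_mod_cast this
          rcases Nat.lt_or_ge n 2 with hn2 | hn2
          · -- n = 1
            have hn1' : n = 1 := by omega
            have hsqg : EHaux.sqg (n:ℝ) = 0 := by
              apply EHaux.sqg_eq_zero <;> rw [hn1'] <;> norm_num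
            rw [hsqg, mul_zero, Real.rpow_zero]
            exact hprod2
          · -- 2 ≤ n, logb 2 n ≤ L₀
            have hn2R : (2:ℝ) ≤ (n:ℝ) := by exact_mod_cast hn2
            have hsqg : EHaux.sqg (n:ℝ) ≤ 2*L₀ := by
              refine (EHaux.sqg_le_two_mul hn2R).trans ?_
              have hlg0 : (0:ℝ) ≤ Real.logb 2 (n:ℝ) :=
                Real.logb_nonneg (by norm_num) (by linarith : (1:ℝ) ≤ (n:ℝ))
              linarith
            have hexp : 2*κ*EHaux.sqg (n:ℝ) ≤ 1 := by
              have hs0 : 0 ≤ EHaux.sqg (n:ℝ) := EHaux.sqg_nonneg _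
              have h1 : 2*κ*EHaux.sqg (n:ℝ) ≤ 2*κ*(2*L₀) := by
                apply mul_le_mul_of_nonneg_left hsqg (by positivity)
              have h2 : κ*(4*L₀) ≤ 1 := by
                rw [le_div_iff₀ (by positivity)] at hκa; exact hκa
              have h3 : 2*κ*(2*L₀) = κ*(4*L₀) := by ring
              linarith
            have hle2 : (2:ℝ)^(2*κ*EHaux.sqg (n:ℝ)) ≤ 2 := by
              calc (2:ℝ)^(2*κ*EHaux.sqg (n:ℝ)) ≤ (2:ℝ)^(1:ℝ) :=
                    Real.rpow_le_rpow_of_exponent_le (by norm_num) hexp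
                _ = 2 := Real.rpow_one 2
            refine hle2.trans ?_
            have := EHaux.two_le_product G hn2
            exact_mod_cast this
        · -- inductive step : large n
          push_neg at hbase
          set L := Real.logb 2 (n:ℝ) with hL_def
          have hn2 : 2 ≤ n := by
            by_contra h
            push_neg at h
            have hn1' : n = 1 := by omega
            rw [hL_def, hn1'] at hbase
            norm_num at hbase
            linarith
          have hnR : (0:ℝ) < (n:ℝ) := by positivity
          have hL16 : (16:ℝ) ≤ L := by
            have h : (16:ℝ) ≤ L₀ := by rw [hL₀_def]; linarith
            linarith
          have hsqgW : EHaux.sqg (n:ℝ) = Real.sqrt (EHaux.flog L) := by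
            rw [EHaux.sqg_eq, hL_def]
          set W := κ * Real.sqrt (EHaux.flog L) with hW_def
          have hW0 : 0 ≤ W := by
            rw [hW_def]; positivity
          set D : ℕ := ⌈2*W⌉₊ + 4 with hD_def
          have hD4 : 4 ≤ D := by omega
          have hDub : (D:ℝ) ≤ 2*W + 5 := by
            have h1 : (⌈2*W⌉₊ : ℝ) < 2*W + 1 := Nat.ceil_lt_add_one (by linarith)
            rw [hD_def]
            push_cast
            linarith
          have hDlb : 2*W ≤ (D:ℝ) - 3 := by
            have h1 : 2*W ≤ (⌈2*W⌉₊ : ℝ) := Nat.le_ceil _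
            rw [hD_def]
            push_cast
            linarith
          set c : ℝ := (2:ℝ)^(-(D:ℝ)) with hc_def
          have hc0 : 0 < c := by rw [hc_def]; positivity
          have hc12 : c ≤ 1/2 := by
            rw [hc_def]
            calc (2:ℝ)^(-(D:ℝ)) ≤ (2:ℝ)^(-(1:ℝ)) := by
                  apply Real.rpow_le_rpow_of_exponent_le (by norm_num)
                  have : (4:ℝ) ≤ (D:ℝ) := by exact_mod_cast hD4
                  linarith
              _ = 1/2 := by
                  rw [Real.rpow_neg_one]
                  norm_num
          obtain ⟨A, B, hAB, hAne, hBne, hA, hB, hd⟩ :=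
            hdens n G hn2 hGI c hc0.le hc12
          -- analytic core
          set x₁ := σ*(D:ℝ) + 1 with hx₁_def
          have hx₁0 : 0 ≤ x₁ := by
            rw [hx₁_def]; positivity
          have hx₁ub : x₁ ≤ 2*σ*(κ * Real.sqrt (EHaux.flog L)) + 5*σ + 1 := by
            rw [hx₁_def, ← hW_def]
            have h1 := mul_le_mul_of_nonneg_left hDub hσpos.le
            have h2 : σ*(2*W + 5) = 2*σ*W + 5*σ := by ring
            linarith
          obtain ⟨hC1, hC2, hineq⟩ :=
            EHaux.core σ b κ L₀ hσpos hb hL₀_def hκ0 hκb hκc hbase.le hx₁0 hx₁ub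
          set p₁ := (2:ℝ)^(2*κ*Real.sqrt (EHaux.flog (L - x₁))) with hp₁_def
          set p₂ := (2:ℝ)^(2*κ*Real.sqrt (EHaux.flog (L - b))) with hp₂_def
          have hp₁0 : 0 ≤ p₁ := by rw [hp₁_def]; positivity
          have hp₂0 : 0 ≤ p₂ := by rw [hp₂_def]; positivity
          have hp₁D : p₁ ≤ (2:ℝ)^((D:ℝ)-3) := by
            rw [hp₁_def]
            apply Real.rpow_le_rpow_of_exponent_le (by norm_num)
            have hs1 : Real.sqrt (EHaux.flog (L - x₁)) ≤ Real.sqrt (EHaux.flog L) :=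
              Real.sqrt_le_sqrt (EHaux.flog_mono hC1 (by linarith))
            have h2 : 2*κ*Real.sqrt (EHaux.flog (L - x₁)) ≤ 2*W := by
              rw [hW_def]
              have := mul_le_mul_of_nonneg_left hs1 (by positivity : (0:ℝ) ≤ 2*κ)
              linarith
            linarith
          -- size bounds
          have hnL : (n:ℝ) = (2:ℝ)^L := (Real.rpow_logb (by norm_num) (by norm_num) hnR).symm
          have hm1 : (2:ℝ)^(L - x₁) ≤ (A.card : ℝ) / 2 := by
            have e1 : (2:ℝ)^(L - x₁) = c^σ * (n:ℝ) / 2 := by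
              rw [show L - x₁ = ((-(D:ℝ))*σ) + L - 1 by rw [hx₁_def]; ring]
              rw [Real.rpow_sub (by norm_num : (0:ℝ) < 2),
                Real.rpow_add (by norm_num : (0:ℝ) < 2), Real.rpow_one,
                Real.rpow_mul (by norm_num : (0:ℝ) ≤ 2), ← hc_def, ← hnL]
            rw [e1]
            linarith
          have hm2 : (2:ℝ)^(L - b) ≤ (3/4:ℝ) * (B.card:ℝ) := by
            have e1 : (2:ℝ)^(L - b) = ε * (n:ℝ) / 2 := by
              rw [hb_def, hnL, show L - (1 - Real.logb 2 ε) = Real.logb 2 ε + L + (-1) by ring]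
              rw [Real.rpow_add (by norm_num : (0:ℝ) < 2),
                Real.rpow_add (by norm_num : (0:ℝ) < 2),
                Real.rpow_logb (by norm_num) (by norm_num) hε0,
                Real.rpow_neg_one]
              ring
            have h2 : ε * (n:ℝ) / 2 ≤ (1/2:ℝ) * B.card := by linarith
            have h3 : (1/2:ℝ) * B.card ≤ (3/4:ℝ) * B.card := by
              have hBc : (0:ℝ) ≤ (B.card : ℝ) := Nat.cast_nonneg _
              linarith
            rw [e1]
            linarith
          -- 1 ≤ 2^(L - x₁) and  1 ≤ 2^(L - b)
          have hone1 : (1:ℝ) ≤ (2:ℝ)^(L - x₁) := by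
            rw [show (1:ℝ) = (2:ℝ)^(0:ℝ) by rw [Real.rpow_zero]]
            exact Real.rpow_le_rpow_of_exponent_le (by norm_num) (by linarith)
          have hone2 : (1:ℝ) ≤ (2:ℝ)^(L - b) := by
            rw [show (1:ℝ) = (2:ℝ)^(0:ℝ) by rw [Real.rpow_zero]]
            exact Real.rpow_le_rpow_of_exponent_le (by norm_num) (by linarith)
          have hsqg1 : EHaux.sqg ((2:ℝ)^(L - x₁)) = Real.sqrt (EHaux.flog (L - x₁)) := by
            rw [EHaux.sqg_eq, Real.logb_rpow (by norm_num) (by norm_num)]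
          have hsqg2 : EHaux.sqg ((2:ℝ)^(L - b)) = Real.sqrt (EHaux.flog (L - b)) := by
            rw [EHaux.sqg_eq, Real.logb_rpow (by norm_num) (by norm_num)]
          -- helper to compare p with product of induced graphs
          have hPmono : ∀ (y : ℝ) (m : ℕ), 1 ≤ y → y ≤ (m:ℝ) →
              (2:ℝ)^(2*κ*EHaux.sqg y) ≤ (2:ℝ)^(2*κ*EHaux.sqg (m:ℝ)) := by
            intro y m hy hym
            apply Real.rpow_le_rpow_of_exponent_le (by norm_num)
            have h1 := EHaux.sqg_mono hy hym
            have := mul_le_mul_of_nonneg_left h1 (by positivity : (0:ℝ) ≤ 2*κ)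
            linarith
          rcases hd with hsparse | hdense
          · -- sparse case : K = G
            obtain ⟨A', B', hA'ne, hB'ne, hA'lt, hB'lt, hA'card, hB'card, hfin⟩ :=
              EHaux.key_step G hAB hAne hBne hD4 hc_def hsparse
            have hp₁prod : p₁ ≤ (((EHaux.indG G A')ᶜ.cliqueNum *
                (EHaux.indG G A').cliqueNum : ℕ) : ℝ) := by
              have h1 : (2:ℝ)^(L-x₁) ≤ (A'.card : ℝ) := by
                have : (A.card:ℝ)/2 ≤ A'.card := by linarith
                linarith
              have h2 := hPmono ((2:ℝ)^(L-x₁)) A'.card hone1 h1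
              rw [hsqg1] at h2
              rw [hp₁_def]
              exact h2.trans (IH A'.card hA'lt (EHaux.indG G A')
                (by exact_mod_cast hA'ne.card_pos) (EHaux.indG_mem hI hGI A'))
            have hp₂prod : p₂ ≤ (((EHaux.indG G B')ᶜ.cliqueNum *
                (EHaux.indG G B').cliqueNum : ℕ) : ℝ) := by
              have h1 : (2:ℝ)^(L-b) ≤ (B'.card : ℝ) := by linarith
              have h2 := hPmono ((2:ℝ)^(L-b)) B'.card hone2 h1
              rw [hsqg2] at h2
              rw [hp₂_def]
              exact h2.trans (IH B'.card hB'lt (EHaux.indG G B')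
                (by exact_mod_cast hB'ne.card_pos) (EHaux.indG_mem hI hGI B'))
            have := hfin p₁ p₂ hp₁0 hp₂0 hp₁D hp₁prod hp₂prod
            rw [hsqgW]
            linarith
          · -- dense case : K = Gᶜ
            have hKd : ((Gᶜ.edgeDensity A B : ℚ) : ℝ) ≤ c := by
              have hsum := SimpleGraph.edgeDensity_add_edgeDensity_compl G hAne hBne hAB
              have hsum' : ((G.edgeDensity A B : ℚ):ℝ) + ((Gᶜ.edgeDensity A B : ℚ):ℝ) = 1 := by
                exact_mod_cast congrArg (fun q : ℚ => (q:ℝ)) hsum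
              linarith
            obtain ⟨A', B', hA'ne, hB'ne, hA'lt, hB'lt, hA'card, hB'card, hfin⟩ :=
              EHaux.key_step Gᶜ hAB hAne hBne hD4 hc_def (by convert hKd using 4)
            have hIHc : ∀ S : Finset (Fin n), S.Nonempty → S.card < n →
                (2:ℝ)^(2*κ*EHaux.sqg (S.card:ℝ)) ≤
                  (((EHaux.indG Gᶜ S)ᶜ.cliqueNum * (EHaux.indG Gᶜ S).cliqueNum : ℕ) : ℝ) := by
              intro S hSne hSlt
              rw [← EHaux.indG_compl, compl_compl]
              have := IH S.card hSlt (EHaux.indG G S)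
                (by exact_mod_cast hSne.card_pos) (EHaux.indG_mem hI hGI S)
              rw [show (EHaux.indG G S).cliqueNum * ((EHaux.indG G S)ᶜ).cliqueNum
                  = ((EHaux.indG G S)ᶜ).cliqueNum * (EHaux.indG G S).cliqueNum from
                  Nat.mul_comm _ _]
              exact this
            have hp₁prod : p₁ ≤ (((EHaux.indG Gᶜ A')ᶜ.cliqueNum *
                (EHaux.indG Gᶜ A').cliqueNum : ℕ) : ℝ) := by
              have h1 : (2:ℝ)^(L-x₁) ≤ (A'.card : ℝ) := by
                have : (A.card:ℝ)/2 ≤ A'.card := by linarith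
                linarith
              have h2 := hPmono ((2:ℝ)^(L-x₁)) A'.card hone1 h1
              rw [hsqg1] at h2
              rw [hp₁_def]
              exact h2.trans (hIHc A' hA'ne hA'lt)
            have hp₂prod : p₂ ≤ (((EHaux.indG Gᶜ B')ᶜ.cliqueNum *
                (EHaux.indG Gᶜ B').cliqueNum : ℕ) : ℝ) := by
              have h1 : (2:ℝ)^(L-b) ≤ (B'.card : ℝ) := by linarith
              have h2 := hPmono ((2:ℝ)^(L-b)) B'.card hone2 h1
              rw [hsqg2] at h2
              rw [hp₂_def]
              exact h2.trans (hIHc B' hB'ne hB'lt)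
            have hlast := hfin p₁ p₂ hp₁0 hp₂0 hp₁D hp₁prod hp₂prod
            rw [compl_compl] at hlast
            rw [hsqgW]
            have : ((Gᶜ.cliqueNum * G.cliqueNum : ℕ) : ℝ)
                = ((G.cliqueNum * Gᶜ.cliqueNum : ℕ) : ℝ) := by
              rw [Nat.mul_comm]
            linarith
    -- wrap up
    intro n G hn2 hGI
    have h := main n G (by omega) hGI
    have hM : (Gᶜ.cliqueNum * G.cliqueNum : ℕ) ≤
        (max (Gᶜ.cliqueNum) (G.cliqueNum)) * (max (Gᶜ.cliqueNum) (G.cliqueNum)) :=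
      Nat.mul_le_mul (le_max_left _ _) (le_max_right _ _)
    set M := (max (Gᶜ.cliqueNum) (G.cliqueNum) : ℝ) with hM_def
    have hM0 : 0 ≤ M := by rw [hM_def]; positivity
    have hMR : ((Gᶜ.cliqueNum * G.cliqueNum : ℕ) : ℝ) ≤ M * M := by
      rw [hM_def]
      push_cast
      exact_mod_cast Nat.cast_le.2 hM
    set a := (2:ℝ)^(κ * Real.sqrt (Real.logb 2 n * Real.logb 2 (Real.logb 2 n))) with ha_def
    have ha0 : 0 < a := by rw [ha_def]; positivity
    have haa : a * a = (2:ℝ)^(2*κ*EHaux.sqg (n:ℝ)) := by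
      rw [ha_def, ← Real.rpow_add (by norm_num : (0:ℝ) < 2)]
      congr 1
      rw [EHaux.sqg]
      ring
    have hfin : a * a ≤ M * M := by
      rw [haa]
      exact h.trans hMR
    exact EHaux.le_of_mul_self_le ha0 hM0 hfin
end

section
/- For every graph H there exists c > 0 such that every H-free graph G with n > 0 vertices satisfies max(α(G), ω(G)) ≥ 2^{c·√(log n)}. -/
open SimpleGraph Finset
open scoped Classical

namespace EH

lemma parts {u k : ℕ} (hk : 1 ≤ k) (j : Fin k) :
    u / k ≤ ((Finset.univ : Finset (Fin u)).filter (fun i : Fin u => i.val % k = j.val)).card := by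
  rcases Nat.eq_zero_or_pos u with rfl | hu
  · simp
  have h : (Finset.range (u / k)).card ≤
      ((Finset.univ : Finset (Fin u)).filter (fun i : Fin u => i.val % k = j.val)).card := by
    have hjk : (j : ℕ) < k := j.isLt
    apply Finset.card_le_card_of_injOn
      (fun m => if hm : m * k + (j : ℕ) < u then (⟨m * k + (j : ℕ), hm⟩ : Fin u)
        else ⟨0, hu⟩)
    · intro m hm
      rw [Finset.mem_coe, Finset.mem_range] at hm
      have hlt : m * k + (j : ℕ) < u := by
        have h1 : (m + 1) * k ≤ (u / k) * k := Nat.mul_le_mul_right k hm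
        have h2 : (u / k) * k ≤ u := Nat.div_mul_le_self u k
        nlinarith
      simp only [Finset.mem_coe, dif_pos hlt]
      rw [Finset.mem_filter]
      refine ⟨Finset.mem_univ _, ?_⟩
      show (m * k + (j:ℕ)) % k = (j:ℕ)
      simp [Nat.add_mod, Nat.mul_mod_left, Nat.mod_eq_of_lt hjk]
    · intro m₁ h₁ m₂ h₂ heq
      rw [Finset.mem_coe, Finset.mem_range] at h₁ h₂
      have hlt₁ : m₁ * k + (j : ℕ) < u := by
        have h1 : (m₁ + 1) * k ≤ (u / k) * k := Nat.mul_le_mul_right k h₁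
        have h2 : (u / k) * k ≤ u := Nat.div_mul_le_self u k
        nlinarith
      have hlt₂ : m₂ * k + (j : ℕ) < u := by
        have h1 : (m₂ + 1) * k ≤ (u / k) * k := Nat.mul_le_mul_right k h₂
        have h2 : (u / k) * k ≤ u := Nat.div_mul_le_self u k
        nlinarith
      simp only [dif_pos hlt₁, dif_pos hlt₂] at heq
      have h3 : m₁ * k + (j:ℕ) = m₂ * k + (j:ℕ) := by
        simpa using congrArg Fin.val heq
      have hk0 : 0 < k := hk
      nlinarith
  simpa using h


lemma greedy {n k : ℕ} (G : SimpleGraph (Fin n)) (H : SimpleGraph (Fin k))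
    (hHf : ¬ Nonempty (H ↪g G)) (U : Finset (Fin n)) (ε₁ ε₂ M : ℝ)
    (hε₁ : 0 < ε₁) (hε₁' : ε₁ ≤ 1) (hε₂ : 0 < ε₂) (hε₂' : ε₂ ≤ 1) (hM : 0 < M) :
    ∀ (d : ℕ) (E : Finset (Fin k)) (φ : Fin k → Fin n) (C : Fin k → Finset (Fin n)),
      E.card + d = k →
      Set.InjOn φ E →
      (∀ a ∈ E, ∀ b ∈ E, a ≠ b → (G.Adj (φ a) (φ b) ↔ H.Adj a b)) →
      (∀ j, j ∉ E → ∀ a ∈ E, ∀ v ∈ C j, (G.Adj (φ a) v ↔ H.Adj a j)) →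
      (∀ j, j ∉ E → ∀ a ∈ E, φ a ∉ C j) →
      (∀ j₁, j₁ ∉ E → ∀ j₂, j₂ ∉ E → j₁ ≠ j₂ → Disjoint (C j₁) (C j₂)) →
      (∀ j, j ∉ E → C j ⊆ U) →
      (∀ j, j ∉ E → M * (ε₁ * ε₂) ^ E.card ≤ ((C j).card : ℝ)) →
      ∃ S T : Finset (Fin n), S ⊆ U ∧ T ⊆ U ∧ Disjoint S T ∧
        M * (ε₁ * ε₂) ^ k / k ≤ (S.card : ℝ) ∧ M * (ε₁ * ε₂) ^ k ≤ (T.card : ℝ) ∧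
        ((∀ v ∈ S, ((T.filter (fun u => G.Adj v u)).card : ℝ) < ε₁ * T.card) ∨
         (∀ v ∈ S, (1 - ε₂) * (T.card : ℝ) < ((T.filter (fun u => G.Adj v u)).card : ℝ))) := by
  have hεε : 0 < ε₁ * ε₂ := mul_pos hε₁ hε₂
  have hεε' : ε₁ * ε₂ ≤ 1 := mul_le_one₀ hε₁' hε₂.le hε₂'
  intro d
  induction d with
  | zero =>
    intro E φ C hcard hinj hpairs _ _ _ _ _
    have hE : E = univ := Finset.eq_univ_of_card E (by simpa using hcard)
    subst hE
    exfalso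
    refine hHf ⟨⟨⟨φ, fun a b hab => hinj (by simp) (by simp) hab⟩, ?_⟩⟩
    intro a b
    rcases eq_or_ne a b with rfl | hab
    · simp
    · exact hpairs a (by simp) b (by simp) hab
  | succ d ih =>
    intro E φ C hcard hinj hpairs hcand hφnot hdisj hsub hsize
    have hiex : (Eᶜ : Finset (Fin k)).Nonempty := by
      rw [← Finset.card_pos, Finset.card_compl]
      simp only [Fintype.card_fin]; omega
    obtain ⟨i, hi⟩ := hiex
    have hiE : i ∉ E := by simpa using hi
    set J : Finset (Fin k) := Eᶜ.erase i with hJ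
    have hJcard : J.card = d := by
      rw [hJ, Finset.card_erase_of_mem hi, Finset.card_compl]
      simp only [Fintype.card_fin]; omega
    have hJmem : ∀ j ∈ J, j ∉ E ∧ j ≠ i := by
      intro j hj
      rw [hJ, Finset.mem_erase, Finset.mem_compl] at hj
      exact ⟨hj.2, hj.1⟩
    -- bad sets
    set bad : Fin k → Finset (Fin n) := fun j =>
      if H.Adj i j then
        (C i).filter (fun v => ((((C j).filter (fun u => G.Adj v u)).card : ℝ) < ε₁ * (C j).card))
      else
        (C i).filter (fun v => ((((C j).filter (fun u => ¬ G.Adj v u)).card : ℝ) < ε₂ * (C j).card))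
      with hbad
    have hbadsub : ∀ j, bad j ⊆ C i := by
      intro j; rw [hbad]; dsimp only; split_ifs <;> exact Finset.filter_subset _ _
    have hCipos : (0:ℝ) < ((C i).card : ℝ) :=
      lt_of_lt_of_le (by positivity) (hsize i hiE)
    have hEk : E.card ≤ k := by omega
    have hpowk : M * (ε₁ * ε₂) ^ k ≤ M * (ε₁ * ε₂) ^ E.card := by
      apply mul_le_mul_of_nonneg_left _ hM.le
      exact pow_le_pow_of_le_one hεε.le hεε' hEk
    by_cases hA : ∃ j ∈ J, ((C i).card : ℝ) / k ≤ ((bad j).card : ℝ)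
    · obtain ⟨j, hjJ, hjbig⟩ := hA
      obtain ⟨hjE, hjne⟩ := hJmem j hjJ
      refine ⟨bad j, C j, (hbadsub j).trans (hsub i hiE), hsub j hjE, ?_, ?_, ?_, ?_⟩
      · exact Finset.disjoint_of_subset_left (hbadsub j)
          (hdisj i hiE j hjE (Ne.symm hjne))
      · have hkn : 0 < k := by omega
        have hk0 : (0:ℝ) < (k:ℝ) := by exact_mod_cast hkn
        calc M * (ε₁ * ε₂) ^ k / k ≤ ((C i).card : ℝ) / k :=
              (div_le_div_iff_of_pos_right hk0).mpr (le_trans hpowk (hsize i hiE))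
            _ ≤ _ := hjbig
      · exact le_trans hpowk (hsize j hjE)
      · by_cases hadj : H.Adj i j
        · left
          intro v hv
          rw [hbad] at hv; simp only [hadj, if_pos] at hv
          exact (Finset.mem_filter.mp hv).2
        · right
          intro v hv
          rw [hbad] at hv; simp only [hadj, if_neg, if_false] at hv
          have h2 := (Finset.mem_filter.mp hv).2
          have h3 : ((C j).filter (fun u => ¬ G.Adj v u)).card
              + ((C j).filter (fun u => G.Adj v u)).card = (C j).card := by
            rw [add_comm]
            exact Finset.card_filter_add_card_filter_not _
          have h4 : (((C j).filter (fun u => G.Adj v u)).card : ℝ)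
              = ((C j).card : ℝ) - (((C j).filter (fun u => ¬ G.Adj v u)).card : ℝ) := by
            push_cast [← h3]; ring
          rw [h4]
          have hcast : (0:ℝ) ≤ ((C j).card : ℝ) := Nat.cast_nonneg _
          nlinarith
    · push_neg at hA
      -- find a good vertex
      have hgood : (C i \ J.biUnion bad).Nonempty := by
        rw [← Finset.card_pos]
        by_contra hcon
        push_neg at hcon
        have hsubCi : C i ⊆ J.biUnion bad := by
          rw [← Finset.sdiff_eq_empty_iff_subset]
          exact Finset.card_eq_zero.mp (by omega)
        have h1 : ((C i).card : ℝ) ≤ ((J.biUnion bad).card : ℝ) := by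
          exact_mod_cast Finset.card_le_card hsubCi
        have h2 : ((J.biUnion bad).card : ℝ) ≤ ∑ j ∈ J, ((bad j).card : ℝ) := by
          exact_mod_cast Finset.card_biUnion_le
        have h3 : ∑ j ∈ J, ((bad j).card : ℝ) < ((C i).card : ℝ) := by
          rcases J.eq_empty_or_nonempty with hJe | hJne
          · simp only [hJe, Finset.sum_empty]; exact hCipos
          · have h4 : ∑ j ∈ J, ((bad j).card : ℝ) < ∑ _j ∈ J, ((C i).card : ℝ) / k :=
              Finset.sum_lt_sum_of_nonempty hJne (fun j hj => hA j hj)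
            have h5 : ∑ _j ∈ J, ((C i).card : ℝ) / k = J.card * (((C i).card : ℝ) / k) := by
              simp [Finset.sum_const, mul_comm]
            have hdk : (J.card : ℝ) ≤ (k : ℝ) := by
              exact_mod_cast Finset.card_le_card (Finset.subset_univ J) |>.trans (by simp)
            have hk0 : (0:ℝ) < (k:ℝ) := by
              have : 0 < k := by omega
              exact_mod_cast this
            calc ∑ j ∈ J, ((bad j).card : ℝ) < J.card * (((C i).card : ℝ) / k) := by
                  rw [← h5]; exact h4
              _ ≤ (k : ℝ) * (((C i).card : ℝ) / k) := by
                  apply mul_le_mul_of_nonneg_right hdk (by positivity)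
              _ = ((C i).card : ℝ) := by field_simp
        linarith
      obtain ⟨v, hv⟩ := hgood
      rw [Finset.mem_sdiff] at hv
      obtain ⟨hvCi, hvbad⟩ := hv
      have hvgood : ∀ j ∈ J, v ∉ bad j := by
        intro j hj hcon
        exact hvbad (Finset.mem_biUnion.mpr ⟨j, hj, hcon⟩)
      set E' := insert i E with hE'
      set φ' := Function.update φ i v with hφ'
      set C' : Fin k → Finset (Fin n) := fun j =>
        if H.Adj i j then (C j).filter (fun u => G.Adj v u)
        else (C j).filter (fun u => ¬ G.Adj v u) with hC'
      have hφ'i : φ' i = v := Function.update_self i v φ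
      have hφ'a : ∀ a ∈ E, φ' a = φ a := by
        intro a ha
        have hane : a ≠ i := by rintro rfl; exact hiE ha
        exact Function.update_of_ne hane v φ
      have hC'sub : ∀ j, C' j ⊆ C j := by
        intro j; rw [hC']; dsimp only; split_ifs <;> exact Finset.filter_subset _ _
      have hvne : ∀ a ∈ E, φ a ≠ v := by
        intro a ha hc
        exact hφnot i hiE a ha (hc ▸ hvCi)
      have hmemE' : ∀ j, j ∉ E' → j ∉ E ∧ j ≠ i := by
        intro j hj
        rw [hE', Finset.mem_insert] at hj
        push_neg at hj
        exact ⟨hj.2, hj.1⟩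
      -- apply ih
      apply ih E' φ' C'
      · rw [hE', Finset.card_insert_of_notMem hiE]; omega
      · -- InjOn
        intro a ha b hb hab
        simp only [hE', Finset.coe_insert, Set.mem_insert_iff, Finset.mem_coe] at ha hb
        rcases ha with hai | ha <;> rcases hb with hbi | hb
        · rw [hai, hbi]
        · rw [hai, hφ'i] at hab; rw [hφ'a b hb] at hab
          rw [hai]; exact absurd hab.symm (hvne b hb)
        · rw [hbi, hφ'i] at hab; rw [hφ'a a ha] at hab
          rw [hbi]; exact absurd hab (hvne a ha)
        · rw [hφ'a a ha, hφ'a b hb] at hab; exact hinj ha hb hab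
      · -- pairs
        intro a ha b hb hab
        simp only [hE', Finset.mem_insert] at ha hb
        rcases ha with hai | ha <;> rcases hb with hbi | hb
        · exact absurd (hai.trans hbi.symm) hab
        · rw [hai, hφ'i, hφ'a b hb, G.adj_comm, H.adj_comm]
          exact hcand i hiE b hb v hvCi
        · rw [hbi, hφ'i, hφ'a a ha]
          exact hcand i hiE a ha v hvCi
        · rw [hφ'a a ha, hφ'a b hb]
          exact hpairs a ha b hb hab
      · -- candidate adjacency
        intro j hj a ha u hu
        obtain ⟨hjE, hjne⟩ := hmemE' j hj
        simp only [hE', Finset.mem_insert] at ha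
        rcases ha with hai | ha
        · rw [hai, hφ'i]
          rw [hC'] at hu; dsimp only at hu
          by_cases hadj : H.Adj i j
          · rw [if_pos hadj] at hu
            simp only [Finset.mem_filter] at hu
            exact iff_of_true hu.2 hadj
          · rw [if_neg hadj] at hu
            simp only [Finset.mem_filter] at hu
            exact iff_of_false hu.2 hadj
        · rw [hφ'a a ha]
          exact hcand j hjE a ha u (hC'sub j hu)
      · -- φ' a ∉ C' j
        intro j hj a ha
        obtain ⟨hjE, hjne⟩ := hmemE' j hj
        simp only [hE', Finset.mem_insert] at ha
        rcases ha with hai | ha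
        · rw [hai, hφ'i]
          intro hc
          exact (Finset.disjoint_left.mp (hdisj i hiE j hjE (Ne.symm hjne))) hvCi (hC'sub j hc)
        · rw [hφ'a a ha]
          intro hc
          exact hφnot j hjE a ha (hC'sub j hc)
      · -- disjoint
        intro j₁ hj₁ j₂ hj₂ hne
        exact Finset.disjoint_of_subset_left (hC'sub j₁)
          (Finset.disjoint_of_subset_right (hC'sub j₂)
            (hdisj j₁ (hmemE' j₁ hj₁).1 j₂ (hmemE' j₂ hj₂).1 hne))
      · intro j hj
        exact (hC'sub j).trans (hsub j (hmemE' j hj).1)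
      · -- sizes
        intro j hj
        obtain ⟨hjE, hjne⟩ := hmemE' j hj
        have hjJ : j ∈ J := by
          rw [hJ, Finset.mem_erase, Finset.mem_compl]
          exact ⟨hjne, hjE⟩
        have hvj := hvgood j hjJ
        have hE'card : E'.card = E.card + 1 := Finset.card_insert_of_notMem hiE
        rw [hE'card, pow_succ, ← mul_assoc]
        have hCj := hsize j hjE
        have hCjpos : (0:ℝ) ≤ ((C j).card : ℝ) := Nat.cast_nonneg _
        rw [hC']; dsimp only
        by_cases hadj : H.Adj i j
        · rw [if_pos hadj]
          rw [hbad] at hvj; simp only [hadj, if_pos] at hvj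
          have : ¬ ((((C j).filter (fun u => G.Adj v u)).card : ℝ) < ε₁ * (C j).card) := by
            intro hc
            exact hvj (Finset.mem_filter.mpr ⟨hvCi, hc⟩)
          push_neg at this
          calc M * (ε₁ * ε₂) ^ E.card * (ε₁ * ε₂)
              ≤ ((C j).card : ℝ) * (ε₁ * ε₂) := by
                apply mul_le_mul_of_nonneg_right hCj hεε.le
            _ ≤ ((C j).card : ℝ) * ε₁ := by
                apply mul_le_mul_of_nonneg_left _ hCjpos
                nlinarith
            _ = ε₁ * ((C j).card : ℝ) := by ring
            _ ≤ _ := this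
        · rw [if_neg hadj]
          rw [hbad] at hvj; simp only [hadj, if_neg, if_false] at hvj
          have : ¬ ((((C j).filter (fun u => ¬ G.Adj v u)).card : ℝ) < ε₂ * (C j).card) := by
            intro hc
            exact hvj (Finset.mem_filter.mpr ⟨hvCi, hc⟩)
          push_neg at this
          calc M * (ε₁ * ε₂) ^ E.card * (ε₁ * ε₂)
              ≤ ((C j).card : ℝ) * (ε₁ * ε₂) := by
                apply mul_le_mul_of_nonneg_right hCj hεε.le
            _ ≤ ((C j).card : ℝ) * ε₂ := by
                apply mul_le_mul_of_nonneg_left _ hCjpos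
                nlinarith
            _ = ε₂ * ((C j).card : ℝ) := by ring
            _ ≤ _ := this


lemma key {n k : ℕ} (G : SimpleGraph (Fin n)) (H : SimpleGraph (Fin k)) (hk : 1 ≤ k)
    (hHf : ¬ Nonempty (H ↪g G)) (U : Finset (Fin n)) (hU : 2 * k ≤ U.card)
    (ε₁ ε₂ : ℝ) (hε₁ : 0 < ε₁) (hε₁' : ε₁ ≤ 1) (hε₂ : 0 < ε₂) (hε₂' : ε₂ ≤ 1)
    (hgr : ∀ (d : ℕ) (E : Finset (Fin k)) (φ : Fin k → Fin n) (C : Fin k → Finset (Fin n)),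
      E.card + d = k →
      Set.InjOn φ E →
      (∀ a ∈ E, ∀ b ∈ E, a ≠ b → (G.Adj (φ a) (φ b) ↔ H.Adj a b)) →
      (∀ j, j ∉ E → ∀ a ∈ E, ∀ v ∈ C j, (G.Adj (φ a) v ↔ H.Adj a j)) →
      (∀ j, j ∉ E → ∀ a ∈ E, φ a ∉ C j) →
      (∀ j₁, j₁ ∉ E → ∀ j₂, j₂ ∉ E → j₁ ≠ j₂ → Disjoint (C j₁) (C j₂)) →
      (∀ j, j ∉ E → C j ⊆ U) →
      (∀ j, j ∉ E → ((U.card : ℝ) / (2 * k)) * (ε₁ * ε₂) ^ E.card ≤ ((C j).card : ℝ)) →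
      ∃ S T : Finset (Fin n), S ⊆ U ∧ T ⊆ U ∧ Disjoint S T ∧
        ((U.card : ℝ) / (2 * k)) * (ε₁ * ε₂) ^ k / k ≤ (S.card : ℝ) ∧
        ((U.card : ℝ) / (2 * k)) * (ε₁ * ε₂) ^ k ≤ (T.card : ℝ) ∧
        ((∀ v ∈ S, ((T.filter (fun u => G.Adj v u)).card : ℝ) < ε₁ * T.card) ∨
         (∀ v ∈ S, (1 - ε₂) * (T.card : ℝ) < ((T.filter (fun u => G.Adj v u)).card : ℝ)))) :
    ∃ S T : Finset (Fin n), S ⊆ U ∧ T ⊆ U ∧ Disjoint S T ∧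
      (ε₁ * ε₂) ^ k * U.card / (2 * k ^ 2) ≤ (S.card : ℝ) ∧
      (ε₁ * ε₂) ^ k * U.card / (2 * k ^ 2) ≤ (T.card : ℝ) ∧
      ((∀ v ∈ S, ((T.filter (fun u => G.Adj v u)).card : ℝ) < ε₁ * T.card) ∨
       (∀ v ∈ S, (1 - ε₂) * (T.card : ℝ) < ((T.filter (fun u => G.Adj v u)).card : ℝ))) := by
  classical
  set u := U.card with hu
  have hk0 : (0:ℝ) < (k:ℝ) := by exact_mod_cast hk
  -- the embedding of Fin u into U
  have hinj : Function.Injective (fun i : Fin u => ((U.orderIsoOfFin rfl i : {x // x ∈ U}) : Fin n)) := by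
    intro a b hab
    exact (U.orderIsoOfFin rfl).injective (Subtype.val_injective hab)
  set emb : Fin u → Fin n := fun i => ((U.orderIsoOfFin rfl i : {x // x ∈ U}) : Fin n) with hemb
  set C : Fin k → Finset (Fin n) := fun j =>
    ((Finset.univ : Finset (Fin u)).filter (fun i : Fin u => i.val % k = j.val)).image emb with hC
  have hCsub : ∀ j, C j ⊆ U := by
    intro j x hx
    rw [hC] at hx
    simp only [Finset.mem_image] at hx
    obtain ⟨i, _, rfl⟩ := hx
    exact (U.orderIsoOfFin rfl i).2
  have hCcard : ∀ j, u / k ≤ (C j).card := by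
    intro j
    rw [hC]
    dsimp only
    rw [Finset.card_image_of_injective _ hinj]
    exact parts hk j
  have hCdisj : ∀ j₁ j₂ : Fin k, j₁ ≠ j₂ → Disjoint (C j₁) (C j₂) := by
    intro j₁ j₂ hne
    rw [Finset.disjoint_left]
    intro x hx₁ hx₂
    rw [hC] at hx₁ hx₂
    simp only [Finset.mem_image, Finset.mem_filter] at hx₁ hx₂
    obtain ⟨i₁, ⟨_, hi₁⟩, hei₁⟩ := hx₁
    obtain ⟨i₂, ⟨_, hi₂⟩, hei₂⟩ := hx₂
    have : i₁ = i₂ := hinj (by rw [hemb] at hei₁ hei₂ ⊢; rw [hei₁, hei₂])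
    subst this
    exact hne (Fin.val_injective (hi₁ ▸ hi₂))
  have hsize0 : ∀ j : Fin k, ((u:ℝ) / (2*k)) * (ε₁*ε₂)^(0:ℕ) ≤ ((C j).card : ℝ) := by
    intro j
    rw [pow_zero, mul_one]
    have h1 : ((u/k : ℕ) : ℝ) ≤ ((C j).card : ℝ) := by exact_mod_cast hCcard j
    refine le_trans ?_ h1
    have hdm := Nat.div_add_mod u k
    have hmlt : u % k < k := Nat.mod_lt u hk
    have h2 : ((k:ℝ) * ((u/k : ℕ):ℝ) + ((u % k : ℕ):ℝ) = (u:ℝ)) := by exact_mod_cast hdm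
    have h3 : ((u % k : ℕ):ℝ) < (k:ℝ) := by exact_mod_cast hmlt
    have h4 : (2*(k:ℝ)) ≤ (u:ℝ) := by exact_mod_cast hU
    have hq : (0:ℝ) ≤ ((u/k : ℕ):ℝ) := Nat.cast_nonneg _
    have hr : (0:ℝ) ≤ ((u % k : ℕ):ℝ) := Nat.cast_nonneg _
    rw [div_le_iff₀ (by positivity)]
    nlinarith
  -- initial φ
  have hn0 : 0 < n := by
    have : U.Nonempty := Finset.card_pos.mp (by omega)
    obtain ⟨v, _⟩ := this
    exact v.pos
  obtain ⟨S, T, hSU, hTU, hST, hScard, hTcard, hcond⟩ :=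
    hgr k ∅ (fun _ => ⟨0, hn0⟩) C (by simp) (by simp)
      (by simp) (by simp) (by simp)
      (fun j₁ _ j₂ _ hne => hCdisj j₁ j₂ hne) (fun j _ => hCsub j)
      (fun j _ => by simpa using hsize0 j)
  refine ⟨S, T, hSU, hTU, hST, ?_, ?_, hcond⟩
  · refine le_trans (le_of_eq ?_) hScard
    field_simp
  · refine le_trans ?_ hTcard
    have hεεk : (0:ℝ) ≤ (ε₁*ε₂)^k := by positivity
    have h5 : (0:ℝ) ≤ (u:ℝ) := Nat.cast_nonneg u
    have h6 : (1:ℝ) ≤ (k:ℝ) := by exact_mod_cast hk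
    calc (ε₁ * ε₂) ^ k * (u:ℝ) / (2 * (k:ℝ) ^ 2) ≤ (ε₁ * ε₂) ^ k * (u:ℝ) / (2 * (k:ℝ)) := by
          apply div_le_div_of_nonneg_left (by positivity) (by positivity)
          nlinarith
      _ = (u:ℝ) / (2 * (k:ℝ)) * (ε₁ * ε₂) ^ k := by ring

lemma log2_ge_one {s : ℕ} (hs : 2 ≤ s) : 1 ≤ Real.logb 2 (s:ℝ) := by
  have h := Real.logb_le_logb_of_le (b := 2) (by norm_num : (1:ℝ) < 2) (by norm_num : (0:ℝ) < 2) (by exact_mod_cast hs : (2:ℝ) ≤ (s:ℝ))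
  rwa [Real.logb_self_eq_one (by norm_num)] at h

lemma rpow_logb_self {s : ℕ} (hs : 1 ≤ s) : (2:ℝ) ^ (Real.logb 2 (s:ℝ)) = (s:ℝ) := by
  apply Real.rpow_logb (by norm_num) (by norm_num)
  exact_mod_cast hs

lemma four_k_sq_le {k : ℕ} : (4 * k^2 : ℝ) ≤ (2:ℝ) ^ ((2*(k:ℝ)+2)) := by
  have h1 : k^2 < 4^k := by
    calc k^2 < (2^k)^2 := by
          have : k < 2 ^ k := Nat.lt_two_pow_self
          exact Nat.pow_lt_pow_left this (by norm_num)
      _ = 4^k := by rw [← pow_mul, show (4:ℕ) = 2^2 from rfl, ← pow_mul, Nat.mul_comm]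
  have h2 : (4 * k^2 : ℕ) ≤ 4 * 4^k := by omega
  have h3 : (4 * 4^k : ℕ) = 2^(2*k+2) := by
    rw [pow_add, show (4:ℕ) = 2^2 from rfl, ← pow_mul, Nat.mul_comm]
  have h4 : ((2:ℕ)^(2*k+2) : ℝ) = (2:ℝ) ^ (((2*k+2 : ℕ)):ℝ) := by
    rw [Real.rpow_natCast]; push_cast; ring
  have h5 : (((2*k+2 : ℕ)):ℝ) = 2*(k:ℝ)+2 := by push_cast; ring
  calc (4 * k^2 : ℝ) ≤ ((2:ℕ)^(2*k+2) : ℝ) := by exact_mod_cast h2.trans_eq h3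
    _ = _ := by rw [h4, h5]

/-- the key arithmetic step for the recursion -/
lemma arith {k s t : ℕ} (hk : 1 ≤ k) (hs : 2 ≤ s) (ht : 2 ≤ t) (X : ℝ)
    (hX : (2:ℝ)^((2*(k:ℝ)+2) * (2 + Real.logb 2 (s:ℝ) + Real.logb 2 (t:ℝ))^2) ≤ X) :
    (2:ℝ)^((2*(k:ℝ)+2) * (2 + Real.logb 2 ((s/2 : ℕ):ℝ) + Real.logb 2 (t:ℝ))^2) ≤
      ((1/(2*(s:ℝ))) * (1/(2*(t:ℝ))))^k * X / (2*(k:ℝ)^2) / 2 := by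
  have hs0 : (0:ℝ) < (s:ℝ) := by exact_mod_cast (by omega : 0 < s)
  have ht0 : (0:ℝ) < (t:ℝ) := by exact_mod_cast (by omega : 0 < t)
  have hk0 : (0:ℝ) < (k:ℝ) := by exact_mod_cast hk
  set x := Real.logb 2 (s:ℝ) with hxdef
  set y := Real.logb 2 (t:ℝ) with hydef
  have hx1 : 1 ≤ x := log2_ge_one hs
  have hy1 : 1 ≤ y := log2_ge_one ht
  set L : ℝ := 2 + x + y with hLdef
  have hL4 : 4 ≤ L := by simp [hLdef]; linarith
  -- bound on logb of s/2
  have hs2 : 1 ≤ s/2 := by omega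
  have hs2R : (1:ℝ) ≤ ((s/2 : ℕ):ℝ) := by exact_mod_cast hs2
  set x' := Real.logb 2 ((s/2 : ℕ):ℝ) with hx'def
  have hx'0 : 0 ≤ x' := Real.logb_nonneg (by norm_num) hs2R
  have hx' : x' ≤ x - 1 := by
    have h1 : ((s/2 : ℕ):ℝ) ≤ (s:ℝ)/2 := by
      have h0 : 2 * (s/2) ≤ s := by omega
      have h2 : ((2 * (s/2) : ℕ) : ℝ) ≤ (s:ℝ) := by exact_mod_cast h0
      push_cast at h2
      linarith
    have h2 : Real.logb 2 ((s/2 : ℕ):ℝ) ≤ Real.logb 2 ((s:ℝ)/2) :=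
      Real.logb_le_logb_of_le (by norm_num : (1:ℝ) < 2) (by positivity) h1
    have h3 : Real.logb 2 ((s:ℝ)/2) = x - 1 := by
      rw [Real.logb_div (by positivity) (by norm_num), Real.logb_self_eq_one (by norm_num)]
    rw [hx'def]
    linarith [h2.trans_eq h3]
  set L' : ℝ := 2 + x' + y with hL'def
  have hL'0 : 0 ≤ L' := by simp [hL'def]; linarith
  have hL' : L' ≤ L - 1 := by simp [hL'def, hLdef]; linarith
  -- epsilon product as power of 2
  have heps : (1/(2*(s:ℝ))) * (1/(2*(t:ℝ))) = (2:ℝ) ^ (-L) := by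
    rw [hLdef]
    have h2s : (2:ℝ) * (s:ℝ) = (2:ℝ) ^ ((1:ℝ) + x) := by
      rw [Real.rpow_add (by norm_num), Real.rpow_one, hxdef, rpow_logb_self (by omega)]
    have h2t : (2:ℝ) * (t:ℝ) = (2:ℝ) ^ ((1:ℝ) + y) := by
      rw [Real.rpow_add (by norm_num), Real.rpow_one, hydef, rpow_logb_self (by omega)]
    rw [h2s, h2t, one_div, one_div, ← Real.rpow_neg (by norm_num),
      ← Real.rpow_neg (by norm_num), ← Real.rpow_add (by norm_num)]
    ring_nf
  have hepsk : ((1/(2*(s:ℝ))) * (1/(2*(t:ℝ))))^k = (2:ℝ) ^ (-(L * k)) := by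
    rw [heps, ← Real.rpow_natCast ((2:ℝ)^(-L)) k, ← Real.rpow_mul (by norm_num)]
    ring_nf
  -- the denominator bound
  have hden : (2*(k:ℝ)^2) * 2 ≤ (2:ℝ) ^ (2*(k:ℝ)+2) := by
    have := four_k_sq_le (k := k)
    linarith
  -- main chain
  have hXpos : (0:ℝ) < X := lt_of_lt_of_le (by positivity) hX
  have step1 : (2:ℝ)^(-(L*(k:ℝ))) * (2:ℝ)^((2*(k:ℝ)+2) * L^2) / ((2:ℝ)^(2*(k:ℝ)+2)) ≤
      ((1/(2*(s:ℝ))) * (1/(2*(t:ℝ))))^k * X / (2*(k:ℝ)^2) / 2 := by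
    rw [hepsk, div_div]
    apply div_le_div₀ (by positivity) ?_ (by positivity) hden
    exact mul_le_mul_of_nonneg_left hX (by positivity)
  have step2 : (2:ℝ)^(-(L*(k:ℝ))) * (2:ℝ)^((2*(k:ℝ)+2) * L^2) / ((2:ℝ)^(2*(k:ℝ)+2))
      = (2:ℝ)^((2*(k:ℝ)+2) * L^2 - L*(k:ℝ) - (2*(k:ℝ)+2)) := by
    rw [← Real.rpow_add (by norm_num), ← Real.rpow_sub (by norm_num)]
    ring_nf
  have step3 : (2*(k:ℝ)+2) * L'^2 ≤ (2*(k:ℝ)+2) * L^2 - L*(k:ℝ) - (2*(k:ℝ)+2) := by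
    have h1 : L'^2 ≤ (L-1)^2 := by nlinarith
    nlinarith
  calc (2:ℝ)^((2*(k:ℝ)+2) * (2 + x' + y)^2)
      ≤ (2:ℝ)^((2*(k:ℝ)+2) * L^2 - L*(k:ℝ) - (2*(k:ℝ)+2)) := by
        apply Real.rpow_le_rpow_of_exponent_le (by norm_num)
        rw [← hL'def]
        exact step3
    _ ≤ _ := by rw [← step2]; exact step1


lemma step {n : ℕ} (G' : SimpleGraph (Fin n)) [DecidableRel G'.Adj] (S T : Finset (Fin n))
    (s : ℕ) (hs0 : 0 < s)
    (hdeg : ∀ v ∈ S, ((T.filter (fun u => G'.Adj v u)).card : ℝ) < (1/(2*(s:ℝ))) * T.card) :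
    ∃ W T'' : Finset (Fin n), W ⊆ S ∧ T'' ⊆ T ∧
      (G'ᶜ).IsClique (W : Set (Fin n)) ∧
      (∀ W' : Finset (Fin n), W' ⊆ S → (G'ᶜ).IsClique (W' : Set (Fin n)) → W'.card ≤ W.card) ∧
      (∀ v ∈ T'', ∀ w ∈ W, ¬ G'.Adj w v) ∧
      (W.card ≤ s → (T.card : ℝ)/2 ≤ (T''.card : ℝ)) := by
  have hsR : (0:ℝ) < (s:ℝ) := by exact_mod_cast hs0
  -- maximal stable set in S
  set P := S.powerset.filter (fun W : Finset (Fin n) => (G'ᶜ).IsClique (W : Set (Fin n))) with hP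
  have hPne : P.Nonempty := ⟨∅, by simp [hP]⟩
  obtain ⟨W, hWP, hWmax⟩ := P.exists_max_image (fun W => W.card) hPne
  rw [hP, Finset.mem_filter, Finset.mem_powerset] at hWP
  obtain ⟨hWS, hWstab⟩ := hWP
  set T'' := T.filter (fun v => ∀ w ∈ W, ¬ G'.Adj w v) with hT''
  refine ⟨W, T'', hWS, Finset.filter_subset _ _, hWstab, ?_, ?_, ?_⟩
  · intro W' hW'S hW'stab
    exact hWmax W' (by rw [hP, Finset.mem_filter, Finset.mem_powerset]; exact ⟨hW'S, hW'stab⟩)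
  · intro v hv w hw
    rw [hT'', Finset.mem_filter] at hv
    exact hv.2 w hw
  · intro hWs
    set B := W.biUnion (fun w => T.filter (fun u => G'.Adj w u)) with hB
    have hsub : T \ B ⊆ T'' := by
      intro v hv
      rw [Finset.mem_sdiff] at hv
      rw [hT'', Finset.mem_filter]
      refine ⟨hv.1, fun w hw hadj => ?_⟩
      exact hv.2 (Finset.mem_biUnion.mpr ⟨w, hw, Finset.mem_filter.mpr ⟨hv.1, hadj⟩⟩)
    have h1 : T.card ≤ (T \ B).card + B.card := by
      have := Finset.card_le_card_sdiff_add_card (s := T) (t := B)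
      omega
    have h2 : ((B.card : ℝ)) ≤ ∑ w ∈ W, ((T.filter (fun u => G'.Adj w u)).card : ℝ) := by
      rw [hB]
      exact_mod_cast Finset.card_biUnion_le
    have h3 : ∑ w ∈ W, ((T.filter (fun u => G'.Adj w u)).card : ℝ)
        ≤ W.card * ((1/(2*(s:ℝ))) * T.card) := by
      have := Finset.sum_le_card_nsmul W (fun w => ((T.filter (fun u => G'.Adj w u)).card : ℝ))
        ((1/(2*(s:ℝ))) * T.card) (fun w hw => (hdeg w (hWS hw)).le)
      simpa [nsmul_eq_mul] using this
    have h4 : ((W.card : ℝ)) ≤ (s:ℝ) := by exact_mod_cast hWs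
    have h5 : ((T''.card : ℝ)) ≥ ((T \ B).card : ℝ) := by
      exact_mod_cast Finset.card_le_card hsub
    have h6 : (((T \ B).card : ℝ)) ≥ (T.card : ℝ) - B.card := by
      have := h1
      push_cast
      have h7 : ((T.card : ℕ) : ℝ) ≤ (((T \ B).card : ℕ) : ℝ) + ((B.card : ℕ) : ℝ) := by
        exact_mod_cast h1
      linarith
    have hTn : (0:ℝ) ≤ (T.card : ℝ) := Nat.cast_nonneg _
    have hc : ((W.card : ℝ)) * ((1/(2*(s:ℝ))) * T.card) ≤ (T.card : ℝ)/2 := by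
      rw [div_mul_eq_mul_div, one_mul, ← mul_div_assoc,
        div_le_div_iff₀ (by positivity) (by norm_num)]
      nlinarith
    linarith

lemma two_k_le_rpow {k : ℕ} (hk : 1 ≤ k) {E : ℝ} (hE : (k:ℝ)+1 ≤ E) :
    2*(k:ℝ) ≤ (2:ℝ)^E := by
  have h1 : (2*k : ℕ) ≤ 2^(k+1) := by
    have : k < 2 ^ k := Nat.lt_two_pow_self
    have h2 : 2^(k+1) = 2 * 2^k := by rw [pow_succ, Nat.mul_comm]
    omega
  have h2 : ((2^(k+1) : ℕ) : ℝ) = (2:ℝ)^(((k+1:ℕ)):ℝ) := by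
    rw [Real.rpow_natCast]; push_cast; ring
  calc 2*(k:ℝ) ≤ ((2^(k+1) : ℕ) : ℝ) := by exact_mod_cast h1
    _ = (2:ℝ)^(((k+1:ℕ)):ℝ) := h2
    _ ≤ (2:ℝ)^E := by
        apply Real.rpow_le_rpow_of_exponent_le (by norm_num)
        push_cast; linarith

lemma pair_clique {n : ℕ} {G : SimpleGraph (Fin n)} {a b : Fin n} (h : G.Adj a b) :
    G.IsClique (({a, b} : Finset (Fin n)) : Set (Fin n)) := by
  rw [SimpleGraph.isClique_iff]
  have : (({a, b} : Finset (Fin n)) : Set (Fin n)) = {a, b} := by simp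
  rw [this]
  exact Set.pairwise_pair.mpr (fun _ => ⟨h, h.symm⟩)

lemma assembly {n k : ℕ} (G : SimpleGraph (Fin n)) (hk : 1 ≤ k)
    (hkey : ∀ U : Finset (Fin n), 2 * k ≤ U.card → ∀ ε₁ ε₂ : ℝ,
      0 < ε₁ → ε₁ ≤ 1 → 0 < ε₂ → ε₂ ≤ 1 →
      ∃ S T : Finset (Fin n), S ⊆ U ∧ T ⊆ U ∧ Disjoint S T ∧
        (ε₁ * ε₂) ^ k * U.card / (2 * (k:ℝ) ^ 2) ≤ (S.card : ℝ) ∧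
        (ε₁ * ε₂) ^ k * U.card / (2 * (k:ℝ) ^ 2) ≤ (T.card : ℝ) ∧
        ((∀ v ∈ S, ((T.filter (fun u => G.Adj v u)).card : ℝ) < ε₁ * T.card) ∨
         (∀ v ∈ S, (1 - ε₂) * (T.card : ℝ) < ((T.filter (fun u => G.Adj v u)).card : ℝ)))) :
    ∀ (m s t : ℕ), 1 ≤ s → 1 ≤ t → s + t ≤ m → ∀ U : Finset (Fin n),
      (2:ℝ) ^ ((2*(k:ℝ)+2) * (2 + Real.logb 2 (s:ℝ) + Real.logb 2 (t:ℝ))^2) ≤ (U.card : ℝ) →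
      ∃ W : Finset (Fin n), W ⊆ U ∧
        ((G.IsClique (W : Set (Fin n)) ∧ t < W.card) ∨
         ((Gᶜ).IsClique (W : Set (Fin n)) ∧ s < W.card)) := by
  intro m
  induction m with
  | zero => intro s t hs ht hst; omega
  | succ m ih =>
    intro s t hs ht hst U hU
    have hx0 : 0 ≤ Real.logb 2 (s:ℝ) := Real.logb_nonneg (by norm_num) (by exact_mod_cast hs)
    have hy0 : 0 ≤ Real.logb 2 (t:ℝ) := Real.logb_nonneg (by norm_num) (by exact_mod_cast ht)
    have hk1 : (1:ℝ) ≤ (k:ℝ) := by exact_mod_cast hk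
    have hUcard : (2*k : ℕ) ≤ U.card := by
      have h1 : 2*(k:ℝ) ≤ (U.card : ℝ) := by
        refine le_trans (two_k_le_rpow hk ?_) hU
        have hLsq : (4:ℝ) ≤ (2 + Real.logb 2 (s:ℝ) + Real.logb 2 (t:ℝ))^2 := by nlinarith
        have h2 : (2*(k:ℝ)+2)*4 ≤ (2*(k:ℝ)+2) * (2 + Real.logb 2 (s:ℝ) + Real.logb 2 (t:ℝ))^2 :=
          mul_le_mul_of_nonneg_left hLsq (by linarith)
        linarith
      exact_mod_cast h1
    -- base case t = 1
    by_cases ht1 : t = 1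
    · subst ht1
      by_cases hpair : ∃ a ∈ U, ∃ b ∈ U, G.Adj a b
      · obtain ⟨a, ha, b, hb, hab⟩ := hpair
        refine ⟨{a, b}, ?_, Or.inl ⟨pair_clique hab, ?_⟩⟩
        · intro x hx
          simp only [Finset.mem_insert, Finset.mem_singleton] at hx
          rcases hx with rfl | rfl <;> assumption
        · rw [Finset.card_pair hab.ne]; norm_num
      · push_neg at hpair
        refine ⟨U, le_refl U, Or.inr ⟨?_, ?_⟩⟩
        · intro x hx y hy hne
          rw [SimpleGraph.compl_adj]
          exact ⟨hne, hpair x hx y hy⟩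
        · have h2 : (s:ℝ) < (U.card : ℝ) := by
            have h3 : (s:ℝ) = (2:ℝ) ^ (Real.logb 2 (s:ℝ)) :=
              (Real.rpow_logb (by norm_num) (by norm_num) (by exact_mod_cast hs)).symm
            have h4 : Real.logb 2 ((1:ℕ):ℝ) = 0 := by norm_num
            rw [h4] at hU
            have h5 : Real.logb 2 (s:ℝ) < (2*(k:ℝ)+2) * (2 + Real.logb 2 (s:ℝ) + 0)^2 := by
              nlinarith
            calc (s:ℝ) = (2:ℝ) ^ (Real.logb 2 (s:ℝ)) := h3
              _ < (2:ℝ) ^ ((2*(k:ℝ)+2) * (2 + Real.logb 2 (s:ℝ) + 0)^2) := by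
                  exact Real.rpow_lt_rpow_of_exponent_lt (by norm_num) h5
              _ ≤ (U.card : ℝ) := hU
          exact_mod_cast h2
    -- base case s = 1
    by_cases hs1 : s = 1
    · subst hs1
      by_cases hpair : ∃ a ∈ U, ∃ b ∈ U, a ≠ b ∧ ¬ G.Adj a b
      · obtain ⟨a, ha, b, hb, hne, hab⟩ := hpair
        have hcadj : (Gᶜ).Adj a b := by rw [SimpleGraph.compl_adj]; exact ⟨hne, hab⟩
        refine ⟨{a, b}, ?_, Or.inr ⟨pair_clique hcadj, ?_⟩⟩
        · intro x hx
          simp only [Finset.mem_insert, Finset.mem_singleton] at hx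
          rcases hx with rfl | rfl <;> assumption
        · rw [Finset.card_pair hne]; norm_num
      · push_neg at hpair
        refine ⟨U, le_refl U, Or.inl ⟨?_, ?_⟩⟩
        · intro x hx y hy hne
          exact hpair x hx y hy hne
        · have h2 : (t:ℝ) < (U.card : ℝ) := by
            have h3 : (t:ℝ) = (2:ℝ) ^ (Real.logb 2 (t:ℝ)) :=
              (Real.rpow_logb (by norm_num) (by norm_num) (by exact_mod_cast ht)).symm
            have h4 : Real.logb 2 ((1:ℕ):ℝ) = 0 := by norm_num
            rw [h4] at hU
            have h5 : Real.logb 2 (t:ℝ) < (2*(k:ℝ)+2) * (2 + 0 + Real.logb 2 (t:ℝ))^2 := by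
              nlinarith
            calc (t:ℝ) = (2:ℝ) ^ (Real.logb 2 (t:ℝ)) := h3
              _ < (2:ℝ) ^ ((2*(k:ℝ)+2) * (2 + 0 + Real.logb 2 (t:ℝ))^2) := by
                  exact Real.rpow_lt_rpow_of_exponent_lt (by norm_num) h5
              _ ≤ (U.card : ℝ) := hU
          exact_mod_cast h2
    -- main case
    have hs2 : 2 ≤ s := by omega
    have ht2 : 2 ≤ t := by omega
    have hsR : (1:ℝ) ≤ (s:ℝ) := by exact_mod_cast hs
    have htR : (1:ℝ) ≤ (t:ℝ) := by exact_mod_cast ht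
    obtain ⟨S, T, hSU, hTU, hST, hScard, hTcard, hcond⟩ :=
      hkey U hUcard (1/(2*(s:ℝ))) (1/(2*(t:ℝ)))
        (by positivity) (by rw [div_le_one (by positivity)]; linarith)
        (by positivity) (by rw [div_le_one (by positivity)]; linarith)
    rcases hcond with hsparse | hdense
    · -- SPARSE case : recurse with stable sets
      obtain ⟨W, T'', hWS, hT''T, hWstab, hWmax, hcross, hT''big⟩ :=
        step G S T s (by omega) hsparse
      by_cases hWbig : s < W.card
      · exact ⟨W, hWS.trans hSU, Or.inr ⟨hWstab, hWbig⟩⟩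
      push_neg at hWbig
      have hT''card := hT''big hWbig
      have harith := arith (s := s) (t := t) hk hs2 ht2 (U.card : ℝ) hU
      have hs' : 1 ≤ s/2 := by omega
      have hstm : s/2 + t ≤ m := by omega
      by_cases hcase : s ≤ 2 * W.card
      · -- recurse on T''
        have hT''size : (2:ℝ) ^ ((2*(k:ℝ)+2) *
            (2 + Real.logb 2 ((s/2:ℕ):ℝ) + Real.logb 2 (t:ℝ))^2) ≤ (T''.card : ℝ) := by
          refine le_trans harith (le_trans ?_ hT''card)
          linarith
        obtain ⟨W', hW'T'', hW'⟩ := ih (s/2) t hs' ht hstm T'' hT''size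
        rcases hW' with ⟨hcl, hclcard⟩ | ⟨hst, hstcard⟩
        · exact ⟨W', hW'T''.trans (hT''T.trans hTU), Or.inl ⟨hcl, hclcard⟩⟩
        · have hW'T : W' ⊆ T := hW'T''.trans hT''T
          have hdisjWW' : Disjoint W W' :=
            Finset.disjoint_of_subset_left hWS (Finset.disjoint_of_subset_right hW'T hST)
          have hstable : (Gᶜ).IsClique ((W ∪ W' : Finset (Fin n)) : Set (Fin n)) := by
            rw [SimpleGraph.isClique_iff]
            intro x hx y hy hne
            rw [Finset.coe_union, Set.mem_union] at hx hy
            rcases hx with hx | hx <;> rcases hy with hy | hy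
            · exact hWstab hx hy hne
            · rw [SimpleGraph.compl_adj]
              exact ⟨hne, fun hadj => hcross y (hW'T'' hy) x hx hadj⟩
            · rw [SimpleGraph.compl_adj]
              exact ⟨hne, fun hadj => hcross x (hW'T'' hx) y hy hadj.symm⟩
            · exact hst hx hy hne
          refine ⟨W ∪ W', Finset.union_subset (hWS.trans hSU) (hW'T.trans hTU),
            Or.inr ⟨hstable, ?_⟩⟩
          rw [Finset.card_union_of_disjoint hdisjWW']
          omega
      · -- recurse on S : contradiction with maximality
        push_neg at hcase
        have hSsize : (2:ℝ) ^ ((2*(k:ℝ)+2) *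
            (2 + Real.logb 2 ((s/2:ℕ):ℝ) + Real.logb 2 (t:ℝ))^2) ≤ (S.card : ℝ) := by
          refine le_trans harith (le_trans ?_ hScard)
          have h0 : (0:ℝ) ≤ ((1/(2*(s:ℝ))) * (1/(2*(t:ℝ))))^k * (U.card:ℝ) / (2*(k:ℝ)^2) := by
            positivity
          linarith
        obtain ⟨W', hW'S, hW'⟩ := ih (s/2) t hs' ht hstm S hSsize
        rcases hW' with ⟨hcl, hclcard⟩ | ⟨hst, hstcard⟩
        · exact ⟨W', hW'S.trans hSU, Or.inl ⟨hcl, hclcard⟩⟩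
        · exact absurd (hWmax W' hW'S hst) (by omega)
    · -- DENSE case : recurse with cliques, working in Gᶜ
      have hdeg2 : ∀ v ∈ S, ((T.filter (fun u => (Gᶜ).Adj v u)).card : ℝ)
          < (1/(2*(t:ℝ))) * T.card := by
        intro v hv
        have hfe : T.filter (fun u => (Gᶜ).Adj v u) = T.filter (fun u => ¬ G.Adj v u) := by
          apply Finset.filter_congr
          intro u hu
          rw [SimpleGraph.compl_adj]
          have hvu : v ≠ u := by
            intro hvu
            exact (Finset.disjoint_left.mp hST hv) (hvu ▸ hu)
          simp [hvu]
        have hsplit : (T.filter (fun u => G.Adj v u)).card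
            + (T.filter (fun u => ¬ G.Adj v u)).card = T.card :=
          Finset.card_filter_add_card_filter_not _
        have hd := hdense v hv
        have hcast : ((T.filter (fun u => ¬ G.Adj v u)).card : ℝ)
            = (T.card : ℝ) - ((T.filter (fun u => G.Adj v u)).card : ℝ) := by
          push_cast [← hsplit]; ring
        rw [hfe, hcast]
        have hTn : (0:ℝ) ≤ (T.card:ℝ) := Nat.cast_nonneg _
        nlinarith
      obtain ⟨W, T'', hWS, hT''T, hWstab, hWmax, hcross, hT''big⟩ :=
        step (Gᶜ) S T t (by omega) hdeg2
      rw [compl_compl] at hWstab hWmax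
      by_cases hWbig : t < W.card
      · exact ⟨W, hWS.trans hSU, Or.inl ⟨hWstab, hWbig⟩⟩
      push_neg at hWbig
      have hT''card := hT''big hWbig
      have harith0 := arith (s := t) (t := s) hk ht2 hs2 (U.card : ℝ)
        (by
          refine le_trans (le_of_eq ?_) hU
          congr 1
          ring)
      have harith : (2:ℝ) ^ ((2*(k:ℝ)+2) *
          (2 + Real.logb 2 (s:ℝ) + Real.logb 2 ((t/2:ℕ):ℝ))^2) ≤
          ((1/(2*(s:ℝ))) * (1/(2*(t:ℝ))))^k * (U.card:ℝ) / (2*(k:ℝ)^2) / 2 := by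
        refine le_trans (le_of_eq ?_) (le_trans harith0 (le_of_eq ?_))
        · congr 1; ring
        · congr 2; ring
      have ht' : 1 ≤ t/2 := by omega
      have hstm : s + t/2 ≤ m := by omega
      by_cases hcase : t ≤ 2 * W.card
      · -- recurse on T''
        have hT''size : (2:ℝ) ^ ((2*(k:ℝ)+2) *
            (2 + Real.logb 2 (s:ℝ) + Real.logb 2 ((t/2:ℕ):ℝ))^2) ≤ (T''.card : ℝ) := by
          refine le_trans harith (le_trans ?_ hT''card)
          linarith
        obtain ⟨W', hW'T'', hW'⟩ := ih s (t/2) hs ht' hstm T'' hT''size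
        rcases hW' with ⟨hcl, hclcard⟩ | ⟨hst, hstcard⟩
        · have hW'T : W' ⊆ T := hW'T''.trans hT''T
          have hdisjWW' : Disjoint W W' :=
            Finset.disjoint_of_subset_left hWS (Finset.disjoint_of_subset_right hW'T hST)
          have hclU : G.IsClique ((W ∪ W' : Finset (Fin n)) : Set (Fin n)) := by
            rw [SimpleGraph.isClique_iff]
            intro x hx y hy hne
            rw [Finset.coe_union, Set.mem_union] at hx hy
            rcases hx with hx | hx <;> rcases hy with hy | hy
            · exact hWstab hx hy hne
            · -- x ∈ W, y ∈ W' ⊆ T'': from ¬ Gᶜ.Adj x y get G.Adj x y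
              have h1 := hcross y (hW'T'' hy) x hx
              rw [SimpleGraph.compl_adj] at h1
              push_neg at h1
              exact h1 hne
            · have h1 := hcross x (hW'T'' hx) y hy
              rw [SimpleGraph.compl_adj] at h1
              push_neg at h1
              have hne' : y ≠ x := hne.symm
              exact (h1 hne').symm
            · exact hcl hx hy hne
          refine ⟨W ∪ W', Finset.union_subset (hWS.trans hSU) ((hW'T''.trans hT''T).trans hTU),
            Or.inl ⟨hclU, ?_⟩⟩
          rw [Finset.card_union_of_disjoint hdisjWW']
          omega
        · exact ⟨W', hW'T''.trans (hT''T.trans hTU), Or.inr ⟨hst, hstcard⟩⟩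
      · -- recurse on S : contradiction with maximality
        push_neg at hcase
        have hSsize : (2:ℝ) ^ ((2*(k:ℝ)+2) *
            (2 + Real.logb 2 (s:ℝ) + Real.logb 2 ((t/2:ℕ):ℝ))^2) ≤ (S.card : ℝ) := by
          refine le_trans harith (le_trans ?_ hScard)
          have h0 : (0:ℝ) ≤ ((1/(2*(s:ℝ))) * (1/(2*(t:ℝ))))^k * (U.card:ℝ) / (2*(k:ℝ)^2) := by
            positivity
          linarith
        obtain ⟨W', hW'S, hW'⟩ := ih s (t/2) hs ht' hstm S hSsize
        rcases hW' with ⟨hcl, hclcard⟩ | ⟨hst, hstcard⟩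
        · exact absurd (hWmax W' hW'S hcl) (by omega)
        · exact ⟨W', hW'S.trans hSU, Or.inr ⟨hst, hstcard⟩⟩


end EH

open EH in
/-- For every graph `H` there is `c > 0` such that every `H`-free graph `G` on `n > 0`
vertices satisfies `max (α G) (ω G) ≥ 2 ^ (c√(log n))` (logs base 2). -/
theorem erdos_hajnal_general_bound (h : ℕ) (H : SimpleGraph (Fin h)) :
    ∃ c : ℝ, 0 < c ∧
      ∀ (n : ℕ) (G : SimpleGraph (Fin n)), 0 < n → ¬ Nonempty (H ↪g G) →
        (2 : ℝ) ^ (c * Real.sqrt (Real.logb 2 n)) ≤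
          (max (Gᶜ.cliqueNum) (G.cliqueNum) : ℝ) := by
  rcases Nat.eq_zero_or_pos h with rfl | hk
  · -- h = 0 : hypothesis is contradictory
    refine ⟨1, by norm_num, fun n G hn hfree => ?_⟩
    exact absurd ⟨⟨⟨Fin.elim0, fun a => a.elim0⟩, fun {a b} => a.elim0⟩⟩ hfree
  · have hkR : (0:ℝ) < 2*(h:ℝ)+2 := by
      have : (1:ℝ) ≤ (h:ℝ) := by exact_mod_cast hk
      linarith
    refine ⟨1/(4*Real.sqrt (2*(h:ℝ)+2)), by positivity, fun n G hn hfree => ?_⟩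
    set c := 1/(4*Real.sqrt (2*(h:ℝ)+2)) with hc
    have hkey : ∀ U : Finset (Fin n), 2 * h ≤ U.card → ∀ ε₁ ε₂ : ℝ,
        0 < ε₁ → ε₁ ≤ 1 → 0 < ε₂ → ε₂ ≤ 1 →
        ∃ S T : Finset (Fin n), S ⊆ U ∧ T ⊆ U ∧ Disjoint S T ∧
          (ε₁ * ε₂) ^ h * U.card / (2 * (h:ℝ) ^ 2) ≤ (S.card : ℝ) ∧
          (ε₁ * ε₂) ^ h * U.card / (2 * (h:ℝ) ^ 2) ≤ (T.card : ℝ) ∧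
          ((∀ v ∈ S, ((T.filter (fun u => G.Adj v u)).card : ℝ) < ε₁ * T.card) ∨
           (∀ v ∈ S, (1 - ε₂) * (T.card : ℝ) < ((T.filter (fun u => G.Adj v u)).card : ℝ))) := by
      intro U hU ε₁ ε₂ h1 h2 h3 h4
      have hMpos : (0:ℝ) < (U.card : ℝ) / (2 * (h:ℝ)) := by
        have hhR : (1:ℝ) ≤ (h:ℝ) := by exact_mod_cast hk
        apply div_pos
        · have : 0 < U.card := by omega
          exact_mod_cast this
        · linarith
      exact key G H hk hfree U hU ε₁ ε₂ h1 h2 h3 h4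
        (greedy G H hfree U ε₁ ε₂ ((U.card : ℝ)/(2*(h:ℝ))) h1 h2 h3 h4 hMpos)
    set M : ℕ := max (Gᶜ.cliqueNum) (G.cliqueNum) with hM
    -- M ≥ 1
    have hM1 : 1 ≤ G.cliqueNum := by
      have hcl : G.IsClique (({⟨0, hn⟩} : Finset (Fin n)) : Set (Fin n)) := by
        simp [SimpleGraph.isClique_iff]
      have := IsClique.card_le_cliqueNum (tc := hcl)
      simpa using this
    have hMone : 1 ≤ M := le_trans hM1 (le_max_right _ _)
    -- n = 1 case
    rcases eq_or_lt_of_le (Nat.succ_le_of_lt hn) with h1 | hn2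
    · have : (n:ℝ) = 1 := by exact_mod_cast h1.symm
      rw [this]
      simp only [Real.logb_one, Real.sqrt_zero, mul_zero, Real.rpow_zero]
      exact_mod_cast hMone
    -- n ≥ 2 : M ≥ 2
    have hM2 : 2 ≤ M := by
      set v0 : Fin n := ⟨0, by omega⟩
      set v1 : Fin n := ⟨1, by omega⟩
      have hne : v0 ≠ v1 := by
        intro hcon
        have := congrArg Fin.val hcon
        simp [v0, v1] at this
      by_cases hadj : G.Adj v0 v1
      · have hcl := pair_clique hadj
        have h2 := IsClique.card_le_cliqueNum (tc := hcl)
        rw [Finset.card_pair hne] at h2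
        exact le_trans h2 (le_max_right _ _)
      · have hcadj : (Gᶜ).Adj v0 v1 := by rw [SimpleGraph.compl_adj]; exact ⟨hne, hadj⟩
        have hcl := pair_clique hcadj
        have h2 := IsClique.card_le_cliqueNum (tc := hcl)
        rw [Finset.card_pair hne] at h2
        exact le_trans h2 (le_max_left _ _)
    -- contradiction with assembly if n too large
    set y := Real.logb 2 (M:ℝ) with hy
    have hy1 : 1 ≤ y := log2_ge_one hM2
    have hnlt : (n:ℝ) < (2:ℝ) ^ ((2*(h:ℝ)+2) * (2 + y + y)^2) := by
      by_contra hcon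
      push_neg at hcon
      have hUuniv : ((Finset.univ : Finset (Fin n)).card : ℝ) = (n:ℝ) := by
        simp
      obtain ⟨W, _, hW⟩ := assembly G hk hkey (M + M) M M hMone hMone le_rfl
        Finset.univ (by rw [hUuniv]; exact hcon)
      rcases hW with ⟨hcl, hgt⟩ | ⟨hcl, hgt⟩
      · have := IsClique.card_le_cliqueNum (tc := hcl)
        have hle : G.cliqueNum ≤ M := le_max_right _ _
        omega
      · have := IsClique.card_le_cliqueNum (tc := hcl)
        have hle : Gᶜ.cliqueNum ≤ M := le_max_left _ _
        omega
    -- take logs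
    have hlogn : Real.logb 2 (n:ℝ) < (2*(h:ℝ)+2) * (2 + y + y)^2 := by
      have h1 := Real.logb_lt_logb (b := 2) (by norm_num) (by exact_mod_cast hn : (0:ℝ) < (n:ℝ)) hnlt
      rwa [Real.logb_rpow (by norm_num) (by norm_num)] at h1
    have hlogn0 : 0 ≤ Real.logb 2 (n:ℝ) :=
      Real.logb_nonneg (by norm_num) (by exact_mod_cast hn)
    have hsqrt : Real.sqrt (Real.logb 2 (n:ℝ)) ≤ Real.sqrt (2*(h:ℝ)+2) * (2 + y + y) := by
      have h1 : Real.sqrt (Real.logb 2 (n:ℝ)) ≤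
          Real.sqrt ((2*(h:ℝ)+2) * (2 + y + y)^2) := Real.sqrt_le_sqrt hlogn.le
      rw [Real.sqrt_mul hkR.le, Real.sqrt_sq (by linarith)] at h1
      exact h1
    have hfinal : c * Real.sqrt (Real.logb 2 (n:ℝ)) ≤ y := by
      have hsq0 : 0 < Real.sqrt (2*(h:ℝ)+2) := Real.sqrt_pos.mpr hkR
      have h2 : c * Real.sqrt (Real.logb 2 (n:ℝ)) ≤ c * (Real.sqrt (2*(h:ℝ)+2) * (2 + y + y)) := by
        apply mul_le_mul_of_nonneg_left hsqrt (by positivity)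
      have h3 : c * (Real.sqrt (2*(h:ℝ)+2) * (2 + y + y)) = (2 + y + y)/4 := by
        rw [hc]; field_simp
      rw [h3] at h2
      linarith
    calc (2:ℝ) ^ (c * Real.sqrt (Real.logb 2 (n:ℝ))) ≤ (2:ℝ) ^ y :=
          Real.rpow_le_rpow_of_exponent_le (by norm_num) hfinal
      _ = (M:ℝ) := Real.rpow_logb (by norm_num) (by norm_num)
            (by exact_mod_cast (by omega : 0 < M))
      _ = _ := by rw [hM]; push_cast [Nat.cast_max]; rfl
end

section
/- For every graph H and every real d > 0 there exists δ > 0 such that for every H-free graph G there exists a subset X ⊆ V(G) with |X| ≥ δ·|V(G)| such that either every vertex of the induced subgraph G[X] has degree at most d·|X| in G[X], or every vertex of the induced subgraph of the complement graph of G on X has degree at most d·|X| in that subgraph. -/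
open SimpleGraph
open Finset
open scoped Classical
set_option maxHeartbeats 1000000

lemma rodl_chain {α : Type*} [DecidableEq α] (c : α → α → Fin 3) :
    ∀ (L : ℕ) (V : Finset α), 4 ^ L ≤ V.card →
      ∃ (x : Fin L → α) (col : Fin L → Fin 3), (∀ i, x i ∈ V) ∧ Function.Injective x ∧
        ∀ i j, i < j → c (x i) (x j) = col i := by
  intro L
  induction L with
  | zero =>
      intro V _
      exact ⟨Fin.elim0, Fin.elim0, fun i => i.elim0, fun i => i.elim0, fun i => i.elim0⟩
  | succ L ih =>
      intro V hV
      have hVne : V.Nonempty := by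
        rw [← Finset.card_pos]
        calc 0 < 4 ^ (L + 1) := by positivity
        _ ≤ V.card := hV
      obtain ⟨a, ha⟩ := hVne
      set W : Fin 3 → Finset α := fun i => (V.erase a).filter (fun y => c a y = i) with hW
      have hcard : (V.erase a).card = ∑ i : Fin 3, (W i).card := by
        exact Finset.card_eq_sum_card_fiberwise (fun x _ => Finset.mem_univ (c a x))
      have hbig : ∃ i : Fin 3, 4 ^ L ≤ (W i).card := by
        by_contra hcon
        push_neg at hcon
        have h1 : ∀ i : Fin 3, (W i).card ≤ 4 ^ L - 1 := fun i =>
          Nat.le_sub_one_of_lt (hcon i)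
        have h2 : (V.erase a).card ≤ 3 * (4 ^ L - 1) := by
          rw [hcard]
          calc ∑ i : Fin 3, (W i).card ≤ ∑ _i : Fin 3, (4 ^ L - 1) :=
                Finset.sum_le_sum (fun i _ => h1 i)
          _ = 3 * (4 ^ L - 1) := by simp [Finset.sum_const, mul_comm]
        have h3 : 4 ^ (L + 1) - 1 ≤ (V.erase a).card := by
          rw [Finset.card_erase_of_mem ha]
          omega
        have h4 : (1:ℕ) ≤ 4 ^ L := Nat.one_le_pow _ _ (by norm_num)
        have : 4 ^ (L+1) = 4 * 4 ^ L := by ring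
        omega
      obtain ⟨i, hi⟩ := hbig
      obtain ⟨x', col', hx'mem, hx'inj, hx'mono⟩ := ih (W i) hi
      refine ⟨Fin.cons a x', Fin.cons i col', ?_, ?_, ?_⟩
      · intro j
        refine Fin.cases ?_ ?_ j
        · simpa using ha
        · intro j'
          simp only [Fin.cons_succ]
          exact Finset.mem_of_mem_erase (Finset.mem_of_mem_filter _ (hx'mem j'))
      · have hnotin : a ∉ Set.range x' := by
          rintro ⟨j', rfl⟩
          exact (Finset.notMem_erase _ _) (Finset.mem_of_mem_filter _ (hx'mem j'))
        exact Fin.cons_injective_iff.2 ⟨hnotin, hx'inj⟩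
      · intro j k hjk
        rcases Fin.eq_zero_or_eq_succ k with rfl | ⟨k', rfl⟩
        · exact absurd hjk (by simp)
        rcases Fin.eq_zero_or_eq_succ j with rfl | ⟨j', rfl⟩
        · simp only [Fin.cons_succ, Fin.cons_zero]
          have := hx'mem k'
          rw [hW] at this
          exact (Finset.mem_filter.1 this).2
        · simp only [Fin.cons_succ]
          exact hx'mono j' k' (by
            have := hjk
            simpa [Fin.succ_lt_succ_iff] using this)

/-- 3-colour Ramsey: in any symmetric 3-colouring of a set of size `4^(3q)` there is a
monochromatic subset of size `q`. -/
lemma rodl_ramsey {α : Type*} [DecidableEq α] (q : ℕ) (V : Finset α) (c : α → α → Fin 3)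
    (hsymm : ∀ x y, c x y = c y x) (hV : 4 ^ (3 * q) ≤ V.card) :
    ∃ S ⊆ V, S.card = q ∧ ∃ i : Fin 3, ∀ x ∈ S, ∀ y ∈ S, x ≠ y → c x y = i := by
  obtain ⟨x, col, hmem, hinj, hmono⟩ := rodl_chain c (3 * q) V hV
  have hpig : ∃ v : Fin 3, q ≤ ((Finset.univ : Finset (Fin (3*q))).filter
      (fun j => col j = v)).card := by
    by_contra hcon
    push_neg at hcon
    have hsum : (Finset.univ : Finset (Fin (3*q))).card =
        ∑ v : Fin 3, ((Finset.univ : Finset (Fin (3*q))).filter (fun j => col j = v)).card :=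
      Finset.card_eq_sum_card_fiberwise (fun j _ => Finset.mem_univ (col j))
    have h1 : ∀ v : Fin 3, ((Finset.univ : Finset (Fin (3*q))).filter
        (fun j => col j = v)).card ≤ q - 1 := fun v => Nat.le_sub_one_of_lt (hcon v)
    have h2 : 3 * q ≤ ∑ v : Fin 3, ((Finset.univ : Finset (Fin (3*q))).filter
        (fun j => col j = v)).card := by
      rw [← hsum]; simp
    have h3 : ∑ v : Fin 3, ((Finset.univ : Finset (Fin (3*q))).filter
        (fun j => col j = v)).card ≤ 3 * (q-1) := by
      calc _ ≤ ∑ _v : Fin 3, (q-1) := Finset.sum_le_sum (fun v _ => h1 v)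
      _ = 3 * (q-1) := by simp [mul_comm]
    have hq : q ≠ 0 := by
      intro h0; subst h0; exact Nat.not_lt_zero _ (hcon 0)
    omega
  obtain ⟨v, hv⟩ := hpig
  obtain ⟨T, hTsub, hTcard⟩ := Finset.exists_subset_card_eq hv
  refine ⟨T.image x, ?_, ?_, v, ?_⟩
  · intro y hy
    obtain ⟨j, _, rfl⟩ := Finset.mem_image.1 hy
    exact hmem j
  · rw [Finset.card_image_of_injective _ hinj, hTcard]
  · intro y hy z hz hyz
    obtain ⟨j, hj, rfl⟩ := Finset.mem_image.1 hy
    obtain ⟨k, hk, rfl⟩ := Finset.mem_image.1 hz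
    have hjk : j ≠ k := fun hh => hyz (by rw [hh])
    have hcolj : col j = v := (Finset.mem_filter.1 (hTsub hj)).2
    have hcolk : col k = v := (Finset.mem_filter.1 (hTsub hk)).2
    rcases lt_or_gt_of_ne hjk with hlt | hgt
    · rw [hmono j k hlt, hcolj]
    · rw [hsymm, hmono k j hgt, hcolk]

lemma rodl_card_interedges_eq_sum {V : Type*} [DecidableEq V] (G : SimpleGraph V)
    [DecidableRel G.Adj] (s t : Finset V) :
    (G.interedges s t).card = ∑ a ∈ s, (t.filter (fun b => G.Adj a b)).card := by
  have h1 : (G.interedges s t).card = ∑ a ∈ s, ((G.interedges s t).filter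
      (fun e => e.1 = a)).card :=
    Finset.card_eq_sum_card_fiberwise (fun e he => (G.mem_interedges_iff.1 he).1)
  rw [h1]
  refine Finset.sum_congr rfl (fun a ha => ?_)
  refine Finset.card_bij' (fun e _ => e.2) (fun b _ => (a, b)) ?_ ?_ ?_ ?_
  · rintro ⟨x, y⟩ he
    simp only [Finset.mem_filter, SimpleGraph.mem_interedges_iff] at he
    obtain ⟨⟨_, hy, hadj⟩, rfl⟩ := he
    exact Finset.mem_filter.2 ⟨hy, hadj⟩
  · intro b hb
    simp only [Finset.mem_filter] at hb
    exact Finset.mem_filter.2 ⟨G.mem_interedges_iff.2 ⟨ha, hb.1, hb.2⟩, rfl⟩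
  · rintro ⟨x, y⟩ he
    simp only [Finset.mem_filter] at he
    obtain ⟨-, rfl⟩ := he
    rfl
  · intro b _; rfl

lemma rodl_sparse {n : ℕ} (G : SimpleGraph (Fin n)) [DecidableRel G.Adj] (d σ : ℝ) (r m : ℕ)
    (hm : 1 ≤ m) (hr1 : 1 ≤ r) (hσ0 : 0 ≤ σ) (hσ : σ ≤ d/32) (hdr : 32 ≤ d * r) (hd : 0 < d)
    (W : Fin r → Finset (Fin n))
    (hdisj : ∀ i j : Fin r, i ≠ j → Disjoint (W i) (W j))
    (hWlo : ∀ i, m ≤ (W i).card) (hWhi : ∀ i, (W i).card ≤ m + 1)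
    (hdens : ∀ i j : Fin r, i ≠ j → (G.edgeDensity (W i) (W j) : ℝ) ≤ σ) :
    ∃ Y : Finset (Fin n), (r * m : ℝ)/2 ≤ Y.card ∧
      ∀ v ∈ Y, ((Y.filter (fun u => G.Adj v u)).card : ℝ) ≤ d * Y.card := by
  have hm0 : (0:ℝ) < m := by exact_mod_cast hm
  have hr0 : (0:ℝ) < r := by exact_mod_cast hr1
  set X : Finset (Fin n) := Finset.univ.biUnion W with hX
  have hXcard : (r * m : ℝ) ≤ X.card := by
    have h1 : X.card = ∑ i : Fin r, (W i).card :=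
      Finset.card_biUnion (fun i _ j _ hij => hdisj i j hij)
    have h2 : r * m ≤ ∑ i : Fin r, (W i).card := by
      calc r * m = ∑ _i : Fin r, m := by simp [mul_comm]
      _ ≤ _ := Finset.sum_le_sum (fun i _ => hWlo i)
    rw [h1]
    exact_mod_cast h2
  have hm1R : ∀ i, ((W i).card : ℝ) ≤ (m:ℝ) + 1 := by
    intro i; exact_mod_cast hWhi i
  have hm1lo : ∀ i, (1:ℝ) ≤ ((W i).card : ℝ) := by
    intro i; exact_mod_cast le_trans hm (hWlo i)
  -- total number of (ordered) adjacent pairs inside X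
  have hinterbound : ((G.interedges X X).card : ℝ) ≤
      (r:ℝ)^2 * σ * ((m:ℝ)+1)^2 + (r:ℝ) * ((m:ℝ)+1)^2 := by
    have hsplit : G.interedges X X =
        (Finset.univ ×ˢ Finset.univ : Finset (Fin r × Fin r)).biUnion
          (fun p => G.interedges (W p.1) (W p.2)) := by
      rw [hX, SimpleGraph.interedges_biUnion]
    have h1 : ((G.interedges X X).card : ℝ) ≤
        ∑ p ∈ (Finset.univ ×ˢ Finset.univ : Finset (Fin r × Fin r)),
          ((G.interedges (W p.1) (W p.2)).card : ℝ) := by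
      rw [hsplit]
      exact_mod_cast Finset.card_biUnion_le
    have hterm : ∀ p : Fin r × Fin r,
        ((G.interedges (W p.1) (W p.2)).card : ℝ) ≤
          (if p.1 = p.2 then ((m:ℝ)+1)^2 else σ * ((m:ℝ)+1)^2) := by
      rintro ⟨i, j⟩
      by_cases hij : i = j
      · subst hij
        rw [if_pos rfl]
        have h3 := SimpleGraph.card_interedges_le_mul G (W i) (W i)
        have h2 : ((W i).card : ℝ) ≤ (m:ℝ)+1 := hm1R i
        have h4 : ((G.interedges (W i) (W i)).card : ℝ) ≤ ((W i).card : ℝ) * ((W i).card : ℝ) := by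
          exact_mod_cast h3
        have h5 : ((W i).card : ℝ) * ((W i).card : ℝ) ≤ ((m:ℝ)+1) * ((m:ℝ)+1) :=
          mul_le_mul h2 h2 (by linarith [hm1lo i]) (by linarith)
        calc ((G.interedges (W i) (W i)).card : ℝ) ≤ ((m:ℝ)+1) * ((m:ℝ)+1) := by linarith
        _ = ((m:ℝ)+1)^2 := by ring
      · simp only [if_neg hij]
        have hcast : ((G.edgeDensity (W i) (W j) : ℚ) : ℝ) =
            ((G.interedges (W i) (W j)).card : ℝ) / (((W i).card : ℝ) * ((W j).card : ℝ)) := by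
          rw [← SimpleGraph.card_interedges_div_card]
          push_cast
          ring
        have hpos : (0:ℝ) < ((W i).card : ℝ) * ((W j).card : ℝ) := by
          nlinarith [hm1lo i, hm1lo j]
        have h5 : ((G.interedges (W i) (W j)).card : ℝ) =
            ((G.edgeDensity (W i) (W j) : ℚ) : ℝ) * (((W i).card : ℝ) * ((W j).card : ℝ)) := by
          rw [hcast, div_mul_cancel₀]
          exact ne_of_gt hpos
        have h6 : (0:ℝ) ≤ ((G.edgeDensity (W i) (W j) : ℚ) : ℝ) := by
          exact_mod_cast SimpleGraph.edgeDensity_nonneg G (W i) (W j)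
        have h7 := hdens i j hij
        rw [h5]
        have hw : ((W i).card : ℝ) * ((W j).card : ℝ) ≤ ((m:ℝ)+1) * ((m:ℝ)+1) :=
          mul_le_mul (hm1R i) (hm1R j) (by linarith [hm1lo j]) (by linarith [hm1lo i])
        calc ((G.edgeDensity (W i) (W j) : ℚ) : ℝ) * (((W i).card : ℝ) * ((W j).card : ℝ)) ≤
              σ * (((m:ℝ)+1) * ((m:ℝ)+1)) := by
              exact mul_le_mul h7 hw (mul_nonneg (Nat.cast_nonneg _) (Nat.cast_nonneg _)) hσ0
        _ = σ * ((m:ℝ)+1)^2 := by ring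
    have h8 : ∑ p ∈ (Finset.univ ×ˢ Finset.univ : Finset (Fin r × Fin r)),
          ((G.interedges (W p.1) (W p.2)).card : ℝ) ≤
        ∑ p ∈ (Finset.univ ×ˢ Finset.univ : Finset (Fin r × Fin r)),
          (if p.1 = p.2 then ((m:ℝ)+1)^2 else σ * ((m:ℝ)+1)^2) :=
      Finset.sum_le_sum (fun p _ => hterm p)
    have h9 : ∑ p ∈ (Finset.univ ×ˢ Finset.univ : Finset (Fin r × Fin r)),
          (if p.1 = p.2 then ((m:ℝ)+1)^2 else σ * ((m:ℝ)+1)^2) ≤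
        (r:ℝ) * ((m:ℝ)+1)^2 + (r:ℝ)^2 * (σ * ((m:ℝ)+1)^2) := by
      rw [Finset.sum_ite]
      have hc1 : ((Finset.univ ×ˢ Finset.univ : Finset (Fin r × Fin r)).filter
          (fun p => p.1 = p.2)).card ≤ r := by
        have := Finset.card_le_card_of_injOn (f := Prod.fst)
          (s := (Finset.univ ×ˢ Finset.univ : Finset (Fin r × Fin r)).filter
            (fun p => p.1 = p.2)) (t := Finset.univ)
          (fun p _ => Finset.mem_univ _) ?_
        · simpa using this
        · rintro ⟨a₁, a₂⟩ h₁ ⟨b₁, b₂⟩ h₂ hh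
          simp only [Finset.mem_coe, Finset.mem_filter] at h₁ h₂
          simp only at hh
          rw [Prod.mk.injEq]
          exact ⟨hh, by rw [← h₁.2, ← h₂.2, hh]⟩
      have hc2 : ((Finset.univ ×ˢ Finset.univ : Finset (Fin r × Fin r)).filter
          (fun p => ¬ p.1 = p.2)).card ≤ r^2 := by
        calc _ ≤ (Finset.univ ×ˢ Finset.univ : Finset (Fin r × Fin r)).card :=
              Finset.card_filter_le _ _
        _ = r^2 := by simp [sq]
      rw [Finset.sum_const, Finset.sum_const]
      have hA : (0:ℝ) ≤ ((m:ℝ)+1)^2 := by positivity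
      have hB : (0:ℝ) ≤ σ * ((m:ℝ)+1)^2 := by positivity
      have e1 : (((Finset.univ ×ˢ Finset.univ : Finset (Fin r × Fin r)).filter
          (fun p => p.1 = p.2)).card : ℝ) ≤ (r:ℝ) := by exact_mod_cast hc1
      have e2 : (((Finset.univ ×ˢ Finset.univ : Finset (Fin r × Fin r)).filter
          (fun p => ¬ p.1 = p.2)).card : ℝ) ≤ (r:ℝ)^2 := by exact_mod_cast hc2
      simp only [nsmul_eq_mul]
      nlinarith
    calc ((G.interedges X X).card : ℝ) ≤ _ := h1
    _ ≤ _ := h8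
    _ ≤ (r:ℝ) * ((m:ℝ)+1)^2 + (r:ℝ)^2 * (σ * ((m:ℝ)+1)^2) := h9
    _ = (r:ℝ)^2 * σ * ((m:ℝ)+1)^2 + (r:ℝ) * ((m:ℝ)+1)^2 := by ring
  -- Markov
  set K : ℝ := 2 * ((r:ℝ)^2 * σ * ((m:ℝ)+1)^2 + (r:ℝ) * ((m:ℝ)+1)^2) / ((r:ℝ) * (m:ℝ)) with hK
  have hKpos : 0 < K := by
    have h1 : (0:ℝ) ≤ (r:ℝ)^2 * σ * ((m:ℝ)+1)^2 := by positivity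
    have h2 : (0:ℝ) < (r:ℝ) * ((m:ℝ)+1)^2 := by positivity
    have h3 : (0:ℝ) < (r:ℝ)^2 * σ * ((m:ℝ)+1)^2 + (r:ℝ) * ((m:ℝ)+1)^2 := by linarith
    rw [hK]
    positivity
  set B : Finset (Fin n) := X.filter
    (fun v => K < ((X.filter (fun u => G.Adj v u)).card : ℝ)) with hB
  have hBsub : B ⊆ X := Finset.filter_subset _ _
  have hsumX : ∑ v ∈ X, ((X.filter (fun u => G.Adj v u)).card : ℝ) =
      ((G.interedges X X).card : ℝ) := by
    rw [rodl_card_interedges_eq_sum]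
    push_cast
    rfl
  have hBbound : (B.card : ℝ) * K ≤ ((G.interedges X X).card : ℝ) := by
    rw [← hsumX]
    calc (B.card : ℝ) * K = ∑ _v ∈ B, K := by rw [Finset.sum_const]; ring
    _ ≤ ∑ v ∈ B, ((X.filter (fun u => G.Adj v u)).card : ℝ) := by
        refine Finset.sum_le_sum (fun v hv => ?_)
        exact le_of_lt (Finset.mem_filter.1 hv).2
    _ ≤ ∑ v ∈ X, ((X.filter (fun u => G.Adj v u)).card : ℝ) := by
        refine Finset.sum_le_sum_of_subset_of_nonneg hBsub (fun v _ _ => by positivity)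
  have hBcard : (B.card : ℝ) ≤ (r:ℝ) * (m:ℝ) / 2 := by
    have hrm0 : ((r:ℝ) * (m:ℝ)) ≠ 0 := by positivity
    have hKrm : K * ((r:ℝ) * (m:ℝ) / 2) =
        (r:ℝ)^2 * σ * ((m:ℝ)+1)^2 + (r:ℝ) * ((m:ℝ)+1)^2 := by
      rw [hK, div_mul_eq_mul_div, div_eq_iff hrm0]
      ring
    have h1 : (B.card : ℝ) * K ≤ K * ((r:ℝ) * (m:ℝ) / 2) := by
      rw [hKrm]; exact le_trans hBbound hinterbound
    have h2 : (B.card : ℝ) * K ≤ ((r:ℝ) * (m:ℝ) / 2) * K := by linarith [h1]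
    exact le_of_mul_le_mul_right (by linarith) hKpos
  refine ⟨X \ B, ?_, ?_⟩
  · have h1 : (X \ B).card = X.card - B.card := Finset.card_sdiff_of_subset hBsub
    have h2 : ((X \ B).card : ℝ) = (X.card : ℝ) - (B.card : ℝ) := by
      rw [h1]
      exact Nat.cast_sub (Finset.card_le_card hBsub)
    rw [h2]
    linarith
  · intro v hv
    have hvX : v ∈ X := (Finset.mem_sdiff.1 hv).1
    have hvB : v ∉ B := (Finset.mem_sdiff.1 hv).2
    have hdeg : ((X.filter (fun u => G.Adj v u)).card : ℝ) ≤ K := by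
      by_contra hcon
      push_neg at hcon
      exact hvB (Finset.mem_filter.2 ⟨hvX, hcon⟩)
    have hsub : ((X \ B).filter (fun u => G.Adj v u)).card ≤
        (X.filter (fun u => G.Adj v u)).card :=
      Finset.card_le_card (Finset.filter_subset_filter _ (Finset.sdiff_subset))
    have hYcard : (r:ℝ) * (m:ℝ) / 2 ≤ ((X \ B).card : ℝ) := by
      have h1 : (X \ B).card = X.card - B.card := Finset.card_sdiff_of_subset hBsub
      have h2 : ((X \ B).card : ℝ) = (X.card : ℝ) - (B.card : ℝ) := by
        rw [h1]; exact Nat.cast_sub (Finset.card_le_card hBsub)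
      rw [h2]; linarith
    -- key numeric inequality : K ≤ d * (r*m/2)
    have hkey : K ≤ d * ((r:ℝ) * (m:ℝ) / 2) := by
      have hrm0' : (0:ℝ) < (r:ℝ) * (m:ℝ) := by positivity
      rw [hK, div_le_iff₀ hrm0']
      have hm1' : (1:ℝ) ≤ (m:ℝ) := by exact_mod_cast hm
      have hmm2 : ((m:ℝ)+1)^2 ≤ 4*(m:ℝ)^2 := by nlinarith [hm1']
      have hA : (r:ℝ)^2 * σ * ((m:ℝ)+1)^2 ≤ (r:ℝ)^2 * (d/32) * (4*(m:ℝ)^2) := by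
        have h1 : σ * ((m:ℝ)+1)^2 ≤ (d/32) * (4*(m:ℝ)^2) :=
          mul_le_mul hσ hmm2 (by positivity) (by linarith)
        calc (r:ℝ)^2 * σ * ((m:ℝ)+1)^2 = (r:ℝ)^2 * (σ * ((m:ℝ)+1)^2) := by ring
        _ ≤ (r:ℝ)^2 * ((d/32) * (4*(m:ℝ)^2)) :=
            mul_le_mul_of_nonneg_left h1 (by positivity)
        _ = (r:ℝ)^2 * (d/32) * (4*(m:ℝ)^2) := by ring
      have hB2 : (r:ℝ) * ((m:ℝ)+1)^2 ≤ 4*(r:ℝ)*(m:ℝ)^2 := by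
        calc (r:ℝ) * ((m:ℝ)+1)^2 ≤ (r:ℝ) * (4*(m:ℝ)^2) :=
              mul_le_mul_of_nonneg_left hmm2 (by positivity)
        _ = 4*(r:ℝ)*(m:ℝ)^2 := by ring
      have hC : 32*((r:ℝ)*(m:ℝ)^2) ≤ d*(r:ℝ)^2*(m:ℝ)^2 := by
        have h2 := mul_le_mul_of_nonneg_right hdr
          (show (0:ℝ) ≤ (r:ℝ)*(m:ℝ)^2 by positivity)
        calc 32*((r:ℝ)*(m:ℝ)^2) ≤ d * (r:ℝ) * ((r:ℝ)*(m:ℝ)^2) := h2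
        _ = d*(r:ℝ)^2*(m:ℝ)^2 := by ring
      have hA' : 2*((r:ℝ)^2 * σ * ((m:ℝ)+1)^2) ≤ d*(r:ℝ)^2*(m:ℝ)^2/4 := by
        calc 2*((r:ℝ)^2 * σ * ((m:ℝ)+1)^2) ≤ 2*((r:ℝ)^2 * (d/32) * (4*(m:ℝ)^2)) := by
              linarith [hA]
        _ = d*(r:ℝ)^2*(m:ℝ)^2/4 := by ring
      have hB' : 2*((r:ℝ) * ((m:ℝ)+1)^2) ≤ 8*((r:ℝ)*(m:ℝ)^2) := by linarith [hB2]
      have hC' : 8*((r:ℝ)*(m:ℝ)^2) ≤ d*(r:ℝ)^2*(m:ℝ)^2/4 := by linarith [hC]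
      calc 2 * ((r:ℝ)^2 * σ * ((m:ℝ)+1)^2 + (r:ℝ) * ((m:ℝ)+1)^2)
          = 2*((r:ℝ)^2 * σ * ((m:ℝ)+1)^2) + 2*((r:ℝ) * ((m:ℝ)+1)^2) := by ring
      _ ≤ d*(r:ℝ)^2*(m:ℝ)^2/4 + d*(r:ℝ)^2*(m:ℝ)^2/4 := by linarith
      _ = d * ((r:ℝ) * (m:ℝ) / 2) * ((r:ℝ) * (m:ℝ)) := by ring
    calc (((X \ B).filter (fun u => G.Adj v u)).card : ℝ) ≤
          ((X.filter (fun u => G.Adj v u)).card : ℝ) := by exact_mod_cast hsub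
    _ ≤ K := hdeg
    _ ≤ d * ((r:ℝ) * (m:ℝ) / 2) := hkey
    _ ≤ d * ((X \ B).card : ℝ) := by
        exact mul_le_mul_of_nonneg_left hYcard (le_of_lt hd)

lemma rodl_embed {n h : ℕ} (G : SimpleGraph (Fin n)) (H : SimpleGraph (Fin h))
    (σ ε : ℝ) (hσ0 : 0 < σ) (hσ1 : σ ≤ 1) (hε0 : 0 < ε)
    (hεσ : ((h:ℝ)+1) * ε ≤ (σ/2)^(h+1))
    (W : Fin h → Finset (Fin n))
    (hne : ∀ i, (W i).Nonempty)
    (hdisj : ∀ i j : Fin h, i ≠ j → Disjoint (W i) (W j))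
    (hunif : ∀ i j : Fin h, i ≠ j → G.IsUniform ε (W i) (W j))
    (hdlo : ∀ i j : Fin h, i ≠ j → σ ≤ (G.edgeDensity (W i) (W j) : ℝ))
    (hdhi : ∀ i j : Fin h, i ≠ j → (G.edgeDensity (W i) (W j) : ℝ) ≤ 1 - σ) :
    Nonempty (H ↪g G) := by
  have hσ2pos : (0:ℝ) < σ/2 := by linarith
  have hσ2le1 : σ/2 ≤ 1 := by linarith
  have hpow_le : ∀ {a b : ℕ}, a ≤ b → (σ/2)^b ≤ (σ/2)^a :=
    fun hab => pow_le_pow_of_le_one (le_of_lt hσ2pos) hσ2le1 hab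
  have hεh1 : ε ≤ (σ/2)^(h+1) := by
    have h0 : (0:ℝ) ≤ (h:ℝ) * ε := mul_nonneg (Nat.cast_nonneg h) hε0.le
    have : ε ≤ ((h:ℝ)+1) * ε := by nlinarith
    linarith
  have hεpow : ∀ i : ℕ, i ≤ h + 1 → ε ≤ (σ/2)^i := by
    intro i hi
    exact le_trans hεh1 (hpow_le hi)
  have hε2 : ε ≤ σ/2 := by
    have := hεpow 1 (by omega)
    simpa using this
  have hstrictpow : ∀ i : ℕ, i ≤ h → (h:ℝ) * ε < (σ/2)^i := by
    intro i hi
    have h1 : (h:ℝ) * ε + ε ≤ (σ/2)^(h+1) := by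
      have : ((h:ℝ)+1) * ε = (h:ℝ)*ε + ε := by ring
      linarith [hεσ, this.symm.le]
    have h2 : (σ/2)^(h+1) ≤ (σ/2)^i := hpow_le (by omega)
    linarith
  -- main induction
  have main : ∀ i : ℕ, i ≤ h → ∃ (v : Fin h → Fin n) (C : Fin h → Finset (Fin n)),
      (∀ j : Fin h, (j:ℕ) < i → v j ∈ W j) ∧
      (∀ j k : Fin h, (j:ℕ) < i → (k:ℕ) < i → j ≠ k → (G.Adj (v j) (v k) ↔ H.Adj j k)) ∧
      (∀ j : Fin h, i ≤ (j:ℕ) → C j ⊆ W j) ∧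
      (∀ j : Fin h, i ≤ (j:ℕ) → (σ/2)^i * ((W j).card:ℝ) ≤ ((C j).card:ℝ)) ∧
      (∀ j k : Fin h, (k:ℕ) < i → i ≤ (j:ℕ) → ∀ x ∈ C j, (G.Adj (v k) x ↔ H.Adj k j)) := by
    intro i
    induction i with
    | zero =>
        intro _
        refine ⟨fun j => (hne j).choose, W, ?_, ?_, ?_, ?_, ?_⟩
        · intro j hj; omega
        · intro j k hj; omega
        · intro j _; exact subset_rfl
        · intro j _; simp
        · intro j k hk; omega
    | succ i ih =>
        intro hi1
        have hih : i ≤ h := by omega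
        obtain ⟨v, C, h1, h2, h3, h4, h5⟩ := ih hih
        have hilt : i < h := by omega
        set ι : Fin h := ⟨i, hilt⟩ with hι
        have hCι : C ι ⊆ W ι := h3 ι (le_refl i)
        have hWιpos : (0:ℝ) < ((W ι).card : ℝ) := by
          exact_mod_cast Finset.card_pos.2 (hne ι)
        have hCιcard : (σ/2)^i * ((W ι).card:ℝ) ≤ ((C ι).card:ℝ) := h4 ι (le_refl i)
        -- target sets
        set Tset : Fin n → Fin h → Finset (Fin n) := fun x j =>
          if H.Adj ι j then (C j).filter (fun y => G.Adj x y)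
          else (C j).filter (fun y => ¬ G.Adj x y) with hTset
        -- each bad set is small
        have bad_small : ∀ j : Fin h, i < (j:ℕ) →
            ((((C ι).filter (fun x =>
              ((Tset x j).card:ℝ) < (σ/2) * ((C j).card:ℝ))).card : ℝ) < ε * ((W ι).card:ℝ)) := by
          intro j hij
          by_contra hcon
          push_neg at hcon
          set B := (C ι).filter (fun x =>
            ((Tset x j).card:ℝ) < (σ/2) * ((C j).card:ℝ)) with hB
          have hιj : ι ≠ j := by
            intro hh
            rw [← hh] at hij
            exact absurd hij (lt_irrefl i)
          have hBsub : B ⊆ W ι := subset_trans (Finset.filter_subset _ _) hCι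
          have hCjW : C j ⊆ W j := h3 j (le_of_lt hij)
          have hWjpos : (0:ℝ) < ((W j).card : ℝ) := by
            exact_mod_cast Finset.card_pos.2 (hne j)
          have hCjcard : ε * ((W j).card:ℝ) ≤ ((C j).card:ℝ) := by
            have := h4 j (le_of_lt hij)
            have h6 : ε ≤ (σ/2)^i := hεpow i (by omega)
            nlinarith
          have hCjpos : (0:ℝ) < ((C j).card:ℝ) := by
            have hz : (0:ℝ) < (σ/2)^i * ((W j).card:ℝ) :=
              mul_pos (pow_pos hσ2pos i) hWjpos
            linarith [h4 j (le_of_lt hij)]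
          have hBpos : (0:ℝ) < ((B).card:ℝ) := by
            have hz : (0:ℝ) < ε * ((W ι).card:ℝ) := mul_pos hε0 hWιpos
            linarith
          have hBne : B.Nonempty := by
            rw [← Finset.card_pos]
            exact_mod_cast hBpos
          have hu := hunif ι j hιj hBsub hCjW
            (by rw [mul_comm] at hcon; exact hcon)
            (by rw [mul_comm] at hCjcard; exact hCjcard)
          -- density of (B, C j)
          have hcast : ((G.edgeDensity B (C j) : ℚ) : ℝ) =
              ((G.interedges B (C j)).card : ℝ) / (((B).card : ℝ) * ((C j).card : ℝ)) := by
            rw [← SimpleGraph.card_interedges_div_card]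
            push_cast
            ring
          have hsum : ((G.interedges B (C j)).card : ℝ) =
              ∑ x ∈ B, (((C j).filter (fun y => G.Adj x y)).card : ℝ) := by
            rw [rodl_card_interedges_eq_sum]
            push_cast
            rfl
          have hdW := hdlo ι j hιj
          have hdW' := hdhi ι j hιj
          have habs1 : ((G.edgeDensity B (C j) : ℚ) : ℝ) >
              ((G.edgeDensity (W ι) (W j) : ℚ) : ℝ) - ε := by
            have := abs_lt.1 hu
            linarith [this.1]
          have habs2 : ((G.edgeDensity B (C j) : ℚ) : ℝ) <
              ((G.edgeDensity (W ι) (W j) : ℚ) : ℝ) + ε := by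
            have := abs_lt.1 hu
            linarith [this.2]
          by_cases hadj : H.Adj ι j
          · -- degrees small ⇒ density < σ/2, but density > σ - ε ≥ σ/2
            have hdegs : ∀ x ∈ B, (((C j).filter (fun y => G.Adj x y)).card : ℝ) <
                (σ/2) * ((C j).card:ℝ) := by
              intro x hx
              have hxx := (Finset.mem_filter.1 hx).2
              simp only [hTset] at hxx
              rwa [if_pos hadj] at hxx
            have hsumlt : ((G.interedges B (C j)).card : ℝ) <
                ((B).card:ℝ) * ((σ/2) * ((C j).card:ℝ)) := by
              rw [hsum]
              calc ∑ x ∈ B, (((C j).filter (fun y => G.Adj x y)).card : ℝ) <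
                  ∑ _x ∈ B, (σ/2) * ((C j).card:ℝ) :=
                    Finset.sum_lt_sum_of_nonempty hBne hdegs
              _ = ((B).card:ℝ) * ((σ/2) * ((C j).card:ℝ)) := by
                    rw [Finset.sum_const]; ring
            have hdlt : ((G.edgeDensity B (C j) : ℚ) : ℝ) < σ/2 := by
              rw [hcast, div_lt_iff₀ (mul_pos hBpos hCjpos)]
              calc ((G.interedges B (C j)).card : ℝ) <
                  ((B).card:ℝ) * ((σ/2) * ((C j).card:ℝ)) := hsumlt
              _ = σ/2 * (((B).card:ℝ) * ((C j).card:ℝ)) := by ring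
            linarith
          · -- non-neighbours small ⇒ density > 1 - σ/2, but density < 1 - σ + ε
            have hdegs : ∀ x ∈ B, (((C j).filter (fun y => G.Adj x y)).card : ℝ) >
                (1 - σ/2) * ((C j).card:ℝ) := by
              intro x hx
              have hxx := (Finset.mem_filter.1 hx).2
              simp only [hTset] at hxx
              rw [if_neg hadj] at hxx
              have hsplit : ((C j).filter (fun y => G.Adj x y)).card +
                  ((C j).filter (fun y => ¬ G.Adj x y)).card = (C j).card :=
                Finset.card_filter_add_card_filter_not _
              have : (((C j).filter (fun y => G.Adj x y)).card : ℝ) =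
                  ((C j).card : ℝ) - (((C j).filter (fun y => ¬ G.Adj x y)).card : ℝ) := by
                have := hsplit
                push_cast [← this]
                ring
              rw [this]
              linarith
            have hsumgt : ((G.interedges B (C j)).card : ℝ) >
                ((B).card:ℝ) * ((1 - σ/2) * ((C j).card:ℝ)) := by
              rw [hsum]
              calc ((B).card:ℝ) * ((1 - σ/2) * ((C j).card:ℝ)) =
                  ∑ _x ∈ B, (1 - σ/2) * ((C j).card:ℝ) := by
                    rw [Finset.sum_const]; ring
              _ < ∑ x ∈ B, (((C j).filter (fun y => G.Adj x y)).card : ℝ) :=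
                    Finset.sum_lt_sum_of_nonempty hBne hdegs
            have hdgt : ((G.edgeDensity B (C j) : ℚ) : ℝ) > 1 - σ/2 := by
              rw [hcast, gt_iff_lt, lt_div_iff₀ (mul_pos hBpos hCjpos)]
              calc (1 - σ/2) * (((B).card:ℝ) * ((C j).card:ℝ)) =
                  ((B).card:ℝ) * ((1 - σ/2) * ((C j).card:ℝ)) := by ring
              _ < ((G.interedges B (C j)).card : ℝ) := hsumgt
            linarith
        -- find a good vertex
        set F : Finset (Fin h) := Finset.univ.filter (fun j => i < (j:ℕ)) with hF
        set Bfull := (C ι).filter (fun x => ∃ j : Fin h, i < (j:ℕ) ∧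
            ((Tset x j).card:ℝ) < (σ/2) * ((C j).card:ℝ)) with hBfull
        have hBfull_sub : Bfull ⊆ F.biUnion (fun j => (C ι).filter (fun x =>
            ((Tset x j).card:ℝ) < (σ/2) * ((C j).card:ℝ))) := by
          intro x hx
          obtain ⟨hxC, j, hj1, hj2⟩ := Finset.mem_filter.1 hx
          exact Finset.mem_biUnion.2 ⟨j, Finset.mem_filter.2 ⟨Finset.mem_univ _, hj1⟩,
            Finset.mem_filter.2 ⟨hxC, hj2⟩⟩
        have hBfull_card : ((Bfull).card : ℝ) < ((C ι).card : ℝ) := by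
          have hc1 : ((Bfull).card : ℝ) ≤
              ∑ j ∈ F, (((C ι).filter (fun x =>
                ((Tset x j).card:ℝ) < (σ/2) * ((C j).card:ℝ))).card : ℝ) := by
            calc ((Bfull).card : ℝ) ≤ ((F.biUnion (fun j => (C ι).filter (fun x =>
                ((Tset x j).card:ℝ) < (σ/2) * ((C j).card:ℝ)))).card : ℝ) := by
                  exact_mod_cast Finset.card_le_card hBfull_sub
            _ ≤ _ := by exact_mod_cast Finset.card_biUnion_le
          have hc2 : ∑ j ∈ F, (((C ι).filter (fun x =>
                ((Tset x j).card:ℝ) < (σ/2) * ((C j).card:ℝ))).card : ℝ) ≤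
              (F.card : ℝ) * (ε * ((W ι).card:ℝ)) := by
            calc _ ≤ ∑ _j ∈ F, ε * ((W ι).card:ℝ) := by
                  refine Finset.sum_le_sum (fun j hj => ?_)
                  exact le_of_lt (bad_small j (Finset.mem_filter.1 hj).2)
            _ = (F.card : ℝ) * (ε * ((W ι).card:ℝ)) := by rw [Finset.sum_const]; ring
          have hFcard : (F.card : ℝ) ≤ (h : ℝ) := by
            have : F.card ≤ h := by
              calc F.card ≤ (Finset.univ : Finset (Fin h)).card := Finset.card_filter_le _ _
              _ = h := by simp
            exact_mod_cast this
          have hc3 : (F.card : ℝ) * (ε * ((W ι).card:ℝ)) ≤ (h:ℝ) * ε * ((W ι).card:ℝ) := by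
            have hεW : (0:ℝ) ≤ ε * ((W ι).card:ℝ) :=
              mul_nonneg hε0.le (Nat.cast_nonneg _)
            calc (F.card : ℝ) * (ε * ((W ι).card:ℝ)) ≤ (h:ℝ) * (ε * ((W ι).card:ℝ)) :=
                  mul_le_mul_of_nonneg_right hFcard hεW
            _ = (h:ℝ) * ε * ((W ι).card:ℝ) := by ring
          have hc4 : (h:ℝ) * ε * ((W ι).card:ℝ) < (σ/2)^i * ((W ι).card:ℝ) :=
            mul_lt_mul_of_pos_right (hstrictpow i hih) hWιpos
          linarith
        have hBfull_lt : Bfull.card < (C ι).card := by exact_mod_cast hBfull_card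
        have hgood : ∃ x, x ∈ C ι ∧ x ∉ Bfull := by
          have hsd : 0 < ((C ι) \ Bfull).card := by
            have hsub2 : Bfull ⊆ C ι := Finset.filter_subset _ _
            have := Finset.card_sdiff_of_subset hsub2
            omega
          obtain ⟨x, hx⟩ := Finset.card_pos.1 hsd
          exact ⟨x, (Finset.mem_sdiff.1 hx).1, (Finset.mem_sdiff.1 hx).2⟩
        obtain ⟨x, hxC, hxB⟩ := hgood
        have hxgood : ∀ j : Fin h, i < (j:ℕ) →
            (σ/2) * ((C j).card:ℝ) ≤ ((Tset x j).card:ℝ) := by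
          intro j hj
          by_contra hcon
          push_neg at hcon
          exact hxB (Finset.mem_filter.2 ⟨hxC, ⟨j, hj, hcon⟩⟩)
        refine ⟨Function.update v ι x,
          fun j => if i < (j:ℕ) then Tset x j else C j, ?_, ?_, ?_, ?_, ?_⟩
        · -- membership
          intro j hj
          rcases Nat.lt_succ_iff_lt_or_eq.1 hj with hj' | hj'
          · have hjι : j ≠ ι := by
              intro hh; rw [hh] at hj'; exact absurd hj' (lt_irrefl i)
            rw [Function.update_of_ne hjι]
            exact h1 j hj'
          · have hjι : j = ι := Fin.ext hj'
            subst hjι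
            rw [Function.update_self]
            exact hCι hxC
        · -- partial embedding property
          intro j k hj hk hjk
          rcases Nat.lt_succ_iff_lt_or_eq.1 hj with hj' | hj' <;>
            rcases Nat.lt_succ_iff_lt_or_eq.1 hk with hk' | hk'
          · have hjι : j ≠ ι := by
              intro hh; rw [hh] at hj'; exact absurd hj' (lt_irrefl i)
            have hkι : k ≠ ι := by
              intro hh; rw [hh] at hk'; exact absurd hk' (lt_irrefl i)
            rw [Function.update_of_ne hjι, Function.update_of_ne hkι]
            exact h2 j k hj' hk' hjk
          · -- k = ι, j old
            have hjι : j ≠ ι := by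
              intro hh; rw [hh] at hj'; exact absurd hj' (lt_irrefl i)
            have hkι : k = ι := Fin.ext hk'
            subst hkι
            rw [Function.update_of_ne hjι, Function.update_self]
            exact h5 ι j hj' (le_refl i) x hxC
          · -- j = ι, k old
            have hkι : k ≠ ι := by
              intro hh; rw [hh] at hk'; exact absurd hk' (lt_irrefl i)
            have hjι : j = ι := Fin.ext hj'
            subst hjι
            rw [Function.update_of_ne hkι, Function.update_self]
            rw [G.adj_comm, H.adj_comm]
            exact h5 ι k hk' (le_refl i) x hxC
          · -- both = ι : impossible
            have hjι : j = ι := Fin.ext hj'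
            have hkι : k = ι := Fin.ext hk'
            exact absurd (hjι.trans hkι.symm) hjk
        · -- candidate subsets
          intro j hj
          have hij : i < (j:ℕ) := by omega
          simp only [if_pos hij]
          refine subset_trans ?_ (h3 j (le_of_lt hij))
          simp only [hTset]
          split_ifs <;> exact Finset.filter_subset _ _
        · -- candidate sizes
          intro j hj
          have hij : i < (j:ℕ) := by omega
          simp only [if_pos hij]
          calc (σ/2)^(i+1) * ((W j).card:ℝ) = (σ/2) * ((σ/2)^i * ((W j).card:ℝ)) := by ring
          _ ≤ (σ/2) * ((C j).card:ℝ) :=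
              mul_le_mul_of_nonneg_left (h4 j (le_of_lt hij)) (le_of_lt hσ2pos)
          _ ≤ ((Tset x j).card:ℝ) := hxgood j hij
        · -- adjacency of candidates to chosen vertices
          intro j k hk hj y hy
          have hij : i < (j:ℕ) := by omega
          simp only [if_pos hij] at hy
          rcases Nat.lt_succ_iff_lt_or_eq.1 hk with hk' | hk'
          · have hkι : k ≠ ι := by
              intro hh; rw [hh] at hk'; exact absurd hk' (lt_irrefl i)
            rw [Function.update_of_ne hkι]
            have hyC : y ∈ C j := by
              have : Tset x j ⊆ C j := by
                simp only [hTset]; split_ifs <;> exact Finset.filter_subset _ _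
              exact this hy
            exact h5 j k hk' (le_of_lt hij) y hyC
          · have hkι : k = ι := Fin.ext hk'
            subst hkι
            rw [Function.update_self]
            simp only [hTset] at hy
            by_cases hadj : H.Adj ι j
            · rw [if_pos hadj] at hy
              exact iff_of_true (Finset.mem_filter.1 hy).2 hadj
            · rw [if_neg hadj] at hy
              exact iff_of_false (Finset.mem_filter.1 hy).2 hadj
  -- conclusion
  obtain ⟨v, C, h1, h2, _, _, _⟩ := main h (le_refl h)
  have hinj : Function.Injective v := by
    intro a b hab
    by_contra hne'
    have haW : v a ∈ W a := h1 a a.isLt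
    have hbW : v b ∈ W b := h1 b b.isLt
    rw [← hab] at hbW
    exact (Finset.disjoint_left.1 (hdisj a b hne')) haW hbW
  refine ⟨⟨⟨v, hinj⟩, ?_⟩⟩
  intro a b
  by_cases hab : a = b
  · subst hab
    exact iff_of_false (G.irrefl) (H.irrefl)
  · exact h2 a b a.isLt b.isLt hab

lemma rodl_clean {α : Type*} [DecidableEq α] {A : Finset α} (P : Finpartition A)
    (G : SimpleGraph α) [DecidableRel G.Adj] (ε : ℝ) (R : ℕ) (hε0 : 0 < ε) (hR1 : 1 ≤ R)
    (hU : P.IsUniform G ε) (hεR : ε ≤ 1/(32 * R)) (ht : 8 * R ≤ P.parts.card) :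
    ∃ T ⊆ P.parts, T.card = R ∧
      ∀ s ∈ T, ∀ u ∈ T, s ≠ u → G.IsUniform ε s u := by
  set t := P.parts.card with htt
  have ht0 : 0 < t := by omega
  have ht0R : (0:ℝ) < t := by exact_mod_cast ht0
  have hR0 : (0:ℝ) < R := by exact_mod_cast hR1
  -- the number of non-uniform (ordered) pairs is at most ε t^2
  have hnU : ((P.nonUniforms G ε).card : ℝ) ≤ ε * t^2 := by
    have h1 : ((P.nonUniforms G ε).card : ℝ) ≤ ((t * (t-1) : ℕ) : ℝ) * ε := hU
    have h2 : ((t * (t-1) : ℕ) : ℝ) ≤ (t:ℝ)^2 := by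
      have : (t * (t-1) : ℕ) ≤ t^2 := by
        calc t * (t-1) ≤ t * t := Nat.mul_le_mul_left t (by omega)
        _ = t^2 := (sq t).symm
      exact_mod_cast this
    calc ((P.nonUniforms G ε).card : ℝ) ≤ ((t * (t-1) : ℕ) : ℝ) * ε := h1
    _ ≤ (t:ℝ)^2 * ε := by nlinarith
    _ = ε * t^2 := by ring
  -- fibers
  set F : Finset α → Finset (Finset α × Finset α) :=
    fun s => (P.nonUniforms G ε).filter (fun p => p.1 = s) with hFdef
  have hfib : ∑ s ∈ P.parts, (F s).card = (P.nonUniforms G ε).card := by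
    rw [hFdef]
    refine (Finset.card_eq_sum_card_fiberwise (fun p hp => ?_)).symm
    obtain ⟨u, v⟩ := p
    exact ((P.mk_mem_nonUniforms (G := G)).1 hp).1
  -- heavy parts are few
  set heavy := P.parts.filter (fun s => 4*ε*(t:ℝ) ≤ ((F s).card : ℝ)) with hheavy
  have hheavycard : ((heavy).card : ℝ) ≤ (t:ℝ)/4 := by
    have h1 : ((heavy).card : ℝ) * (4*ε*(t:ℝ)) ≤ ∑ s ∈ P.parts, ((F s).card : ℝ) := by
      calc ((heavy).card : ℝ) * (4*ε*(t:ℝ)) = ∑ _s ∈ heavy, 4*ε*(t:ℝ) := by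
            rw [Finset.sum_const]; ring
      _ ≤ ∑ s ∈ heavy, ((F s).card : ℝ) :=
            Finset.sum_le_sum (fun s hs => (Finset.mem_filter.1 hs).2)
      _ ≤ ∑ s ∈ P.parts, ((F s).card : ℝ) :=
            Finset.sum_le_sum_of_subset_of_nonneg (Finset.filter_subset _ _)
              (fun s _ _ => by positivity)
    have h2 : ∑ s ∈ P.parts, ((F s).card : ℝ) ≤ ε * t^2 := by
      have := hfib
      have hc : (∑ s ∈ P.parts, ((F s).card : ℝ)) = (((P.nonUniforms G ε).card : ℕ) : ℝ) := by
        rw [← this]; push_cast; rfl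
      rw [hc]; exact hnU
    have h3 : ((heavy).card : ℝ) * (4*ε*(t:ℝ)) ≤ ε * t^2 := le_trans h1 h2
    have h4 : (0:ℝ) < 4*ε*(t:ℝ) := by positivity
    rw [← mul_le_mul_iff_of_pos_right h4]
    calc ((heavy).card : ℝ) * (4*ε*(t:ℝ)) ≤ ε * t^2 := h3
    _ = ((t:ℝ)/4) * (4*ε*(t:ℝ)) := by ring
  set light := P.parts \ heavy with hlight
  have hlightcard : 3*(t:ℝ)/4 ≤ ((light).card : ℝ) := by
    have h1 : (light).card = t - heavy.card := by
      rw [hlight, htt]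
      exact Finset.card_sdiff_of_subset (Finset.filter_subset _ _)
    have h2 : heavy.card ≤ t := by
      rw [htt]; exact Finset.card_le_card (Finset.filter_subset _ _)
    have h3 : ((light).card : ℝ) = (t:ℝ) - heavy.card := by
      rw [h1]; exact Nat.cast_sub h2
    rw [h3]; linarith
  -- bad partners of a light part
  have hbp : ∀ s ∈ light, ((P.parts.filter (fun u => u ≠ s ∧ ¬ G.IsUniform ε s u)).card : ℝ)
      < 4*ε*(t:ℝ) := by
    intro s hs
    have hsl : ¬ (4*ε*(t:ℝ) ≤ ((F s).card : ℝ)) := by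
      have := (Finset.mem_sdiff.1 hs).2
      rw [hheavy] at this
      intro hcon
      exact this (Finset.mem_filter.2 ⟨(Finset.mem_sdiff.1 hs).1, hcon⟩)
    push_neg at hsl
    refine lt_of_le_of_lt ?_ hsl
    have hinj : ((P.parts.filter (fun u => u ≠ s ∧ ¬ G.IsUniform ε s u)).card : ℕ) ≤
        (F s).card := by
      refine Finset.card_le_card_of_injOn (fun u => (s, u)) ?_ ?_
      · intro u hu
        obtain ⟨hu1, hu2, hu3⟩ := Finset.mem_filter.1 hu
        rw [hFdef]
        refine Finset.mem_filter.2 ⟨?_, rfl⟩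
        exact (P.mk_mem_nonUniforms (G := G)).2
          ⟨(Finset.mem_sdiff.1 hs).1, hu1, fun hh => hu2 hh.symm, hu3⟩
      · intro u _ u' _ huu
        simpa using huu
    exact_mod_cast hinj
  -- greedy extraction
  have claim : ∀ k : ℕ, ∀ B ⊆ light, ((k:ℝ) * (4*ε*(t:ℝ) + 1) ≤ (B.card:ℝ)) →
      ∃ T ⊆ B, T.card = k ∧ ∀ s ∈ T, ∀ u ∈ T, s ≠ u → G.IsUniform ε s u := by
    intro k
    induction k with
    | zero =>
        intro B _ _
        exact ⟨∅, Finset.empty_subset _, Finset.card_empty, fun s hs => absurd hs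
          (Finset.notMem_empty s)⟩
    | succ k ihk =>
        intro B hB hBcard
        have hBpos : (0:ℝ) < (B.card:ℝ) := by
          have h1 : (0:ℝ) < ((k:ℝ)+1) * (4*ε*(t:ℝ) + 1) := by positivity
          push_cast at hBcard
          linarith
        have hBne : B.Nonempty := by
          rw [← Finset.card_pos]; exact_mod_cast hBpos
        obtain ⟨s, hsB⟩ := hBne
        set bp := P.parts.filter (fun u => u ≠ s ∧ ¬ G.IsUniform ε s u) with hbpdef
        set B' := B \ (insert s bp) with hB'
        have hB'sub : B' ⊆ light := subset_trans (Finset.sdiff_subset) hB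
        have hB'card : (k:ℝ) * (4*ε*(t:ℝ) + 1) ≤ (B'.card:ℝ) := by
          have h1 : B.card ≤ B'.card + (insert s bp).card :=
            Finset.card_le_card_sdiff_add_card
          have h2 : (insert s bp).card ≤ bp.card + 1 := Finset.card_insert_le _ _
          have h3 : ((bp).card : ℝ) < 4*ε*(t:ℝ) := hbp s (hB hsB)
          have h4 : ((B).card : ℝ) ≤ (B'.card:ℝ) + ((bp).card : ℝ) + 1 := by
            have := le_trans h1 (by omega : B'.card + (insert s bp).card ≤
              B'.card + (bp.card + 1))
            exact_mod_cast this
          push_cast at hBcard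
          linarith
        obtain ⟨T', hT'sub, hT'card, hT'unif⟩ := ihk B' hB'sub hB'card
        have hsT' : s ∉ T' := by
          intro hcon
          have := hT'sub hcon
          rw [hB'] at this
          exact (Finset.mem_sdiff.1 this).2 (Finset.mem_insert_self s bp)
        refine ⟨insert s T', ?_, ?_, ?_⟩
        · intro u hu
          rcases Finset.mem_insert.1 hu with rfl | hu'
          · exact hsB
          · exact Finset.sdiff_subset (hT'sub hu')
        · rw [Finset.card_insert_of_notMem hsT', hT'card]
        · intro a ha b hb hab
          have hunif_s : ∀ u ∈ T', G.IsUniform ε s u := by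
            intro u hu
            have huB' := hT'sub hu
            rw [hB'] at huB'
            have hnotbp : u ∉ insert s bp := (Finset.mem_sdiff.1 huB').2
            have hubp : u ∉ bp := fun hc => hnotbp (Finset.mem_insert_of_mem hc)
            have hune : u ≠ s := fun hc => hnotbp (by rw [hc]; exact Finset.mem_insert_self s bp)
            have huparts : u ∈ P.parts := (Finset.mem_sdiff.1 (hB'sub huB')).1
            by_contra hcon
            exact hubp (Finset.mem_filter.2 ⟨huparts, hune, hcon⟩)
          rcases Finset.mem_insert.1 ha with rfl | ha' <;>
            rcases Finset.mem_insert.1 hb with rfl | hb'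
          · exact absurd rfl hab
          · exact hunif_s b hb'
          · exact (hunif_s a ha').symm
          · exact hT'unif a ha' b hb' hab
  -- apply the claim
  have hmain : (R:ℝ) * (4*ε*(t:ℝ) + 1) ≤ ((light).card:ℝ) := by
    have h1 : (R:ℝ) * (4*ε*(t:ℝ)) ≤ (t:ℝ)/8 := by
      have h2 : ε * (t:ℝ) ≤ (t:ℝ)/(32*R) := by
        rw [div_eq_mul_inv]
        calc ε * (t:ℝ) ≤ (1/(32*R)) * (t:ℝ) := mul_le_mul_of_nonneg_right hεR (by positivity)
        _ = (t:ℝ) * (32*(R:ℝ))⁻¹ := by ring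
      calc (R:ℝ) * (4*ε*(t:ℝ)) = 4*(R:ℝ) * (ε*(t:ℝ)) := by ring
      _ ≤ 4*(R:ℝ) * ((t:ℝ)/(32*R)) := by
          refine mul_le_mul_of_nonneg_left h2 (by positivity)
      _ = (t:ℝ)/8 := by field_simp; ring
    have h3 : (R:ℝ) ≤ (t:ℝ)/8 := by
      have : (8 * R : ℕ) ≤ t := ht
      have h4 : 8*(R:ℝ) ≤ (t:ℝ) := by exact_mod_cast this
      linarith
    have h5 : (R:ℝ) * (4*ε*(t:ℝ) + 1) = (R:ℝ) * (4*ε*(t:ℝ)) + (R:ℝ) := by ring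
    rw [h5]
    calc (R:ℝ) * (4*ε*(t:ℝ)) + (R:ℝ) ≤ (t:ℝ)/8 + (t:ℝ)/8 := by linarith
    _ ≤ 3*(t:ℝ)/4 := by linarith
    _ ≤ _ := hlightcard
  obtain ⟨T, hTsub, hTcard, hTunif⟩ := claim R light (subset_rfl) hmain
  exact ⟨T, subset_trans hTsub (Finset.sdiff_subset), hTcard, hTunif⟩


/-- Rödl's theorem: for every graph `H` and every `d > 0` there is `δ > 0` such that every
`H`-free graph `G` has a set `X` of at least `δ|V(G)|` vertices such that in one of `G[X]`
or the complement of `G` induced on `X`, every vertex has degree at most `d|X|`. -/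
theorem rodl_theorem (h : ℕ) (H : SimpleGraph (Fin h)) (d : ℝ) (hd : 0 < d) :
    ∃ δ : ℝ, 0 < δ ∧
      ∀ (n : ℕ) (G : SimpleGraph (Fin n)), ¬ Nonempty (H ↪g G) →
        ∃ X : Finset (Fin n), δ * n ≤ (X.card : ℝ) ∧
          ((∀ v ∈ X, ((X.filter (fun u => G.Adj v u)).card : ℝ) ≤ d * X.card) ∨
           (∀ v ∈ X, ((X.filter (fun u => Gᶜ.Adj v u)).card : ℝ) ≤ d * X.card)) := by
  classical
  rcases Nat.eq_zero_or_pos h with rfl | hh0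
  · refine ⟨1, one_pos, fun n G hfree => ?_⟩
    exact absurd ⟨⟨⟨Fin.elim0, fun a => a.elim0⟩, fun {a b} => a.elim0⟩⟩ hfree
  -- constants
  set σ : ℝ := min (d/32) (1/2) with hσdef
  have hσ0 : 0 < σ := lt_min (by linarith) (by norm_num)
  have hσ1 : σ ≤ 1 := le_trans (min_le_right _ _) (by norm_num)
  have hσd : σ ≤ d/32 := min_le_left _ _
  set r : ℕ := max 1 ⌈(32:ℝ)/d⌉₊ with hrdef
  have hr1 : 1 ≤ r := le_max_left _ _
  have hdr : (32:ℝ) ≤ d * r := by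
    have h1 : (32:ℝ)/d ≤ (⌈(32:ℝ)/d⌉₊ : ℝ) := Nat.le_ceil _
    have h2 : (⌈(32:ℝ)/d⌉₊:ℝ) ≤ (r:ℝ) := by
      exact_mod_cast le_max_right 1 ⌈(32:ℝ)/d⌉₊
    have h3 : (32:ℝ)/d ≤ (r:ℝ) := le_trans h1 h2
    calc (32:ℝ) = d * ((32:ℝ)/d) := by field_simp
    _ ≤ d * r := mul_le_mul_of_nonneg_left h3 hd.le
  set q : ℕ := max h r with hqdef
  set R : ℕ := 4^(3*q) with hRdef
  have hR1 : 1 ≤ R := Nat.one_le_pow _ _ (by norm_num)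
  have hRR : (0:ℝ) < R := by exact_mod_cast hR1
  set ε : ℝ := min ((σ/2)^(h+1) / ((h:ℝ)+1)) (1/(32*(R:ℝ))) with hεdef
  have hε0 : 0 < ε := by
    refine lt_min (div_pos (pow_pos (by linarith) _) (by positivity)) ?_
    have : (0:ℝ) < 32*(R:ℝ) := by linarith
    exact one_div_pos.2 this
  have hεσ : ((h:ℝ)+1) * ε ≤ (σ/2)^(h+1) := by
    have h1 : ε ≤ (σ/2)^(h+1) / ((h:ℝ)+1) := min_le_left _ _
    have h2 := (le_div_iff₀ (show (0:ℝ) < (h:ℝ)+1 by positivity)).1 h1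
    linarith
  have hεR : ε ≤ 1/(32*(R:ℝ)) := min_le_right _ _
  set l : ℕ := 8*R with hldef
  set M : ℕ := SzemerediRegularity.bound ε l with hMdef
  have hM1 : 1 ≤ M := SzemerediRegularity.bound_pos ε l
  have hMR : (0:ℝ) < M := by exact_mod_cast hM1
  set N : ℕ := 2*M + l with hNdef
  set δ : ℝ := min (1/(4*(M:ℝ))) (1/((N:ℝ)+1)) with hδdef
  have hδ0 : 0 < δ := by
    refine lt_min (one_div_pos.2 (by linarith)) (one_div_pos.2 (by positivity))
  refine ⟨δ, hδ0, fun n G hfree => ?_⟩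
  by_cases hn : n ≤ N
  · -- small case
    rcases Nat.eq_zero_or_pos n with rfl | hn1
    · refine ⟨∅, by simp, Or.inl (fun v hv => absurd hv (Finset.notMem_empty v))⟩
    · refine ⟨{⟨0, hn1⟩}, ?_, Or.inl ?_⟩
      · have h1 : δ ≤ 1/((N:ℝ)+1) := min_le_right _ _
        have h2 : (n:ℝ) ≤ (N:ℝ)+1 := by exact_mod_cast (by omega : n ≤ N + 1)
        have hδn : δ * n ≤ 1 := by
          calc δ * n ≤ (1/((N:ℝ)+1)) * ((N:ℝ)+1) := by
                refine mul_le_mul h1 h2 (Nat.cast_nonneg n) ?_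
                positivity
          _ = 1 := by field_simp
        simpa using hδn
      · intro v hv
        rw [Finset.mem_singleton] at hv
        subst hv
        have hX : ({(⟨0, hn1⟩ : Fin n)} : Finset (Fin n)).filter
            (fun u => G.Adj ⟨0, hn1⟩ u) = ∅ := by
          rw [Finset.eq_empty_iff_forall_notMem]
          intro u hu
          obtain ⟨hu1, hu2⟩ := Finset.mem_filter.1 hu
          rw [Finset.mem_singleton] at hu1
          subst hu1
          exact G.irrefl hu2
        rw [hX]
        simp only [Finset.card_empty, Nat.cast_zero, Finset.card_singleton, Nat.cast_one,
          mul_one]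
        linarith
  · -- big case
    push_neg at hn
    have hl_n : l ≤ Fintype.card (Fin n) := by rw [Fintype.card_fin]; omega
    obtain ⟨P, hPequi, hPl, hPM, hPunif⟩ := szemeredi_regularity G hε0 hl_n
    set t := P.parts.card with htdef
    have ht8R : 8*R ≤ t := hPl
    have htM : t ≤ M := hPM
    have ht0 : 0 < t := by omega
    obtain ⟨T, hTsub, hTcard, hTunif⟩ := rodl_clean P G ε R hε0 hR1 hPunif hεR ht8R
    set c : Finset (Fin n) → Finset (Fin n) → Fin 3 := fun A B =>
      if (G.edgeDensity A B : ℝ) < σ then 0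
      else if 1 - σ < (G.edgeDensity A B : ℝ) then 1 else 2 with hcdef
    have hcsymm : ∀ A B, c A B = c B A := by
      intro A B
      simp only [hcdef]
      rw [SimpleGraph.edgeDensity_comm G A B]
    have hTR : 4^(3*q) ≤ T.card := by rw [hTcard]
    obtain ⟨S, hSsub, hScard, i, hmono⟩ := rodl_ramsey q T c hcsymm hTR
    -- sizes of parts
    set m : ℕ := n / t with hmdef
    have hnuniv : (Finset.univ : Finset (Fin n)).card = n := by simp
    have hpartlo : ∀ s ∈ P.parts, m ≤ s.card := by
      intro s hs
      have := hPequi.average_le_card_part hs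
      rwa [hnuniv] at this
    have hparthi : ∀ s ∈ P.parts, s.card ≤ m + 1 := by
      intro s hs
      have := hPequi.card_part_le_average_add_one hs
      rwa [hnuniv] at this
    have htn : t ≤ n := by omega
    have hm1 : 1 ≤ m := (Nat.one_le_div_iff ht0).2 htn
    have hmlow : (n:ℝ)/(2*(M:ℝ)) ≤ (m:ℝ) := by
      have h1 := Nat.div_add_mod n t
      have h2 : n % t < t := Nat.mod_lt n ht0
      have h3 : n < t*(m+1) := by
        rw [hmdef, Nat.mul_succ]
        omega
      have h4 : (n:ℝ) < (t:ℝ)*((m:ℝ)+1) := by exact_mod_cast h3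
      have h5 : (t:ℝ) ≤ (M:ℝ) := by exact_mod_cast htM
      have h6 : (n:ℝ) < (M:ℝ)*((m:ℝ)+1) := by
        have hm0 : (0:ℝ) < (m:ℝ)+1 := by positivity
        nlinarith
      have h7 : 2*(M:ℝ) ≤ (n:ℝ) := by exact_mod_cast (by omega : 2*M ≤ n)
      have h2M : (0:ℝ) < 2*(M:ℝ) := by linarith
      rw [div_le_iff₀ h2M]
      nlinarith
    have hδn4M : δ * n ≤ (n:ℝ)/(4*(M:ℝ)) := by
      have h1 : δ ≤ 1/(4*(M:ℝ)) := min_le_left _ _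
      calc δ * n ≤ (1/(4*(M:ℝ))) * n :=
            mul_le_mul_of_nonneg_right h1 (Nat.cast_nonneg n)
      _ = (n:ℝ)/(4*(M:ℝ)) := by ring
    have hsize : δ * n ≤ ((r:ℕ):ℝ) * (m:ℝ) / 2 := by
      have hM0 : (M:ℝ) ≠ 0 := ne_of_gt hMR
      have heq : (n:ℝ)/(4*(M:ℝ)) = ((n:ℝ)/(2*(M:ℝ)))/2 := by
        rw [div_div, show (2*(M:ℝ))*2 = 4*(M:ℝ) from by ring]
      have h1 : (n:ℝ)/(4*(M:ℝ)) ≤ (m:ℝ)/2 := by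
        rw [heq]
        linarith [hmlow]
      have h2 : (m:ℝ)/2 ≤ ((r:ℕ):ℝ) * (m:ℝ)/2 := by
        have hr1R : (1:ℝ) ≤ (r:ℝ) := by exact_mod_cast hr1
        have hm0 : (0:ℝ) ≤ (m:ℝ) := Nat.cast_nonneg m
        nlinarith
      linarith
    -- an enumeration helper
    have henum : ∀ k : ℕ, k ≤ q → ∃ W : Fin k → Finset (Fin n),
        (∀ j, W j ∈ S) ∧ (∀ j j' : Fin k, j ≠ j' → W j ≠ W j') := by
      intro k hk
      obtain ⟨S', hS'sub, hS'card⟩ := Finset.exists_subset_card_eq (hScard ▸ hk)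
      set e := (Finset.equivFinOfCardEq hS'card).symm with hedef
      refine ⟨fun j => (e j : Finset (Fin n)), fun j => hS'sub (e j).2, ?_⟩
      intro j j' hjj hc
      exact hjj (e.injective (Subtype.ext hc))
    -- dispatch on the colour
    have hcases : i = 0 ∨ i = 1 ∨ i = 2 := by fin_cases i <;> simp
    rcases hcases with rfl | rfl | rfl
    · -- sparse case
      obtain ⟨W, hWS, hWinj⟩ := henum r (le_max_right h r)
      have hWparts : ∀ j, W j ∈ P.parts := fun j => hTsub (hSsub (hWS j))
      have hWdisj : ∀ j j' : Fin r, j ≠ j' → Disjoint (W j) (W j') :=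
        fun j j' hjj => P.disjoint (hWparts j) (hWparts j') (hWinj j j' hjj)
      have hWdens : ∀ j j' : Fin r, j ≠ j' → (G.edgeDensity (W j) (W j') : ℝ) ≤ σ := by
        intro j j' hjj
        have hc0 := hmono (W j) (hWS j) (W j') (hWS j') (hWinj j j' hjj)
        simp only [hcdef] at hc0
        split_ifs at hc0 with h1 h2
        · exact le_of_lt h1
        · exact absurd hc0 (by decide)
        · exact absurd hc0 (by decide)
      obtain ⟨Y, hY1, hY2⟩ := rodl_sparse G d σ r m hm1 hr1 hσ0.le hσd hdr hd W hWdisj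
        (fun j => hpartlo _ (hWparts j)) (fun j => hparthi _ (hWparts j)) hWdens
      exact ⟨Y, le_trans hsize hY1, Or.inl hY2⟩
    · -- dense case
      obtain ⟨W, hWS, hWinj⟩ := henum r (le_max_right h r)
      have hWparts : ∀ j, W j ∈ P.parts := fun j => hTsub (hSsub (hWS j))
      have hWdisj : ∀ j j' : Fin r, j ≠ j' → Disjoint (W j) (W j') :=
        fun j j' hjj => P.disjoint (hWparts j) (hWparts j') (hWinj j j' hjj)
      have hWdens : ∀ j j' : Fin r, j ≠ j' → ((Gᶜ).edgeDensity (W j) (W j') : ℝ) ≤ σ := by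
        intro j j' hjj
        have hc0 := hmono (W j) (hWS j) (W j') (hWS j') (hWinj j j' hjj)
        simp only [hcdef] at hc0
        have hdense : 1 - σ < (G.edgeDensity (W j) (W j') : ℝ) := by
          split_ifs at hc0 with h1 h2
          · exact absurd hc0 (by decide)
          · exact h2
          · exact absurd hc0 (by decide)
        have hcompl := SimpleGraph.edgeDensity_add_edgeDensity_compl G
          (P.nonempty_of_mem_parts (hWparts j)) (P.nonempty_of_mem_parts (hWparts j'))
          (hWdisj j j' hjj)
        have hcomplR : ((G.edgeDensity (W j) (W j') : ℚ) : ℝ) +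
            (((Gᶜ).edgeDensity (W j) (W j') : ℚ) : ℝ) = 1 := by
          exact_mod_cast congrArg (fun x : ℚ => (x : ℝ)) hcompl
        linarith
      obtain ⟨Y, hY1, hY2⟩ := rodl_sparse (Gᶜ) d σ r m hm1 hr1 hσ0.le hσd hdr hd W hWdisj
        (fun j => hpartlo _ (hWparts j)) (fun j => hparthi _ (hWparts j)) hWdens
      exact ⟨Y, le_trans hsize hY1, Or.inr hY2⟩
    · -- middle case : embed H, contradiction
      obtain ⟨W, hWS, hWinj⟩ := henum h (le_max_left h r)
      have hWparts : ∀ j, W j ∈ P.parts := fun j => hTsub (hSsub (hWS j))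
      have hWdisj : ∀ j j' : Fin h, j ≠ j' → Disjoint (W j) (W j') :=
        fun j j' hjj => P.disjoint (hWparts j) (hWparts j') (hWinj j j' hjj)
      have hWne : ∀ j, (W j).Nonempty := fun j => P.nonempty_of_mem_parts (hWparts j)
      have hWunif : ∀ j j' : Fin h, j ≠ j' → G.IsUniform ε (W j) (W j') :=
        fun j j' hjj => hTunif _ (hSsub (hWS j)) _ (hSsub (hWS j')) (hWinj j j' hjj)
      have hWmid : ∀ j j' : Fin h, j ≠ j' →
          σ ≤ (G.edgeDensity (W j) (W j') : ℝ) ∧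
          (G.edgeDensity (W j) (W j') : ℝ) ≤ 1 - σ := by
        intro j j' hjj
        have hc0 := hmono (W j) (hWS j) (W j') (hWS j') (hWinj j j' hjj)
        simp only [hcdef] at hc0
        split_ifs at hc0 with h1 h2
        · exact absurd hc0 (by decide)
        · exact absurd hc0 (by decide)
        · push_neg at h1 h2
          exact ⟨h1, h2⟩
      exact absurd (rodl_embed G H σ ε hσ0 hσ1 hε0 hεσ W hWne hWdisj hWunif
        (fun j j' hjj => (hWmid j j' hjj).1) (fun j j' hjj => (hWmid j j' hjj).2)) hfree
end

section
/- For every integer n ≥ 2 and every real c with 0 < c ≤ 1/2, either f(n) ≥ 1/(4c) or f(n) ≥ f(c^σ·n/2) + f(ε·n/2). -/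
open SimpleGraph
open scoped Classical

/-- A cograph is a graph with no induced path on 4 vertices. -/
def IsCograph {V : Type} (G : SimpleGraph V) : Prop :=
  ¬ Nonempty (pathGraph 4 ↪g G)

/-- `phi G` is the maximum number of vertices of an induced subgraph of `G`
that is a cograph. -/
noncomputable def phi {n : ℕ} (G : SimpleGraph (Fin n)) : ℕ :=
  sSup {k | ∃ s : Finset (Fin n), s.card = k ∧ IsCograph (G.induce (s : Set (Fin n)))}

/-- `fI I x` is the minimum of `phi G` over graphs `G` in the class `I` with `⌈x⌉`
vertices. -/
noncomputable def fI (I : ∀ n : ℕ, SimpleGraph (Fin n) → Prop) (x : ℝ) : ℕ :=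
  sInf {m | ∃ G : SimpleGraph (Fin ⌈x⌉₊), I ⌈x⌉₊ G ∧ phi G = m}

/-! ### Auxiliary lemmas -/

/-- A concrete witness for containing an induced `P₄` inside a finset. -/
def P4in {V : Type} (G : SimpleGraph V) (s : Finset V) : Prop :=
  ∃ g : Fin 4 → V, (∀ i, g i ∈ s) ∧ Function.Injective g ∧
    ∀ i j, (pathGraph 4).Adj i j ↔ G.Adj (g i) (g j)

lemma isCograph_induce_iff {V : Type} (G : SimpleGraph V) (s : Finset V) :
    IsCograph (G.induce (s : Set V)) ↔ ¬ P4in G s := by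
  constructor
  · rintro h ⟨g, hmem, hinj, hadj⟩
    exact h ⟨⟨⟨fun i => ⟨g i, hmem i⟩, fun a b hab => hinj (congrArg Subtype.val hab)⟩,
      fun {a b} => (hadj a b).symm⟩⟩
  · rintro h ⟨e⟩
    exact h ⟨fun i => (e i).1, fun i => (e i).2,
      fun a b hab => e.injective (Subtype.ext hab),
      fun i j => e.map_rel_iff.symm⟩

lemma phi_bddAbove {n : ℕ} (G : SimpleGraph (Fin n)) :
    BddAbove {k | ∃ s : Finset (Fin n), s.card = k ∧
      IsCograph (G.induce (s : Set (Fin n)))} := by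
  refine ⟨n, ?_⟩
  rintro k ⟨s, rfl, -⟩
  simpa using (Finset.card_le_univ s)

lemma phi_le {n : ℕ} {G : SimpleGraph (Fin n)} {s : Finset (Fin n)}
    (h : IsCograph (G.induce (s : Set (Fin n)))) : s.card ≤ phi G :=
  le_csSup (phi_bddAbove G) ⟨s, rfl, h⟩

lemma empty_cograph {n : ℕ} (G : SimpleGraph (Fin n)) :
    IsCograph (G.induce ((∅ : Finset (Fin n)) : Set (Fin n))) := by
  rw [isCograph_induce_iff]
  rintro ⟨g, hmem, -, -⟩
  simpa using hmem 0

lemma phi_spec {n : ℕ} (G : SimpleGraph (Fin n)) :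
    ∃ s : Finset (Fin n), s.card = phi G ∧ IsCograph (G.induce (s : Set (Fin n))) := by
  have h : phi G ∈ {k | ∃ s : Finset (Fin n), s.card = k ∧
      IsCograph (G.induce (s : Set (Fin n)))} :=
    Nat.sSup_mem ⟨0, ∅, Finset.card_empty, empty_cograph G⟩ (phi_bddAbove G)
  exact h

lemma fI_spec (I : ∀ n : ℕ, SimpleGraph (Fin n) → Prop)
    (hall : ∀ m : ℕ, ∃ G : SimpleGraph (Fin m), I m G) (x : ℝ) :
    ∃ G : SimpleGraph (Fin ⌈x⌉₊), I ⌈x⌉₊ G ∧ phi G = fI I x := by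
  obtain ⟨G, hG⟩ := hall ⌈x⌉₊
  have h : fI I x ∈ {m | ∃ G : SimpleGraph (Fin ⌈x⌉₊), I ⌈x⌉₊ G ∧ phi G = m} :=
    Nat.sInf_mem ⟨phi G, G, hG, rfl⟩
  exact h

/-- Extraction: inside any big enough finset of a graph of the class there is a cograph
of size at least `fI I x`. -/
lemma ext_lemma (I : ∀ n : ℕ, SimpleGraph (Fin n) → Prop) (hI : Hereditary I)
    {n : ℕ} {G : SimpleGraph (Fin n)} (hG : I n G)
    (x : ℝ) (s : Finset (Fin n)) (hx : x ≤ (s.card : ℝ)) :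
    ∃ X : Finset (Fin n), X ⊆ s ∧ fI I x ≤ X.card ∧
      IsCograph (G.induce (X : Set (Fin n))) := by
  have hks : ⌈x⌉₊ ≤ s.card := Nat.ceil_le.mpr hx
  obtain ⟨t, hts, htk⟩ := Finset.exists_subset_card_eq hks
  let φe : Fin ⌈x⌉₊ ≃ ↥t := (t.equivFin.trans (finCongr htk)).symm
  let emb : Fin ⌈x⌉₊ → Fin n := fun i => (φe i : Fin n)
  have hembinj : Function.Injective emb :=
    Subtype.val_injective.comp φe.injective
  have hembt : ∀ i, emb i ∈ t := fun i => (φe i).2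
  let H : SimpleGraph (Fin ⌈x⌉₊) := G.comap emb
  have hHI : I ⌈x⌉₊ H :=
    hI _ n G H hG ⟨SimpleGraph.Embedding.comap ⟨emb, hembinj⟩ G⟩
  have hfle : fI I x ≤ phi H := Nat.sInf_le ⟨H, hHI, rfl⟩
  obtain ⟨u, hu_card, hu_cog⟩ := phi_spec H
  refine ⟨u.image emb, ?_, ?_, ?_⟩
  · intro a ha
    obtain ⟨i, -, rfl⟩ := Finset.mem_image.mp ha
    exact hts (hembt i)
  · rw [Finset.card_image_of_injective _ hembinj, hu_card]
    exact hfle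
  · rw [isCograph_induce_iff]
    rintro ⟨g, hgmem, hginj, hgadj⟩
    rw [isCograph_induce_iff] at hu_cog
    have hch : ∀ i, ∃ j, j ∈ u ∧ emb j = g i := by
      intro i
      obtain ⟨j, hj, hje⟩ := Finset.mem_image.mp (hgmem i)
      exact ⟨j, hj, hje⟩
    choose g' hg'u hg'e using hch
    refine hu_cog ⟨g', hg'u, ?_, ?_⟩
    · intro a b hab
      apply hginj
      rw [← hg'e a, ← hg'e b, hab]
    · intro i j
      have : H.Adj (g' i) (g' j) ↔ G.Adj (g i) (g j) := by
        rw [← hg'e i, ← hg'e j]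
        exact SimpleGraph.comap_adj
      rw [this]
      exact hgadj i j

lemma helperAdj (p : Fin 4 → Bool) (ha : ∃ a, p a = true) (hb : ∃ b, p b = false) :
    ∃ i j : Fin 4, p i = true ∧ p j = false ∧ ((i : ℕ) + 1 = (j : ℕ) ∨ (j : ℕ) + 1 = (i : ℕ)) := by
  revert ha hb; revert p; decide

lemma helperNonAdj (p : Fin 4 → Bool) (ha : ∃ a, p a = true) (hb : ∃ b, p b = false) :
    ∃ i j : Fin 4, p i = true ∧ p j = false ∧
      ¬ ((i : ℕ) + 1 = (j : ℕ) ∨ (j : ℕ) + 1 = (i : ℕ)) := by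
  revert ha hb; revert p; decide

/-- The union of two cographs with uniform cross adjacency is a cograph. -/
lemma union_cograph {V : Type} [DecidableEq V] (G : SimpleGraph V) {s t : Finset V}
    (hcross : (∀ a ∈ s, ∀ b ∈ t, ¬ G.Adj a b) ∨ (∀ a ∈ s, ∀ b ∈ t, G.Adj a b))
    (hs : IsCograph (G.induce (s : Set V))) (ht : IsCograph (G.induce (t : Set V))) :
    IsCograph (G.induce ((s ∪ t : Finset V) : Set V)) := by
  rw [isCograph_induce_iff] at hs ht ⊢
  rintro ⟨g, hmem, hinj, hadj⟩
  by_cases halls : ∀ i, g i ∈ s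
  · exact hs ⟨g, halls, hinj, hadj⟩
  by_cases hallt : ∀ i, g i ∈ t
  · exact ht ⟨g, hallt, hinj, hadj⟩
  push_neg at halls hallt
  obtain ⟨b0, hb0⟩ := halls
  obtain ⟨a0, ha0⟩ := hallt
  have hmem' : ∀ i, g i ∈ s ∨ g i ∈ t := by
    intro i
    have := hmem i
    rwa [Finset.mem_union] at this
  have ha0s : g a0 ∈ s := (hmem' a0).resolve_right ha0
  set p : Fin 4 → Bool := fun i => decide (g i ∈ s) with hp
  have hpa : ∃ a, p a = true := ⟨a0, decide_eq_true ha0s⟩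
  have hpb : ∃ b, p b = false := ⟨b0, decide_eq_false hb0⟩
  have hmemt : ∀ i, p i = false → g i ∈ t := by
    intro i hi
    exact (hmem' i).resolve_left (of_decide_eq_false hi)
  rcases hcross with hno | hyes
  · obtain ⟨i, j, hi, hj, hadj'⟩ := helperAdj p hpa hpb
    have hpath : (pathGraph 4).Adj i j := pathGraph_adj.mpr hadj'
    exact hno _ (of_decide_eq_true hi) _ (hmemt j hj) ((hadj i j).mp hpath)
  · obtain ⟨i, j, hi, hj, hnadj⟩ := helperNonAdj p hpa hpb
    have hGadj : G.Adj (g i) (g j) := hyes _ (of_decide_eq_true hi) _ (hmemt j hj)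
    exact hnadj (pathGraph_adj.mp ((hadj i j).mpr hGadj))

lemma card_interedges_eq_sum {α β : Type*} [DecidableEq α] [DecidableEq β]
    (r : α → β → Prop) [∀ a, DecidablePred (r a)] (s : Finset α) (t : Finset β) :
    (Rel.interedges r s t).card = ∑ a ∈ s, (t.filter (r a)).card := by
  rw [Rel.interedges_eq_biUnion, Finset.card_biUnion]
  · simp
  · intro x hx y hy hxy
    rw [Function.onFun, Finset.disjoint_left]
    intro pq hp hq
    simp only [Finset.mem_map, Function.Embedding.coeFn_mk] at hp hq
    obtain ⟨a, -, rfl⟩ := hp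
    obtain ⟨b, -, h⟩ := hq
    injection h with h1 h2
    exact hxy h1.symm

lemma filter_inst_eq {α : Type*} (p : α → Prop) (h1 h2 : DecidablePred p) (s : Finset α) :
    @Finset.filter α p h1 s = @Finset.filter α p h2 s :=
  (Finset.filter_congr_decidable s p h1).trans (Finset.filter_congr_decidable s p h2).symm

/-- At least half the vertices in A have small degree (w.r.t. r) into B. -/
lemma count_half {V : Type} [DecidableEq V] (r : V → V → Prop)
    (A B : Finset V) (c : ℝ) (hc : 0 < c) (hB : (0:ℝ) < B.card)
    (hsum : (∑ a ∈ A, ((B.filter (r a)).card : ℝ)) ≤ c * A.card * B.card) :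
    ∃ A' : Finset V, A' ⊆ A ∧
      (∀ a ∈ A', ((B.filter (r a)).card : ℝ) ≤ 2 * c * B.card) ∧
      (A.card : ℝ) / 2 ≤ (A'.card : ℝ) := by
  set A' := A.filter fun a => ((B.filter (r a)).card : ℝ) ≤ 2 * c * B.card with hA'
  set Abad := A.filter fun a => ¬ ((B.filter (r a)).card : ℝ) ≤ 2 * c * B.card with hAbad
  have hsplit : A'.card + Abad.card = A.card := Finset.card_filter_add_card_filter_not _
  have hlow : 2 * c * B.card * Abad.card ≤ ∑ a ∈ Abad, ((B.filter (r a)).card : ℝ) := by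
    have := Finset.sum_le_sum (s := Abad)
      (f := fun _ => 2 * c * (B.card:ℝ)) (g := fun a => ((B.filter (r a)).card : ℝ))
      (fun a ha => le_of_lt (not_le.mp (Finset.mem_filter.mp ha).2))
    simpa [mul_comm, mul_assoc, mul_left_comm] using this
  have hsub : ∑ a ∈ Abad, ((B.filter (r a)).card : ℝ) ≤ ∑ a ∈ A, ((B.filter (r a)).card : ℝ) :=
    Finset.sum_le_sum_of_subset_of_nonneg (Finset.filter_subset _ _)
      (fun a _ _ => by positivity)
  have hbad : (Abad.card : ℝ) ≤ (A.card : ℝ) / 2 := by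
    nlinarith [mul_pos hc hB]
  have hcards : (A'.card : ℝ) + (Abad.card : ℝ) = (A.card : ℝ) := by exact_mod_cast hsplit
  exact ⟨A', Finset.filter_subset _ _, fun a ha => (Finset.mem_filter.mp ha).2, by linarith⟩

/-- Neighborhood count: removing common `r`-neighbours of X loses little of B. -/
lemma nbr_lemma {V : Type} [DecidableEq V] (r : V → V → Prop)
    (X B : Finset V) (d : ℝ)
    (hd : ∀ a ∈ X, ((B.filter (r a)).card : ℝ) ≤ d) :
    ∃ B'' : Finset V, B'' ⊆ B ∧ (∀ b ∈ B'', ∀ a ∈ X, ¬ r a b) ∧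
      (B.card : ℝ) - (B''.card : ℝ) ≤ X.card * d := by
  set B'' := B.filter fun b => ∀ a ∈ X, ¬ r a b with hB''
  have hsub : B \ B'' ⊆ X.biUnion fun a => B.filter (r a) := by
    intro b hb
    rw [Finset.mem_sdiff] at hb
    obtain ⟨hbB, hbn⟩ := hb
    rw [hB'', Finset.mem_filter] at hbn
    push_neg at hbn
    obtain ⟨a, ha, har⟩ := hbn hbB
    rw [Finset.mem_biUnion]
    exact ⟨a, ha, Finset.mem_filter.mpr ⟨hbB, har⟩⟩
  have h1 : (B \ B'').card ≤ ∑ a ∈ X, (B.filter (r a)).card :=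
    (Finset.card_le_card hsub).trans (Finset.card_biUnion_le)
  have h2 : (B \ B'').card = B.card - B''.card :=
    Finset.card_sdiff_of_subset (Finset.filter_subset _ _)
  have h3 : B''.card ≤ B.card := Finset.card_filter_le _ _
  have h4 : ((B \ B'').card : ℝ) = (B.card : ℝ) - (B''.card : ℝ) := by
    rw [h2, Nat.cast_sub h3]
  have h5 : (((∑ a ∈ X, (B.filter (r a)).card : ℕ)) : ℝ)
      ≤ (X.card : ℝ) * d := by
    push_cast
    calc (∑ a ∈ X, ((B.filter (r a)).card : ℝ))
        ≤ ∑ a ∈ X, d := Finset.sum_le_sum hd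
      _ = X.card * d := by rw [Finset.sum_const, nsmul_eq_mul]
  have h1' : ((B \ B'').card : ℝ) ≤ ((∑ a ∈ X, (B.filter (r a)).card : ℕ) : ℝ) := by
    exact_mod_cast h1
  refine ⟨B'', Finset.filter_subset _ _,
    fun b hb => (Finset.mem_filter.mp hb).2, ?_⟩
  calc (B.card : ℝ) - (B''.card : ℝ) = ((B \ B'').card : ℝ) := h4.symm
    _ ≤ ((∑ a ∈ X, (B.filter (r a)).card : ℕ) : ℝ) := h1'
    _ ≤ (X.card : ℝ) * d := h5

/-- Core of the argument, for a generic "bad" relation `r`. -/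
lemma main_core (I : ∀ n : ℕ, SimpleGraph (Fin n) → Prop) (hI : Hereditary I)
    {m : ℕ} (G : SimpleGraph (Fin m)) (hGI : I m G)
    (r : Fin m → Fin m → Prop)
    (hr : (∀ a b, ¬ r a b → ¬ G.Adj a b) ∨ (∀ a b, ¬ r a b → G.Adj a b))
    (A B : Finset (Fin m)) (hAB : Disjoint A B) (hBpos : (0:ℝ) < B.card)
    (c x y : ℝ) (hc : 0 < c)
    (hsum : (∑ a ∈ A, ((B.filter (r a)).card : ℝ)) ≤ c * A.card * B.card)
    (hxA : x ≤ (A.card : ℝ) / 2) (hyB : y ≤ (B.card : ℝ) / 2)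
    (hphismall : (phi G : ℝ) < 1 / (4 * c)) :
    fI I x + fI I y ≤ phi G := by
  obtain ⟨A', hA'A, hA'deg, hA'half⟩ := count_half r A B c hc hBpos hsum
  obtain ⟨X, hXA', hXcard, hXcog⟩ := ext_lemma I hI hGI x A' (le_trans hxA hA'half)
  have hXphi : X.card ≤ phi G := phi_le hXcog
  obtain ⟨B'', hB''B, hB''no, hnbr⟩ := nbr_lemma r X B (2 * c * B.card)
    (fun a ha => hA'deg a (hXA' ha))
  have hB''y : y ≤ (B''.card : ℝ) := by
    have h1 : (X.card : ℝ) ≤ (phi G : ℝ) := by exact_mod_cast hXphi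
    have h2 : (X.card : ℝ) * (2 * c * B.card) ≤ (phi G : ℝ) * (2 * c * B.card) := by
      apply mul_le_mul_of_nonneg_right h1
      positivity
    have h3 : (phi G : ℝ) * (2 * c * B.card) < (B.card : ℝ) / 2 := by
      have h4 : (phi G : ℝ) * (2 * c * B.card) < (1 / (4 * c)) * (2 * c * B.card) := by
        apply mul_lt_mul_of_pos_right hphismall
        positivity
      have h5 : (1 / (4 * c)) * (2 * c * B.card) = (B.card : ℝ) / 2 := by
        field_simp
        ring
      linarith
    linarith
  obtain ⟨Y, hYB'', hYcard, hYcog⟩ := ext_lemma I hI hGI y B'' hB''y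
  have hXA : X ⊆ A := hXA'.trans hA'A
  have hYB : Y ⊆ B := hYB''.trans hB''B
  have hXY : Disjoint X Y := hAB.mono hXA hYB
  have hnr : ∀ a ∈ X, ∀ b ∈ Y, ¬ r a b := by
    intro a ha b hb
    exact hB''no b (hYB'' hb) a ha
  have hcross : (∀ a ∈ X, ∀ b ∈ Y, ¬ G.Adj a b) ∨ (∀ a ∈ X, ∀ b ∈ Y, G.Adj a b) := by
    rcases hr with h | h
    · exact Or.inl fun a ha b hb => h a b (hnr a ha b hb)
    · exact Or.inr fun a ha b hb => h a b (hnr a ha b hb)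
  have hcog := union_cograph G hcross hXcog hYcog
  have hle := phi_le hcog
  rw [Finset.card_union_of_disjoint hXY] at hle
  calc fI I x + fI I y ≤ X.card + Y.card := add_le_add hXcard hYcard
    _ ≤ phi G := hle

/-- Step (1): for all `n ≥ 2` and `0 < c ≤ 1/2`, either `f(n) ≥ 1/(4c)` or
`f(n) ≥ f(c^σ·n/2) + f(ε·n/2)`. -/
theorem f_recursion_step
    (I : ∀ n : ℕ, SimpleGraph (Fin n) → Prop) (hI : Hereditary I)
    (hall : ∀ m : ℕ, ∃ G : SimpleGraph (Fin m), I m G)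
    (σ ε : ℝ) (hσ : 1 ≤ σ) (hε0 : 0 < ε) (hε1 : ε ≤ 1)
    (hdens : ∀ (n : ℕ) (G : SimpleGraph (Fin n)), 2 ≤ n → I n G →
      ∀ c : ℝ, 0 ≤ c → c ≤ 1 / 2 →
        ∃ A B : Finset (Fin n), Disjoint A B ∧ A.Nonempty ∧ B.Nonempty ∧
          c ^ σ * n ≤ (A.card : ℝ) ∧ ε * n ≤ (B.card : ℝ) ∧
          ((G.edgeDensity A B : ℝ) ≤ c ∨ 1 - c ≤ (G.edgeDensity A B : ℝ)))
    (n : ℕ) (hn : 2 ≤ n) (c : ℝ) (hc0 : 0 < c) (hc : c ≤ 1 / 2) :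
    1 / (4 * c) ≤ (fI I n : ℝ) ∨
      fI I (c ^ σ * n / 2) + fI I (ε * n / 2) ≤ fI I n := by
  by_cases hbig : 1 / (4 * c) ≤ (fI I n : ℝ)
  · exact Or.inl hbig
  right
  push_neg at hbig
  obtain ⟨G, hGI, hGphi⟩ := fI_spec I hall (n : ℝ)
  have hm : ⌈(n:ℝ)⌉₊ = n := Nat.ceil_natCast n
  have hmr : ((⌈(n:ℝ)⌉₊ : ℕ) : ℝ) = (n : ℝ) := by rw [hm]
  have h2m : 2 ≤ ⌈(n:ℝ)⌉₊ := by rw [hm]; exact hn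
  obtain ⟨A, B, hAB, hA0, hB0, hAc, hBc, hdich⟩ := hdens _ G h2m hGI c hc0.le hc
  rw [hmr] at hAc hBc
  have hBpos : (0:ℝ) < B.card := by exact_mod_cast hB0.card_pos
  have hApos : (0:ℝ) < A.card := by exact_mod_cast hA0.card_pos
  have hphismall : (phi G : ℝ) < 1 / (4 * c) := by rw [hGphi]; exact hbig
  have hxA : c ^ σ * n / 2 ≤ (A.card : ℝ) / 2 := by linarith
  have hyB : ε * n / 2 ≤ (B.card : ℝ) / 2 := by linarith
  have hABpos : (0:ℝ) < (A.card : ℝ) * B.card := mul_pos hApos hBpos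
  have hden : (G.edgeDensity A B : ℝ)
      = ((Rel.interedges G.Adj A B).card : ℝ) / ((A.card : ℝ) * B.card) := by
    rw [SimpleGraph.edgeDensity, Rel.edgeDensity]
    push_cast
    ring
  rcases hdich with hsp | hde
  · -- sparse case
    have hsum : (∑ a ∈ A, ((B.filter (G.Adj a)).card : ℝ)) ≤ c * A.card * B.card := by
      have hcard : ((Rel.interedges G.Adj A B).card : ℝ) ≤ c * (A.card * B.card) := by
        rw [hden] at hsp
        calc ((Rel.interedges G.Adj A B).card : ℝ)
            = ((Rel.interedges G.Adj A B).card : ℝ) / ((A.card : ℝ) * B.card)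
              * ((A.card : ℝ) * B.card) := by field_simp
          _ ≤ c * ((A.card : ℝ) * B.card) := by
              apply mul_le_mul_of_nonneg_right hsp hABpos.le
      have heq : (∑ a ∈ A, ((B.filter (G.Adj a)).card : ℝ))
          = ((Rel.interedges G.Adj A B).card : ℝ) := by
        rw [card_interedges_eq_sum]
        push_cast
        rfl
      rw [heq]
      linarith [hcard]
    have := main_core I hI G hGI G.Adj
      (Or.inl fun a b h hadj => h hadj) A B hAB hBpos c _ _ hc0 hsum hxA hyB hphismall
    rw [hGphi] at this
    exact this
  · -- dense case
    have hcompl := Rel.card_interedges_add_card_interedges_compl G.Adj A B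
    have hsum : (∑ a ∈ A, ((B.filter (fun b => ¬ G.Adj a b)).card : ℝ))
        ≤ c * A.card * B.card := by
      have hcard : (1 - c) * ((A.card : ℝ) * B.card)
          ≤ ((Rel.interedges G.Adj A B).card : ℝ) := by
        rw [hden] at hde
        calc (1 - c) * ((A.card : ℝ) * B.card)
            ≤ ((Rel.interedges G.Adj A B).card : ℝ) / ((A.card : ℝ) * B.card)
              * ((A.card : ℝ) * B.card) := by
              apply mul_le_mul_of_nonneg_right hde hABpos.le
          _ = ((Rel.interedges G.Adj A B).card : ℝ) := by field_simp
      have heq : (∑ a ∈ A, ((B.filter (fun b => ¬ G.Adj a b)).card : ℝ))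
          = ((Rel.interedges (fun a b => ¬ G.Adj a b) A B).card : ℝ) := by
        rw [card_interedges_eq_sum]
        push_cast
        rfl
      have hco : ((Rel.interedges G.Adj A B).card : ℝ)
          + ((Rel.interedges (fun a b => ¬ G.Adj a b) A B).card : ℝ)
          = (A.card : ℝ) * B.card := by exact_mod_cast hcompl
      rw [heq]
      nlinarith
    have hmain := main_core I hI G hGI (fun a b => ¬ G.Adj a b)
      (Or.inr fun a b h => not_not.mp h) A B hAB hBpos c (c ^ σ * n / 2) (ε * n / 2)
      hc0 (le_of_eq_of_le (Finset.sum_congr rfl fun a _ =>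
        congrArg Nat.cast (congrArg Finset.card (filter_inst_eq _ _ _ _))) hsum)
      hxA hyB hphismall
    rw [hGphi] at hmain
    exact hmain
end
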